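/- arXiv:2511.13416 — 5 statements merged into one kernel-verified Lean document; each statement's English description precedes it below -/
import Mathlib

section
/- Let (x_n)_{n≥1} be a sequence of positive real numbers satisfying MacMahon-type asymptotics with parameters c ∈ ℝ and C₀ ≥ 0. Then there exists a constant C < ∞, depending only on c and C₀, such that for every η > 0 and every function f : [0,∞) → ℝ that is integrable on [0,∞), differentiable, and whose derivative f′ is continuous and integrable on [0,∞), the series ∑_{n≥1} f(x_n/√η) converges absolutely and | (1/√η) ∑_{n≥1} f(x_n/√η) − (1/π) ∫_0^∞ f(u) du | ≤ C (∫_0^∞ |f′(u)| du) / √η. -/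
set_option maxRecDepth 8000


open MeasureTheory Real Set

/-- First-order Riemann-sum estimate for the atomic measure
`μ^(η) = (1/√η) ∑_{n≥1} δ_{x_n/√η}`, for a sequence satisfying MacMahon-type
asymptotics `|x_n − πn − c| ≤ C₀/n`. -/
theorem macmahon_riemann_sum_first_order (c C₀ : ℝ) (hC₀ : 0 ≤ C₀) :
    ∃ C : ℝ, 0 ≤ C ∧
      ∀ x : ℕ → ℝ,
        (∀ n : ℕ, 1 ≤ n → 0 < x n) →
        (∀ n : ℕ, 1 ≤ n → |x n - π * (n : ℝ) - c| ≤ C₀ / (n : ℝ)) →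
        ∀ η : ℝ, 0 < η →
          ∀ f : ℝ → ℝ,
            IntegrableOn f (Ici 0) →
            Differentiable ℝ f →
            ContinuousOn (deriv f) (Ici 0) →
            IntegrableOn (deriv f) (Ici 0) →
            Summable (fun n : ℕ => |f (x (n + 1) / Real.sqrt η)|) ∧
            |(1 / Real.sqrt η) * ∑' n : ℕ, f (x (n + 1) / Real.sqrt η)
                - (1 / π) * ∫ u in Ioi (0 : ℝ), f u|
              ≤ C * (∫ u in Ioi (0 : ℝ), |deriv f u|) / Real.sqrt η := by
  classical
  have hπ : (0:ℝ) < π := Real.pi_pos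
  set R : ℝ := |c| + C₀ with hRdef
  have hR0 : 0 ≤ R := add_nonneg (abs_nonneg c) hC₀
  set k : ℕ := ⌈1 + 2 * R / π⌉₊ with hkdef
  refine ⟨(k : ℝ) + 1, by positivity, ?_⟩
  intro x hxpos hx η hη f hf hdf hdc hdi
  set s : ℝ := Real.sqrt η with hsdef
  have hs : 0 < s := Real.sqrt_pos.mpr hη
  set p : ℕ → ℝ := fun n => π * n / s with hp
  set t : ℕ → ℝ := fun n => x (n+1) / s with ht
  set I : ℕ → Set ℝ := fun n => Ioc (p n) (p (n+1)) with hI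
  have hp_nonneg : ∀ n, 0 ≤ p n := by
    intro n; simp only [hp]; positivity
  have hpmono : ∀ {n m : ℕ}, n ≤ m → p n ≤ p m := by
    intro n m h
    have hc : (n:ℝ) ≤ (m:ℝ) := by exact_mod_cast h
    simp only [hp]
    gcongr
  -- bounds on t
  have ht_pos : ∀ n, 0 < t n := fun n => div_pos (hxpos (n+1) (by omega)) hs
  have ht_bounds : ∀ n : ℕ, (π * (n+1) - R)/s ≤ t n ∧ t n ≤ (π * (n+1) + R)/s := by
    intro n
    have hx' := hx (n+1) (by omega)
    have h1 : C₀ / ((n:ℝ)+1) ≤ C₀ := by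
      apply div_le_self hC₀; simp
    have h1' : (0:ℝ) < (n:ℝ)+1 := by positivity
    push_cast at hx'
    rw [abs_le] at hx'
    have hc1 : c ≤ |c| := le_abs_self c
    have hc2 : -|c| ≤ c := neg_abs_le c
    have hC0div : 0 ≤ C₀ / ((n:ℝ)+1) := by positivity
    constructor
    · exact div_le_div_of_nonneg_right (by nlinarith [hx'.1]) hs.le
    · exact div_le_div_of_nonneg_right (by nlinarith [hx'.2]) hs.le
  -- the enlarged intervals J n
  set J : ℕ → Set ℝ := fun n => Icc (min (p n) (t n)) (max (p (n+1)) (t n)) with hJ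
  have hJ_lb : ∀ n : ℕ, ∀ u ∈ J n, (π * n - R)/s ≤ u ∧ u ≤ (π * (n+1) + R)/s := by
    intro n u hu
    obtain ⟨hu1, hu2⟩ := hu
    constructor
    · refine le_trans (le_min ?_ ?_) hu1
      · simp only [hp]; gcongr; linarith
      · refine le_trans ?_ (ht_bounds n).1
        gcongr
        nlinarith
    · refine le_trans hu2 (max_le ?_ ?_)
      · simp only [hp]; gcongr; push_cast; linarith
      · exact (ht_bounds n).2
  have hJ_Ici : ∀ n, J n ⊆ Ici (0:ℝ) := by
    intro n u hu
    have h1 : min (p n) (t n) ≤ u := hu.1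
    have : (0:ℝ) ≤ min (p n) (t n) := le_min (hp_nonneg n) (ht_pos n).le
    exact le_trans this h1
  have hI_Ici : ∀ n, I n ⊆ Ici (0:ℝ) := by
    intro n u hu
    exact le_trans (hp_nonneg n) hu.1.le
  -- the derivative-size function
  set g : ℝ → ℝ := fun u => |deriv f u| with hg
  have hgInt : IntegrableOn g (Ici (0:ℝ)) := hdi.abs
  have hgJ : ∀ n, IntegrableOn g (J n) := fun n => hgInt.mono_set (hJ_Ici n)
  set D : ℕ → ℝ := fun n => ∫ u in J n, g u with hD
  have hD0 : ∀ n, 0 ≤ D n := by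
    intro n
    exact setIntegral_nonneg measurableSet_Icc (fun u _ => abs_nonneg _)
  -- key pointwise estimate via FTC
  have key : ∀ n : ℕ, ∀ u ∈ I n, |f (t n) - f u| ≤ D n := by
    intro n u hu
    have hu1 : p n < u := hu.1
    have hu2 : u ≤ p (n+1) := hu.2
    have hlo : min (p n) (t n) ≤ u ⊓ t n :=
      le_min ((min_le_left _ _).trans hu1.le) (min_le_right _ _)
    have hhi : u ⊔ t n ≤ max (p (n+1)) (t n) :=
      sup_le (le_max_of_le_left hu2) (le_max_right _ _)
    have huIcc : Set.uIcc u (t n) ⊆ J n := by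
      rw [Set.uIcc]
      exact Set.Icc_subset_Icc hlo hhi
    have hsub0 : Set.uIcc u (t n) ⊆ Ici (0:ℝ) := huIcc.trans (hJ_Ici n)
    have hint : IntervalIntegrable (deriv f) volume u (t n) :=
      (hdc.mono hsub0).intervalIntegrable
    have hftc : ∫ y in u..(t n), deriv f y = f (t n) - f u :=
      intervalIntegral.integral_deriv_eq_sub (fun y _ => hdf.differentiableAt) hint
    rw [← hftc]
    have huIoc : Set.uIoc u (t n) ⊆ J n := by
      refine le_trans ?_ huIcc
      rw [Set.uIoc, Set.uIcc]
      exact Set.Ioc_subset_Icc_self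
    calc |∫ y in u..(t n), deriv f y| ≤ ∫ y in Set.uIoc u (t n), ‖deriv f y‖ := by
          simpa [Real.norm_eq_abs] using
            (intervalIntegral.norm_integral_le_integral_norm_uIoc
              (a := u) (b := t n) (f := deriv f) (μ := volume))
      _ ≤ D n := by
          simp only [Real.norm_eq_abs]
          refine setIntegral_mono_set (hgJ n) ?_ ?_
          · exact Filter.Eventually.of_forall (fun u => abs_nonneg _)
          · exact HasSubset.Subset.eventuallyLE huIoc
  -- interval volume
  have hIvol : ∀ n : ℕ, (volume (I n)).toReal = π / s := by
    intro n
    have hlen : p (n+1) - p n = π / s := by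
      simp only [hp]; push_cast; field_simp; ring
    simp only [hI]
    rw [Real.volume_Ioc, ENNReal.toReal_ofReal (by rw [hlen]; positivity), hlen]
  have hIfin : ∀ n : ℕ, volume (I n) < ⊤ := by
    intro n; simp only [hI]; rw [Real.volume_Ioc]; exact ENNReal.ofReal_lt_top
  have hIf : ∀ n, IntegrableOn f (I n) := fun n => hf.mono_set (hI_Ici n)
  -- termwise estimate
  have hdn : ∀ n : ℕ, |f (t n) - (s/π) * ∫ u in I n, f u| ≤ D n := by
    intro n
    have hconst : IntegrableOn (fun _ : ℝ => f (t n)) (I n) :=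
      integrableOn_const (hIfin n).ne
    have h1 : ∫ u in I n, (f (t n) - f u) = (π/s) * f (t n) - ∫ u in I n, f u := by
      rw [integral_sub hconst (hIf n), setIntegral_const, measureReal_def, hIvol n, smul_eq_mul]
    have h2 : |∫ u in I n, (f (t n) - f u)| ≤ D n * (π / s) := by
      have := norm_setIntegral_le_of_norm_le_const (C := D n) (f := fun u => f (t n) - f u) (hIfin n)
        (fun u hu => by rw [Real.norm_eq_abs]; exact key n u hu)
      rw [Real.norm_eq_abs, measureReal_def, hIvol n] at this
      exact this
    have heq : f (t n) - (s/π) * ∫ u in I n, f u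
        = (s/π) * ∫ u in I n, (f (t n) - f u) := by
      rw [h1]; field_simp; try ring
    rw [heq, abs_mul, abs_of_pos (div_pos hs hπ)]
    calc s/π * |∫ u in I n, (f (t n) - f u)| ≤ s/π * (D n * (π/s)) := by
          exact mul_le_mul_of_nonneg_left h2 (by positivity)
      _ = D n := by field_simp; try ring
  -- bounded overlap: partial sums of D are controlled
  set g0 : ℝ → ℝ := (Ici (0:ℝ)).indicator g with hg0
  have hg0int : Integrable g0 := (integrable_indicator_iff measurableSet_Ici).2 hgInt
  have hg0nn : ∀ u, 0 ≤ g0 u := fun u => by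
    simp only [hg0]
    exact Set.indicator_nonneg (fun v _ => abs_nonneg _) u
  have hDind : ∀ n, D n = ∫ u, (J n).indicator g0 u := by
    intro n
    rw [MeasureTheory.integral_indicator measurableSet_Icc]
    refine setIntegral_congr_fun measurableSet_Icc ?_
    intro u hu
    simp only [hg0]
    rw [Set.indicator_of_mem (hJ_Ici n hu)]
  have hcount : ∀ (u : ℝ) (N : ℕ),
      ((Finset.range N).filter (fun n => u ∈ J n)).card ≤ k + 1 := by
    intro u N
    set S := (Finset.range N).filter (fun n => u ∈ J n) with hS
    rcases S.eq_empty_or_nonempty with hemp | hne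
    · rw [hemp]; simp
    · set n₀ := S.min' hne with hn₀
      have h₀ : u ∈ J n₀ := (Finset.mem_filter.mp (S.min'_mem hne)).2
      have hsubS : S ⊆ Finset.Icc n₀ (n₀ + k) := by
        intro m hm
        have hmu : u ∈ J m := (Finset.mem_filter.mp hm).2
        have h1 : (π * m - R)/s ≤ u := (hJ_lb m u hmu).1
        have h2 : u ≤ (π * (n₀+1) + R)/s := (hJ_lb n₀ u h₀).2
        have h3 : (π * m - R)/s ≤ (π * ((n₀:ℝ)+1) + R)/s := le_trans h1 h2
        have h4 : π * m - R ≤ π * ((n₀:ℝ)+1) + R := by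
          have := mul_le_mul_of_nonneg_right h3 hs.le
          rwa [div_mul_cancel₀ _ hs.ne', div_mul_cancel₀ _ hs.ne'] at this
        have h2R : π * (2 * R / π) = 2 * R := by field_simp
        have h5 : (m:ℝ) ≤ (n₀:ℝ) + (1 + 2 * R / π) := by nlinarith
        have hk' : 1 + 2 * R / π ≤ (k:ℝ) := Nat.le_ceil _
        have h6 : (m:ℝ) ≤ (n₀:ℝ) + (k:ℝ) := by linarith
        have h7 : m ≤ n₀ + k := by
          have h8 : (m:ℝ) ≤ ((n₀ + k : ℕ) : ℝ) := by push_cast; linarith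
          exact_mod_cast h8
        exact Finset.mem_Icc.2 ⟨S.min'_le m hm, h7⟩
      calc S.card ≤ (Finset.Icc n₀ (n₀ + k)).card := Finset.card_le_card hsubS
        _ = k + 1 := by rw [Nat.card_Icc]; omega
  have hpsum : ∀ N : ℕ, ∑ n ∈ Finset.range N, D n
      ≤ ((k:ℝ)+1) * ∫ u in Ici (0:ℝ), g u := by
    intro N
    have hind_int : ∀ i ∈ Finset.range N, Integrable ((J i).indicator g0) :=
      fun i _ => hg0int.indicator measurableSet_Icc
    have h1 : ∑ n ∈ Finset.range N, D n
        = ∫ u, ∑ n ∈ Finset.range N, (J n).indicator g0 u := by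
      rw [MeasureTheory.integral_finset_sum _ hind_int]
      exact Finset.sum_congr rfl (fun n _ => hDind n)
    rw [h1]
    have h2 : ∀ u, ∑ n ∈ Finset.range N, (J n).indicator g0 u ≤ ((k:ℝ)+1) * g0 u := by
      intro u
      have hcard := hcount u N
      calc ∑ n ∈ Finset.range N, (J n).indicator g0 u
          = ∑ n ∈ (Finset.range N).filter (fun n => u ∈ J n), g0 u := by
            rw [Finset.sum_filter]
            refine Finset.sum_congr rfl (fun i _ => ?_)
            by_cases h : u ∈ J i <;> simp [Set.indicator, h]
        _ = ((Finset.range N).filter (fun n => u ∈ J n)).card • g0 u :=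
            Finset.sum_const _
        _ ≤ ((k:ℝ)+1) * g0 u := by
            rw [nsmul_eq_mul]
            refine mul_le_mul_of_nonneg_right ?_ (hg0nn u)
            exact_mod_cast hcard
    calc ∫ u, ∑ n ∈ Finset.range N, (J n).indicator g0 u
        ≤ ∫ u, ((k:ℝ)+1) * g0 u := by
          refine integral_mono (integrable_finset_sum _ hind_int)
            (hg0int.const_mul _) h2
      _ = ((k:ℝ)+1) * ∫ u, g0 u := by rw [MeasureTheory.integral_const_mul]
      _ = ((k:ℝ)+1) * ∫ u in Ici (0:ℝ), g u := by
          rw [hg0, MeasureTheory.integral_indicator measurableSet_Ici]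
  have hDsummable : Summable D := summable_of_sum_range_le hD0 hpsum
  have htsumD : ∑' n, D n ≤ ((k:ℝ)+1) * ∫ u in Ici (0:ℝ), g u :=
    Real.tsum_le_of_sum_range_le hD0 hpsum
  -- the union of the intervals I n is Ioi 0
  have hUnion : (⋃ n, I n) = Ioi (0:ℝ) := by
    ext u
    simp only [mem_iUnion, mem_Ioi, hI, mem_Ioc]
    constructor
    · rintro ⟨n, h1, _⟩
      exact lt_of_le_of_lt (hp_nonneg n) h1
    · intro hu
      set v : ℝ := u * s / π with hv
      have hv0 : 0 < v := by positivity
      have hc1 : 0 < ⌈v⌉₊ := Nat.ceil_pos.mpr hv0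
      refine ⟨⌈v⌉₊ - 1, ?_, ?_⟩
      · have hcast : ((⌈v⌉₊ - 1 : ℕ) : ℝ) = (⌈v⌉₊ : ℝ) - 1 := by
          rw [Nat.cast_sub hc1, Nat.cast_one]
        have hlt : ((⌈v⌉₊ - 1 : ℕ) : ℝ) < v := by
          rw [hcast]
          have := Nat.ceil_lt_add_one hv0.le
          linarith
        have hueq : π * v / s = u := by rw [hv]; field_simp
        calc p (⌈v⌉₊ - 1) = π * ((⌈v⌉₊ - 1 : ℕ) : ℝ) / s := rfl
          _ < π * v / s := by gcongr
          _ = u := hueq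
      · have hn1 : (⌈v⌉₊ - 1) + 1 = ⌈v⌉₊ := by omega
        have hle : v ≤ ((⌈v⌉₊ - 1) + 1 : ℕ) := by rw [hn1]; exact Nat.le_ceil v
        have hueq : π * v / s = u := by rw [hv]; field_simp
        calc u = π * v / s := hueq.symm
          _ ≤ π * (((⌈v⌉₊ - 1) + 1 : ℕ) : ℝ) / s := by gcongr
          _ = p ((⌈v⌉₊ - 1) + 1) := rfl
  have hdisj : Pairwise (Function.onFun Disjoint I) := by
    rw [pairwise_disjoint_on]
    intro m n h
    simp only [hI]
    refine Set.Ioc_disjoint_Ioc.2 ?_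
    exact le_trans (min_le_left _ _) (le_trans (hpmono (Nat.succ_le_of_lt h)) (le_max_right _ _))
  have hIoi_int : IntegrableOn f (Ioi (0:ℝ)) := hf.mono_set Ioi_subset_Ici_self
  have hHasSum : HasSum (fun n => ∫ u in I n, f u) (∫ u in Ioi (0:ℝ), f u) := by
    have h := hasSum_integral_iUnion (μ := volume) (f := f)
      (fun n : ℕ => measurableSet_Ioc) hdisj (by rw [hUnion]; exact hIoi_int)
    rwa [hUnion] at h
  have hHasSumAbs : HasSum (fun n => ∫ u in I n, |f u|) (∫ u in Ioi (0:ℝ), |f u|) := by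
    have h := hasSum_integral_iUnion (μ := volume) (f := fun u => |f u|)
      (fun n : ℕ => measurableSet_Ioc) hdisj (by rw [hUnion]; exact hIoi_int.abs)
    rwa [hUnion] at h
  -- summability of |f (t n)|
  have hs_pi : (0:ℝ) < s / π := div_pos hs hπ
  have habs2 : ∀ n, |(s/π) * ∫ u in I n, f u| ≤ (s/π) * ∫ u in I n, |f u| := by
    intro n
    rw [abs_mul, abs_of_pos hs_pi]
    refine mul_le_mul_of_nonneg_left ?_ hs_pi.le
    simpa [Real.norm_eq_abs] using
      MeasureTheory.norm_integral_le_integral_norm (μ := volume.restrict (I n)) f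
  have habs : ∀ n, |f (t n)| ≤ D n + (s/π) * ∫ u in I n, |f u| := by
    intro n
    have h1 : f (t n) = (f (t n) - (s/π) * ∫ u in I n, f u) + (s/π) * ∫ u in I n, f u := by
      ring
    calc |f (t n)| ≤ |f (t n) - (s/π) * ∫ u in I n, f u| + |(s/π) * ∫ u in I n, f u| := by
          conv_lhs => rw [h1]
          exact abs_add_le _ _
      _ ≤ D n + (s/π) * ∫ u in I n, |f u| := add_le_add (hdn n) (habs2 n)
  have hsum_absI : Summable (fun n => ∫ u in I n, |f u|) := hHasSumAbs.summable
  have hS1 : Summable (fun n => |f (t n)|) :=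
    Summable.of_nonneg_of_le (fun n => abs_nonneg _) habs
      (hDsummable.add (hsum_absI.mul_left (s/π)))
  have hS1' : Summable (fun n : ℕ => |f (x (n + 1) / s)|) := by
    simpa only [ht] using hS1
  refine ⟨hS1', ?_⟩
  -- the main estimate
  have hSf : Summable (fun n => f (t n)) := hS1.of_abs
  have hSI : Summable (fun n => ∫ u in I n, f u) := hHasSum.summable
  have hSd : Summable (fun n => f (t n) - (s/π) * ∫ u in I n, f u) :=
    hSf.sub (hSI.mul_left (s/π))
  have htsum_eq : ∑' n, (f (t n) - (s/π) * ∫ u in I n, f u)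
      = (∑' n, f (t n)) - (s/π) * ∫ u in Ioi (0:ℝ), f u := by
    rw [Summable.tsum_sub hSf (hSI.mul_left (s/π)), tsum_mul_left, hHasSum.tsum_eq]
  have hre : (1/s) * (∑' n, f (t n)) - (1/π) * ∫ u in Ioi (0:ℝ), f u
      = (1/s) * ∑' n, (f (t n) - (s/π) * ∫ u in I n, f u) := by
    rw [htsum_eq]
    field_simp
    try ring
  have hdabs : Summable (fun n => |f (t n) - (s/π) * ∫ u in I n, f u|) :=
    Summable.of_nonneg_of_le (fun n => abs_nonneg _) hdn hDsummable
  have habs_tsum : |∑' n, (f (t n) - (s/π) * ∫ u in I n, f u)| ≤ ∑' n, D n := by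
    calc |∑' n, (f (t n) - (s/π) * ∫ u in I n, f u)|
        ≤ ∑' n, |f (t n) - (s/π) * ∫ u in I n, f u| := by
          simpa [Real.norm_eq_abs] using
            norm_tsum_le_tsum_norm (f := fun n => f (t n) - (s/π) * ∫ u in I n, f u)
              (by simpa [Real.norm_eq_abs] using hdabs)
      _ ≤ ∑' n, D n := Summable.tsum_le_tsum hdn hdabs hDsummable
  have hgoal : ∑' n : ℕ, f (x (n + 1) / s) = ∑' n, f (t n) := by
    simp only [ht]
  rw [hgoal, hre, abs_mul, abs_of_pos (by positivity : (0:ℝ) < 1/s)]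
  have hfinal : |∑' n, (f (t n) - (s/π) * ∫ u in I n, f u)|
      ≤ ((k:ℝ)+1) * ∫ u in Ioi (0:ℝ), |deriv f u| := by
    refine habs_tsum.trans (htsumD.trans_eq ?_)
    rw [MeasureTheory.integral_Ici_eq_integral_Ioi]
  calc (1/s) * |∑' n, (f (t n) - (s/π) * ∫ u in I n, f u)|
      ≤ (1/s) * (((k:ℝ)+1) * ∫ u in Ioi (0:ℝ), |deriv f u|) :=
        mul_le_mul_of_nonneg_left hfinal (by positivity)
    _ = ((k:ℝ)+1) * (∫ u in Ioi (0:ℝ), |deriv f u|) / s := by ring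
end

section
/- Let (x_n)_{n≥1} be a sequence of positive real numbers satisfying MacMahon-type asymptotics with parameters c ∈ ℝ and C₀ ≥ 0. Then there exists a constant C < ∞, depending only on c and C₀, such that for every η ≥ 1 and every twice differentiable function f : [0,∞) → ℝ with f(0) = 0, with f, f′ and f″ continuous and integrable on [0,∞), and with ∫_0^∞ |f′(u)|/u du < ∞, one has | (1/√η) ∑_{n≥1} f(x_n/√η) − (1/π) ∫_0^∞ f(u) du | ≤ C ( ∫_0^∞ |f″(u)| du + ∫_0^∞ |f′(u)|/u du ) / η. -/
open MeasureTheory Real Set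


lemma aux_abs_le (f : ℝ → ℝ) (hd : Differentiable ℝ f)
    (hd' : Differentiable ℝ (deriv f)) (h0 : f 0 = 0)
    (hint : IntegrableOn (fun u : ℝ => |deriv f u| / u) (Ioi 0))
    (b : ℝ) (hb : 0 ≤ b) :
    |f b| ≤ b * ∫ u in Ioi (0:ℝ), |deriv f u| / u := by
  have hc' : Continuous (deriv f) := hd'.continuous
  have hfb : f b = ∫ u in (0:ℝ)..b, deriv f u := by
    rw [intervalIntegral.integral_deriv_eq_sub (fun x _ => hd x)
      (hc'.intervalIntegrable _ _), h0, sub_zero]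
  have h1 : |f b| ≤ ∫ u in (0:ℝ)..b, |deriv f u| := by
    rw [hfb]
    exact intervalIntegral.abs_integral_le_integral_abs hb
  have h2 : (∫ u in (0:ℝ)..b, |deriv f u|) = ∫ u in Ioc (0:ℝ) b, |deriv f u| :=
    intervalIntegral.integral_of_le hb
  have hg_int : IntegrableOn (fun u : ℝ => |deriv f u| / u) (Ioc 0 b) :=
    hint.mono_set Ioc_subset_Ioi_self
  have h3 : (∫ u in Ioc (0:ℝ) b, |deriv f u|) ≤ ∫ u in Ioc (0:ℝ) b, (|deriv f u| / u) * b := by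
    apply setIntegral_mono_on (hc'.abs.integrableOn_Ioc) (hg_int.mul_const b) measurableSet_Ioc
    intro u hu
    have hu0 : 0 < u := hu.1
    have : |deriv f u| = (|deriv f u| / u) * u := by field_simp
    nth_rewrite 1 [this]
    exact mul_le_mul_of_nonneg_left hu.2 (div_nonneg (abs_nonneg _) hu0.le)
  have h4 : (∫ u in Ioc (0:ℝ) b, (|deriv f u| / u) * b)
      = (∫ u in Ioc (0:ℝ) b, |deriv f u| / u) * b := integral_mul_const _ _
  have h5 : (∫ u in Ioc (0:ℝ) b, |deriv f u| / u) ≤ ∫ u in Ioi (0:ℝ), |deriv f u| / u := by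
    apply setIntegral_mono_set hint
    · filter_upwards [ae_restrict_mem measurableSet_Ioi] with u hu using div_nonneg (abs_nonneg _) (le_of_lt hu)
    · exact HasSubset.Subset.eventuallyLE Ioc_subset_Ioi_self
  calc |f b| ≤ ∫ u in Ioc (0:ℝ) b, |deriv f u| := by rw [← h2]; exact h1
    _ ≤ (∫ u in Ioc (0:ℝ) b, |deriv f u| / u) * b := by rw [← h4]; exact h3
    _ ≤ (∫ u in Ioi (0:ℝ), |deriv f u| / u) * b := mul_le_mul_of_nonneg_right h5 hb
    _ = b * _ := mul_comm _ _

lemma aux_tail_int (f : ℝ → ℝ) (hd : Differentiable ℝ f)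
    (hd' : Differentiable ℝ (deriv f)) (h0 : f 0 = 0)
    (hint : IntegrableOn (fun u : ℝ => |deriv f u| / u) (Ioi 0))
    (b : ℝ) (hb : 0 ≤ b) :
    (∫ u in Ioc (0:ℝ) b, |f u|) ≤ (b^2/2) * ∫ u in Ioi (0:ℝ), |deriv f u| / u := by
  set M := ∫ u in Ioi (0:ℝ), |deriv f u| / u with hM
  have hM0 : 0 ≤ M := setIntegral_nonneg measurableSet_Ioi
    (fun u hu => div_nonneg (abs_nonneg _) (le_of_lt hu))
  have h1 : (∫ u in Ioc (0:ℝ) b, |f u|) ≤ ∫ u in Ioc (0:ℝ) b, u * M := by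
    apply setIntegral_mono_on (hd.continuous.abs.integrableOn_Ioc)
      ((continuous_id.mul continuous_const).integrableOn_Ioc) measurableSet_Ioc
    intro u hu
    exact aux_abs_le f hd hd' h0 hint u hu.1.le
  have h2 : (∫ u in Ioc (0:ℝ) b, u * M) = (b^2/2) * M := by
    rw [← intervalIntegral.integral_of_le hb, intervalIntegral.integral_mul_const,
      integral_id]
    ring
  linarith

lemma aux_midpoint (f : ℝ → ℝ) (hd : Differentiable ℝ f) (hd' : Differentiable ℝ (deriv f))
    (hint'' : IntegrableOn (deriv (deriv f)) (Ici 0))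
    (m r : ℝ) (hr : 0 ≤ r) (hmr : 0 ≤ m - r) :
    |(∫ u in (m-r)..(m+r), f u) - 2*r*(f m)| ≤ r^2 * ∫ u in (m-r)..(m+r), |deriv (deriv f) u| := by
  have hc : Continuous f := hd.continuous
  have hc' : Continuous (deriv f) := hd'.continuous
  have hII : ∀ p q : ℝ, p ∈ Icc (m-r) (m+r) → q ∈ Icc (m-r) (m+r) →
      IntervalIntegrable (deriv (deriv f)) volume p q := by
    intro p q hp hq
    rw [intervalIntegrable_iff]
    apply hint''.mono_set
    intro t ht
    rw [Set.mem_uIoc] at ht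
    rcases ht with ⟨h1,_⟩|⟨h1,_⟩
    · exact le_of_lt (lt_of_le_of_lt (le_trans hmr hp.1) h1)
    · exact le_of_lt (lt_of_le_of_lt (le_trans hmr hq.1) h1)
  have hrr : m - r ≤ m + r := by linarith
  set A := ∫ u in (m-r)..(m+r), |deriv (deriv f) u| with hA
  have hA0 : 0 ≤ A := intervalIntegral.integral_nonneg hrr (fun u _ => abs_nonneg _)
  -- step 1 : difference of deriv f bounded by A
  have step1 : ∀ t ∈ Icc (0:ℝ) r, ∀ u ∈ Set.uIoc m (m+t),
      |deriv f u - deriv f (u - t)| ≤ A := by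
    intro t ht u hu
    have ht0 : 0 ≤ t := ht.1
    rw [Set.uIoc_of_le (by linarith : m ≤ m + t)] at hu
    have hu1 : m - r ≤ u - t := by
      have := hu.1; have := ht.2; linarith
    have hu2 : u ≤ m + r := le_trans hu.2 (by linarith [ht.2])
    have hu3 : u - t ≤ u := by linarith
    have hmem1 : (u - t) ∈ Icc (m-r) (m+r) := ⟨hu1, by linarith⟩
    have hmem2 : u ∈ Icc (m-r) (m+r) := ⟨by linarith [hu.1], hu2⟩
    have key : deriv f u - deriv f (u - t) = ∫ w in (u-t)..u, deriv (deriv f) w :=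
      (intervalIntegral.integral_deriv_eq_sub (fun x _ => hd' x) (hII _ _ hmem1 hmem2)).symm
    rw [key]
    calc |∫ w in (u-t)..u, deriv (deriv f) w| ≤ ∫ w in (u-t)..u, |deriv (deriv f) w| :=
          intervalIntegral.abs_integral_le_integral_abs hu3
      _ ≤ A := by
          apply intervalIntegral.integral_mono_interval hu1 hu3 hu2
          · filter_upwards with w using abs_nonneg _
          · exact (hII _ _ (left_mem_Icc.2 hrr) (right_mem_Icc.2 hrr)).abs
  -- the function F
  set F : ℝ → ℝ := fun w => ∫ u in m..w, f u with hF_def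
  have hF : ∀ w : ℝ, HasDerivAt F (f w) w := fun w =>
    intervalIntegral.integral_hasDerivAt_right (hc.intervalIntegrable _ _)
      (hc.stronglyMeasurableAtFilter _ _) hc.continuousAt
  set g : ℝ → ℝ := fun t => F (m+t) - F (m-t) - 2*t*(f m) with hg_def
  have hg : ∀ t ∈ Icc (0:ℝ) r,
      HasDerivWithinAt g (f (m+t) + f (m-t) - 2*(f m)) (Icc 0 r) t := by
    intro t _
    have h1 : HasDerivAt (fun t : ℝ => F (m+t)) (f (m+t)) t := by
      simpa [Function.comp_def] using (hF (m+t)).comp t ((hasDerivAt_id t).const_add m)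
    have h2 : HasDerivAt (fun t : ℝ => F (m-t)) (-(f (m-t))) t := by
      simpa [Function.comp_def] using (hF (m-t)).comp t ((hasDerivAt_id t).const_sub m)
    have h3 : HasDerivAt (fun t : ℝ => 2*t*(f m)) (2*(f m)) t := by
      simpa using ((hasDerivAt_id t).const_mul 2).mul_const (f m)
    have := (h1.sub h2).sub h3
    have heq : f (m+t) - -(f (m-t)) - 2*(f m) = f (m+t) + f (m-t) - 2*(f m) := by ring
    rw [heq] at this
    exact this.hasDerivWithinAt
  -- step 4 : bound on the derivative of g
  have step4 : ∀ t ∈ Icc (0:ℝ) r, ‖f (m+t) + f (m-t) - 2*(f m)‖ ≤ r * A := by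
    intro t ht
    have ht0 : 0 ≤ t := ht.1
    have e1 : f (m+t) - f m = ∫ u in m..(m+t), deriv f u :=
      (intervalIntegral.integral_deriv_eq_sub (fun x _ => hd x)
        (hc'.intervalIntegrable _ _)).symm
    have e2 : f m - f (m-t) = ∫ u in (m-t)..m, deriv f u :=
      (intervalIntegral.integral_deriv_eq_sub (fun x _ => hd x)
        (hc'.intervalIntegrable _ _)).symm
    have e3 : (∫ u in m..(m+t), deriv f (u - t)) = ∫ u in (m-t)..m, deriv f u := by
      have := intervalIntegral.integral_comp_sub_right (fun u => deriv f u) t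
        (a := m) (b := m + t)
      simpa using this
    have hIB : IntervalIntegrable (fun u : ℝ => deriv f (u - t)) volume m (m+t) :=
      (hc'.comp (continuous_id.sub continuous_const)).intervalIntegrable _ _
    have e4 : f (m+t) + f (m-t) - 2*(f m)
        = ∫ u in m..(m+t), (deriv f u - deriv f (u - t)) := by
      rw [intervalIntegral.integral_sub (hc'.intervalIntegrable _ _) hIB, ← e1, e3, ← e2]
      ring
    rw [Real.norm_eq_abs, e4]
    have hb := intervalIntegral.norm_integral_le_of_norm_le_const
      (C := A) (f := fun u => deriv f u - deriv f (u - t)) (a := m) (b := m + t)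
      (fun u hu => step1 t ht u hu)
    rw [Real.norm_eq_abs] at hb
    calc |∫ u in m..(m+t), (deriv f u - deriv f (u - t))| ≤ A * |m + t - m| := hb
      _ = A * t := by rw [show m + t - m = t by ring, abs_of_nonneg ht0]
      _ ≤ r * A := by nlinarith [ht.2]
  have main := (convex_Icc (0:ℝ) r).norm_image_sub_le_of_norm_hasDerivWithin_le
    hg step4 (left_mem_Icc.2 hr) (right_mem_Icc.2 hr)
  have hg0 : g 0 = 0 := by simp [hg_def, hF_def]
  have hgr : g r = (∫ u in (m-r)..(m+r), f u) - 2*r*(f m) := by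
    have hadd : (∫ u in (m-r)..m, f u) + ∫ u in m..(m+r), f u
        = ∫ u in (m-r)..(m+r), f u :=
      intervalIntegral.integral_add_adjacent_intervals (hc.intervalIntegrable _ _)
        (hc.intervalIntegrable _ _)
    have hsymm : F (m-r) = - ∫ u in (m-r)..m, f u := intervalIntegral.integral_symm _ _
    simp only [hg_def, hF_def] at *
    linarith [hadd]
  rw [hg0, sub_zero, hgr] at main
  simp only [Real.norm_eq_abs, sub_zero, abs_of_nonneg hr] at main
  calc |(∫ u in (m-r)..(m+r), f u) - 2*r*(f m)| ≤ r * A * r := main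
    _ = r^2 * A := by ring

lemma aux_lip (f : ℝ → ℝ) (hd : Differentiable ℝ f) (hd' : Differentiable ℝ (deriv f))
    (hint'' : IntegrableOn (deriv (deriv f)) (Ici 0))
    (p q : ℝ) (hpq : p < q) (hp0 : 0 ≤ p) (y z : ℝ)
    (hy : y ∈ Icc p q) (hz : z ∈ Icc p q) :
    |f y - f z| ≤ |y - z| *
      ((1/(q-p)) * (∫ u in p..q, |deriv f u|) + ∫ u in p..q, |deriv (deriv f) u|) := by
  have hc' : Continuous (deriv f) := hd'.continuous
  have hII : ∀ u v : ℝ, u ∈ Icc p q → v ∈ Icc p q →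
      IntervalIntegrable (deriv (deriv f)) volume u v := by
    intro u v hu hv
    rw [intervalIntegrable_iff]
    apply hint''.mono_set
    intro t ht
    rw [Set.mem_uIoc] at ht
    rcases ht with ⟨h1,_⟩|⟨h1,_⟩
    · exact le_of_lt (lt_of_le_of_lt (le_trans hp0 hu.1) h1)
    · exact le_of_lt (lt_of_le_of_lt (le_trans hp0 hv.1) h1)
  set B := ∫ u in p..q, |deriv (deriv f) u| with hB
  set D := ∫ u in p..q, |deriv f u| with hD
  have hB0 : 0 ≤ B := intervalIntegral.integral_nonneg hpq.le (fun u _ => abs_nonneg _)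
  have claim1 : ∀ u ∈ Icc p q, ∀ v ∈ Icc p q, |deriv f u| ≤ |deriv f v| + B := by
    intro u hu v hv
    have key : deriv f u - deriv f v = ∫ w in v..u, deriv (deriv f) w :=
      (intervalIntegral.integral_deriv_eq_sub (fun x _ => hd' x) (hII _ _ hv hu)).symm
    have h1 : |deriv f u - deriv f v| ≤ B := by
      rw [key]
      calc |∫ w in v..u, deriv (deriv f) w| ≤ |∫ w in v..u, (|deriv (deriv f) w|)| := by
            simpa [Real.norm_eq_abs] using
              intervalIntegral.norm_integral_le_abs_integral_norm
                (f := fun w => deriv (deriv f) w) (a := v) (b := u) (μ := volume)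
        _ ≤ |∫ w in p..q, (|deriv (deriv f) w|)| := by
            apply intervalIntegral.abs_integral_mono_interval
            · apply uIoc_subset_uIoc_of_uIcc_subset_uIcc
              rw [uIcc_of_le hpq.le]
              exact Set.uIcc_subset_Icc hv hu
            · filter_upwards with w using abs_nonneg _
            · exact (hII _ _ (left_mem_Icc.2 hpq.le) (right_mem_Icc.2 hpq.le)).abs
        _ = B := abs_of_nonneg hB0
    have := abs_sub_abs_le_abs_sub (deriv f u) (deriv f v)
    linarith
  have claim2 : ∀ u ∈ Icc p q, ‖deriv f u‖ ≤ (1/(q-p)) * D + B := by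
    intro u hu
    have hmono : (∫ _ in p..q, |deriv f u|) ≤ ∫ v in p..q, (|deriv f v| + B) := by
      apply intervalIntegral.integral_mono_on hpq.le intervalIntegrable_const
        ((hc'.abs.intervalIntegrable _ _).add intervalIntegrable_const)
      intro v hv
      exact claim1 u hu v hv
    rw [intervalIntegral.integral_const, intervalIntegral.integral_add
      (hc'.abs.intervalIntegrable _ _) intervalIntegrable_const,
      intervalIntegral.integral_const] at hmono
    have hq0 : 0 < q - p := by linarith
    rw [Real.norm_eq_abs]
    rw [smul_eq_mul, smul_eq_mul] at hmono
    rw [show (1/(q-p)) * D + B = (D + (q-p)*B)/(q-p) by field_simp]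
    rw [le_div_iff₀ hq0]
    nlinarith
  have main := (convex_Icc p q).norm_image_sub_le_of_norm_hasDerivWithin_le
    (fun u hu => (hd u).hasDerivAt.hasDerivWithinAt) claim2 hz hy
  rw [Real.norm_eq_abs, Real.norm_eq_abs] at main
  calc |f y - f z| ≤ ((1/(q-p)) * D + B) * |y - z| := main
    _ = |y - z| * ((1/(q-p)) * D + B) := mul_comm _ _

lemma aux_iUnion (T h : ℝ) (hh : 0 < h) :
    (⋃ n : ℕ, Ioc (T + n*h) (T + (n+1)*h)) = Ioi T := by
  ext t
  simp only [mem_iUnion, mem_Ioc, mem_Ioi]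
  constructor
  · rintro ⟨n, h1, h2⟩
    have : (0:ℝ) ≤ (n:ℝ)*h := by positivity
    linarith
  · intro ht
    set ρ := (t - T)/h with hρ
    have hρ0 : 0 < ρ := div_pos (by linarith) hh
    have htT : t - T = ρ * h := by rw [hρ, div_mul_cancel₀ _ hh.ne']
    have hc1 : 0 < ⌈ρ⌉₊ := Nat.ceil_pos.mpr hρ0
    refine ⟨⌈ρ⌉₊ - 1, ?_, ?_⟩
    · have hcast : ((⌈ρ⌉₊ - 1 : ℕ) : ℝ) = (⌈ρ⌉₊ : ℝ) - 1 := by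
        push_cast [Nat.cast_sub hc1]
        simp
      rw [hcast]
      have : (⌈ρ⌉₊ : ℝ) < ρ + 1 := Nat.ceil_lt_add_one hρ0.le
      nlinarith
    · have hcast : ((⌈ρ⌉₊ - 1 : ℕ) : ℝ) + 1 = (⌈ρ⌉₊ : ℝ) := by
        push_cast [Nat.cast_sub hc1]
        ring
      rw [hcast]
      have : ρ ≤ (⌈ρ⌉₊ : ℝ) := Nat.le_ceil ρ
      nlinarith
lemma aux_disj (T h : ℝ) (hh : 0 < h) :
    Pairwise (Function.onFun Disjoint (fun n : ℕ => Ioc (T + n*h) (T + (n+1)*h))) := by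
  have key : ∀ i j : ℕ, i < j → Disjoint (Ioc (T + i*h) (T + (i+1)*h)) (Ioc (T + j*h) (T + (j+1)*h)) := by
    intro i j hij
    apply Set.disjoint_left.mpr
    rintro t ⟨_, ht2⟩ ⟨ht3, _⟩
    have hij' : (i:ℝ) + 1 ≤ (j:ℝ) := by exact_mod_cast hij
    nlinarith
  intro i j hij
  rcases lt_or_gt_of_ne hij with h1 | h1
  · exact key i j h1
  · exact (key j i h1).symm

lemma aux_hasSum (g : ℝ → ℝ) (T h : ℝ) (hh : 0 < h) (hT : 0 ≤ T)
    (hg : IntegrableOn g (Ioi 0)) :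
    HasSum (fun n : ℕ => ∫ u in Ioc (T + n*h) (T + (n+1)*h), g u) (∫ u in Ioi T, g u) := by
  have hsub : Ioi T ⊆ Ioi (0:ℝ) := by
    intro t ht; exact lt_of_le_of_lt hT ht
  have hint : IntegrableOn g (⋃ n : ℕ, Ioc (T + n*h) (T + (n+1)*h)) := by
    rw [aux_iUnion T h hh]; exact hg.mono_set hsub
  have := hasSum_integral_iUnion (fun n : ℕ => measurableSet_Ioc) (aux_disj T h hh) hint
  rwa [aux_iUnion T h hh] at this

lemma aux_tsum_shift (A : ℕ → ℝ) (hA : ∀ n, 0 ≤ A n) (hS : Summable A) (k : ℕ) :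
    ∑' n, A (n + k) ≤ ∑' n, A n := by
  have := Summable.sum_add_tsum_nat_add k hS
  have h2 : 0 ≤ ∑ i ∈ Finset.range k, A i := Finset.sum_nonneg (fun i _ => hA i)
  linarith

lemma aux_tsum_three (A : ℕ → ℝ) (hA : ∀ n, 0 ≤ A n) (G G' : ℝ) (hG : HasSum A G)
    (hG' : G ≤ G') : ∑' n, (A n + A (n+1) + A (n+2)) ≤ 3 * G' := by
  have hS : Summable A := hG.summable
  have hS1 : Summable (fun n => A (n+1)) := (summable_nat_add_iff 1).mpr hS
  have hS2 : Summable (fun n => A (n+2)) := (summable_nat_add_iff 2).mpr hS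
  rw [Summable.tsum_add (hS.add hS1) hS2, Summable.tsum_add hS hS1]
  have e0 : ∑' n, A n = G := hG.tsum_eq
  have e1 := aux_tsum_shift A hA hS 1
  have e2 := aux_tsum_shift A hA hS 2
  linarith

lemma aux_mid_interval (f : ℝ → ℝ) (hdf : Differentiable ℝ f)
    (hdf' : Differentiable ℝ (deriv f)) (hif'' : IntegrableOn (deriv (deriv f)) (Ici 0))
    (h L zc : ℝ) (hh0 : 0 < h) (hL0 : 0 ≤ L)
    (e1 : zc - h/2 = L) (e2 : zc + h/2 = L + h) :
    |h * f zc - ∫ u in Ioc L (L+h), f u|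
      ≤ (h^2/4) * ∫ u in Ioc L (L+h), |deriv (deriv f) u| := by
  have hmr : 0 ≤ zc - h/2 := by rw [e1]; exact hL0
  have key := aux_midpoint f hdf hdf' hif'' zc (h/2) (by positivity) hmr
  have hle : L ≤ L + h := by linarith
  rw [e1, e2, intervalIntegral.integral_of_le hle, intervalIntegral.integral_of_le hle,
    show 2*(h/2) = h by ring] at key
  calc |h * f zc - ∫ u in Ioc L (L+h), f u|
      = |(∫ u in Ioc L (L+h), f u) - h * f zc| := abs_sub_comm _ _
    _ ≤ (h/2)^2 * ∫ u in Ioc L (L+h), |deriv (deriv f) u| := key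
    _ = (h^2/4) * ∫ u in Ioc L (L+h), |deriv (deriv f) u| := by ring

lemma aux_pert (f : ℝ → ℝ) (hdf : Differentiable ℝ f) (hdf' : Differentiable ℝ (deriv f))
    (hif'' : IntegrableOn (deriv (deriv f)) (Ici 0))
    (hifu : IntegrableOn (fun u : ℝ => |deriv f u| / u) (Ioi 0))
    (Γ h Mr L yv zv : ℝ) (hΓ : 0 ≤ Γ) (hh0 : 0 < h) (hMr1 : 1 ≤ Mr)
    (hL0 : 0 ≤ L)
    (hyz : |yv - zv| ≤ h * Γ / Mr) (hΓMr : Γ ≤ Mr)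
    (hPL : L ≤ zv - h)
    (hQL : zv + h ≤ L + 3*h)
    (hP0 : 0 ≤ zv - h)
    (hQle : zv + h ≤ 2*Mr*h) :
    |f yv - f zv| ≤ Γ * ((h * ∫ u in Ioc L (L+3*h), |deriv f u|/u)
        + h * ∫ u in Ioc L (L+3*h), |deriv (deriv f) u|) := by
  have hMr0 : (0:ℝ) < Mr := by linarith
  set P : ℝ := zv - h with hP_def
  set Q : ℝ := zv + h with hQ_def
  have hPQ : P < Q := by rw [hP_def, hQ_def]; linarith
  have hsmall : h * Γ / Mr ≤ h := by
    rw [div_le_iff₀ hMr0]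
    nlinarith
  have hyin : yv ∈ Icc P Q := by
    have hb := abs_le.mp (hyz.trans hsmall)
    exact ⟨by rw [hP_def]; linarith [hb.1], by rw [hQ_def]; linarith [hb.2]⟩
  have hzin : zv ∈ Icc P Q := ⟨by rw [hP_def]; linarith, by rw [hQ_def]; linarith⟩
  have hlip := aux_lip f hdf hdf' hif'' P Q hPQ hP0 _ _ hyin hzin
  have hQP : Q - P = 2*h := by rw [hP_def, hQ_def]; ring
  set D : ℝ := ∫ u in P..Q, |deriv f u| with hD_def
  set B : ℝ := ∫ u in P..Q, |deriv (deriv f) u| with hB_def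
  have hD0 : 0 ≤ D := intervalIntegral.integral_nonneg hPQ.le (fun u _ => abs_nonneg _)
  have hB0 : 0 ≤ B := intervalIntegral.integral_nonneg hPQ.le (fun u _ => abs_nonneg _)
  have step0 : |f yv - f zv| ≤ (h*Γ/Mr) * ((1/(2*h))*D + B) := by
    rw [hQP] at hlip
    have hbd : (0:ℝ) ≤ (1/(2*h))*D + B := by positivity
    calc |f yv - f zv| ≤ |yv - zv| * ((1/(2*h))*D + B) := hlip
      _ ≤ (h*Γ/Mr) * ((1/(2*h))*D + B) := mul_le_mul_of_nonneg_right hyz hbd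
  have hDset : D = ∫ u in Ioc P Q, |deriv f u| := intervalIntegral.integral_of_le hPQ.le
  have hBset : B = ∫ u in Ioc P Q, |deriv (deriv f) u| :=
    intervalIntegral.integral_of_le hPQ.le
  have hsubW : Ioc P Q ⊆ Ioc L (L+3*h) := Ioc_subset_Ioc hPL hQL
  have hWsub0 : Ioc L (L+3*h) ⊆ Ioi (0:ℝ) := fun t ht => lt_of_le_of_lt hL0 ht.1
  have hintW1 : IntegrableOn (fun u => |deriv f u|/u) (Ioc L (L+3*h)) :=
    hifu.mono_set hWsub0
  have hintW2 : IntegrableOn (fun u => |deriv (deriv f) u|) (Ioc L (L+3*h)) :=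
    IntegrableOn.mono_set (hif''.abs) (hWsub0.trans (fun t ht => mem_Ici.mpr (le_of_lt ht)))
  set W1 : ℝ := ∫ u in Ioc L (L+3*h), |deriv f u|/u with hW1_def
  set W2 : ℝ := ∫ u in Ioc L (L+3*h), |deriv (deriv f) u| with hW2_def
  have claima : D ≤ (2*Mr*h) * W1 := by
    rw [hDset]
    calc (∫ u in Ioc P Q, |deriv f u|)
        ≤ ∫ u in Ioc P Q, (2*Mr*h) * (|deriv f u|/u) := by
          apply setIntegral_mono_on (hdf'.continuous.abs.integrableOn_Ioc)
            ((hifu.mono_set (hsubW.trans hWsub0)).const_mul _) measurableSet_Ioc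
          intro u hu
          have hu0 : 0 < u := lt_of_le_of_lt hP0 hu.1
          have huQ : u ≤ 2*Mr*h := le_trans hu.2 hQle
          rw [mul_div_assoc', le_div_iff₀ hu0]
          nlinarith [abs_nonneg (deriv f u)]
      _ = (2*Mr*h) * ∫ u in Ioc P Q, |deriv f u|/u := integral_const_mul _ _
      _ ≤ (2*Mr*h) * W1 := by
          apply mul_le_mul_of_nonneg_left _ (by positivity)
          rw [hW1_def]
          apply setIntegral_mono_set hintW1
          · filter_upwards [ae_restrict_mem measurableSet_Ioc] with u hu using
              div_nonneg (abs_nonneg _) (le_of_lt (lt_of_le_of_lt hL0 hu.1))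
          · exact HasSubset.Subset.eventuallyLE hsubW
  have claimb : B ≤ W2 := by
    rw [hBset, hW2_def]
    apply setIntegral_mono_set hintW2
    · filter_upwards with u using abs_nonneg _
    · exact HasSubset.Subset.eventuallyLE hsubW
  have hW1nn : 0 ≤ W1 := by
    rw [hW1_def]
    apply setIntegral_nonneg measurableSet_Ioc
    intro u hu
    exact div_nonneg (abs_nonneg _) (le_of_lt (lt_of_le_of_lt hL0 hu.1))
  have hW2nn : 0 ≤ W2 := setIntegral_nonneg measurableSet_Ioc (fun u _ => abs_nonneg _)
  have e1 : (h*Γ/Mr) * ((1/(2*h))*D + B) = Γ * ((1/(2*Mr)) * D + (h/Mr) * B) := by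
    field_simp
  have e2 : (1/(2*Mr)) * D ≤ h * W1 := by
    have := claima
    rw [div_mul_eq_mul_div, div_le_iff₀ (by linarith : (0:ℝ) < 2*Mr)]
    nlinarith
  have e3 : (h/Mr) * B ≤ h * W2 := by
    have h1 : h/Mr ≤ h := by
      rw [div_le_iff₀ hMr0]
      nlinarith
    have h2 : 0 ≤ h/Mr := by positivity
    calc (h/Mr) * B ≤ (h/Mr) * W2 := mul_le_mul_of_nonneg_left claimb h2
      _ ≤ h * W2 := mul_le_mul_of_nonneg_right h1 hW2nn
  calc |f yv - f zv| ≤ (h*Γ/Mr) * ((1/(2*h))*D + B) := step0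
    _ = Γ * ((1/(2*Mr)) * D + (h/Mr) * B) := e1
    _ ≤ Γ * (h * W1 + h * W2) := by
        apply mul_le_mul_of_nonneg_left _ hΓ
        linarith

lemma aux_Ioc_split (g : ℝ → ℝ) (a b c : ℝ) (hab : a ≤ b) (hbc : b ≤ c)
    (hg : IntegrableOn g (Ioc a c)) :
    ∫ u in Ioc a c, g u = (∫ u in Ioc a b, g u) + ∫ u in Ioc b c, g u := by
  rw [← Set.Ioc_union_Ioc_eq_Ioc hab hbc]
  rw [setIntegral_union (Set.Ioc_disjoint_Ioc_of_le le_rfl) measurableSet_Ioc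
    (hg.mono_set (by rw [← Set.Ioc_union_Ioc_eq_Ioc hab hbc]; exact subset_union_left))
    (hg.mono_set (by rw [← Set.Ioc_union_Ioc_eq_Ioc hab hbc]; exact subset_union_right))]


set_option maxHeartbeats 2000000 in
/-- Second-order (midpoint-rule) Riemann-sum estimate for the atomic
measure `μ^(η) = (1/√η) ∑_{n≥1} δ_{x_n/√η}`, for a sequence satisfying MacMahon-type
asymptotics `|x_n − πn − c| ≤ C₀/n`, valid for functions vanishing at `0`. -/
theorem macmahon_riemann_sum_second_order (c C₀ : ℝ) (hC₀ : 0 ≤ C₀) :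
    ∃ C : ℝ, 0 ≤ C ∧
      ∀ x : ℕ → ℝ,
        (∀ n : ℕ, 1 ≤ n → 0 < x n) →
        (∀ n : ℕ, 1 ≤ n → |x n - π * (n : ℝ) - c| ≤ C₀ / (n : ℝ)) →
        ∀ η : ℝ, 1 ≤ η →
          ∀ f : ℝ → ℝ,
            f 0 = 0 →
            Differentiable ℝ f →
            Differentiable ℝ (deriv f) →
            ContinuousOn f (Ici 0) →
            ContinuousOn (deriv f) (Ici 0) →
            ContinuousOn (deriv (deriv f)) (Ici 0) →
            IntegrableOn f (Ici 0) →
            IntegrableOn (deriv f) (Ici 0) →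
            IntegrableOn (deriv (deriv f)) (Ici 0) →
            IntegrableOn (fun u : ℝ => |deriv f u| / u) (Ioi 0) →
            Summable (fun n : ℕ => |f (x (n + 1) / Real.sqrt η)|) ∧
            |(1 / Real.sqrt η) * ∑' n : ℕ, f (x (n + 1) / Real.sqrt η)
                - (1 / π) * ∫ u in Ioi (0 : ℝ), f u|
              ≤ C * ((∫ u in Ioi (0 : ℝ), |deriv (deriv f) u|)
                  + ∫ u in Ioi (0 : ℝ), |deriv f u| / u) / η := by
  have hπ := Real.pi_pos
  set N₀ : ℕ := ⌈|c|/π + C₀/π⌉₊ + 3 with hN₀_def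
  have hN₀ge : (|c|/π + C₀/π) + 3 ≤ (N₀:ℝ) := by
    rw [hN₀_def]
    push_cast
    have := Nat.le_ceil (|c|/π + C₀/π)
    linarith
  have hcπ : 0 ≤ |c|/π := by positivity
  have hCπ : 0 ≤ C₀/π := by positivity
  set K : ℝ := ((N₀:ℝ)) * ((N₀:ℝ) + |c|/π + C₀/π) + 3*(C₀/π) + 1/4
      + ((N₀:ℝ) + |c|/π)^2/2 + 1 with hK_def
  have hK0 : 0 ≤ K := by positivity
  have hN₀3 : 3 ≤ N₀ := by rw [hN₀_def]; omega
  clear_value N₀ K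
  refine ⟨π * K, by positivity, ?_⟩
  intro x hxpos hxasym η hη f hf0 hdf hdf' hcf hcf' hcf'' hif hif' hif'' hifu
  -- basic quantities
  set s := Real.sqrt η with hs_def
  have hs1 : 1 ≤ s := by
    rw [hs_def, show (1:ℝ) = Real.sqrt 1 by simp]
    exact Real.sqrt_le_sqrt hη
  have hs0 : 0 < s := lt_of_lt_of_le one_pos hs1
  have hs2 : s^2 = η := Real.sq_sqrt (le_trans zero_le_one hη)
  set h := π / s with hh_def
  have hh0 : 0 < h := div_pos hπ hs0
  have hh2 : h^2 = π^2 / η := by rw [hh_def, div_pow, hs2]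
  have hsh : 1/s = h/π := by rw [hh_def]; field_simp
  set y : ℕ → ℝ := fun m => x m / s with hy_def
  set z : ℕ → ℝ := fun m => h * ((m:ℝ) + c/π) with hz_def
  have hyv : ∀ m : ℕ, x m / s = y m := fun m => rfl
  have hzv : ∀ m : ℕ, z m = h * ((m:ℝ) + c/π) := fun m => rfl
  have hzval : ∀ m : ℕ, z m = ((π * m + c) / s) := by
    intro m
    rw [hzv, hh_def]
    field_simp
  have hyz : ∀ m : ℕ, 1 ≤ m → |y m - z m| ≤ h * (C₀/π) / m := by
    intro m hm
    have hm0 : (0:ℝ) < m := by exact_mod_cast hm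
    have hd1 : y m - z m = (x m - π * m - c)/s := by
      rw [← hyv, hzval]
      field_simp
      ring
    rw [hd1, abs_div, abs_of_pos hs0]
    have hax := hxasym m hm
    have hle : |x m - π * m - c| / s ≤ (C₀ / m) / s := by gcongr
    have heq : (C₀ / m) / s = h * (C₀/π) / m := by
      rw [hh_def]; field_simp
    linarith
  clear_value y z
  clear_value s h
  -- integrability on Ioi 0
  have hsub01 : (Ioi (0:ℝ)) ⊆ Ici 0 := Ioi_subset_Ici_self
  have hif0 : IntegrableOn f (Ioi 0) := hif.mono_set hsub01
  have hif0a : IntegrableOn (fun u => |f u|) (Ioi 0) := hif0.abs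
  have hif''0 : IntegrableOn (deriv (deriv f)) (Ioi 0) := hif''.mono_set hsub01
  have hif''0a : IntegrableOn (fun u => |deriv (deriv f) u|) (Ioi 0) := hif''0.abs
  set M₁ := ∫ u in Ioi (0:ℝ), |deriv f u| / u with hM₁_def
  set M₂ := ∫ u in Ioi (0:ℝ), |deriv (deriv f) u| with hM₂_def
  have hM₁0 : 0 ≤ M₁ := setIntegral_nonneg measurableSet_Ioi
    (fun u hu => div_nonneg (abs_nonneg _) (le_of_lt hu))
  have hM₂0 : 0 ≤ M₂ := setIntegral_nonneg measurableSet_Ioi (fun u _ => abs_nonneg _)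
  have hc1 : c/π ≤ |c|/π := by gcongr; exact le_abs_self c
  have hc2 : -(|c|/π) ≤ c/π := by
    rw [← neg_div]; gcongr; exact neg_abs_le c
  set T₁ : ℝ := h * ((N₀:ℝ) + c/π - 3/2) with hT₁_def
  have hT₁0 : 0 ≤ T₁ := mul_nonneg hh0.le (by linarith)
  set T₀ : ℝ := T₁ + h with hT₀_def
  have hT₀0 : 0 ≤ T₀ := by rw [hT₀_def]; linarith
  clear_value T₁ T₀
  -- families of integrals over the grid intervals
  set A1 : ℕ → ℝ := fun n => ∫ u in Ioc (T₁ + n*h) (T₁+((n:ℝ)+1)*h), |deriv f u| / u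
    with hA1_def
  set A2 : ℕ → ℝ := fun n => ∫ u in Ioc (T₁ + n*h) (T₁+((n:ℝ)+1)*h), |deriv (deriv f) u|
    with hA2_def
  have hA1sum : HasSum A1 (∫ u in Ioi T₁, |deriv f u| / u) :=
    aux_hasSum _ T₁ h hh0 hT₁0 hifu
  have hA2sum : HasSum A2 (∫ u in Ioi T₁, |deriv (deriv f) u|) :=
    aux_hasSum _ T₁ h hh0 hT₁0 hif''0a
  have hG1M : (∫ u in Ioi T₁, |deriv f u| / u) ≤ M₁ := by
    apply setIntegral_mono_set hifu
    · filter_upwards [ae_restrict_mem measurableSet_Ioi] with u hu using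
        div_nonneg (abs_nonneg _) (le_of_lt hu)
    · exact HasSubset.Subset.eventuallyLE (Ioi_subset_Ioi hT₁0)
  have hG2M : (∫ u in Ioi T₁, |deriv (deriv f) u|) ≤ M₂ := by
    apply setIntegral_mono_set hif''0a
    · filter_upwards with u using abs_nonneg _
    · exact HasSubset.Subset.eventuallyLE (Ioi_subset_Ioi hT₁0)
  clear_value M₁ M₂
  have hA1nn : ∀ n, 0 ≤ A1 n := by
    intro n
    apply setIntegral_nonneg measurableSet_Ioc
    intro u hu
    have h1 : (0:ℝ) ≤ (n:ℝ)*h := by positivity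
    exact div_nonneg (abs_nonneg _) (le_of_lt (lt_of_le_of_lt (by linarith) hu.1))
  have hA2nn : ∀ n, 0 ≤ A2 n := fun n =>
    setIntegral_nonneg measurableSet_Ioc (fun u _ => abs_nonneg _)
  set b : ℕ → ℝ := fun n => ∫ u in Ioc (T₀ + n*h) (T₀+((n:ℝ)+1)*h), f u with hb_def
  have hbsum : HasSum b (∫ u in Ioi T₀, f u) := aux_hasSum f T₀ h hh0 hT₀0 hif0
  set bA : ℕ → ℝ := fun n => ∫ u in Ioc (T₀+n*h) (T₀+((n:ℝ)+1)*h), |f u| with hbA_def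
  have hbAsum : HasSum bA (∫ u in Ioi T₀, |f u|) := aux_hasSum _ T₀ h hh0 hT₀0 hif0a
  have hbabs : ∀ n, |b n| ≤ bA n := by
    intro n
    rw [hb_def, hbA_def]
    exact (norm_integral_le_integral_norm f).trans_eq (by simp)
  set A2' : ℕ → ℝ := fun n => ∫ u in Ioc (T₀+n*h) (T₀+((n:ℝ)+1)*h), |deriv (deriv f) u|
    with hA2'_def
  clear_value A1 A2 b bA A2'
  have hIoc_eq : ∀ n : ℕ, Ioc (T₀+(n:ℝ)*h) (T₀+((n:ℝ)+1)*h)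
      = Ioc (T₁+((n+1:ℕ):ℝ)*h) (T₁+(((n+1:ℕ):ℝ)+1)*h) := by
    intro n
    rw [hT₀_def]
    push_cast
    congr 1 <;> ring
  have hA2'eq : ∀ n : ℕ, A2' n = A2 (n+1) := by
    intro n
    rw [hA2'_def, hA2_def]
    simp only
    rw [hIoc_eq n]
  have hnn : ∀ n : ℕ, (0:ℝ) ≤ (n:ℝ) := fun n => Nat.cast_nonneg n
  -- midpoint estimate on each interval
  have hmid : ∀ n : ℕ, |h * f (z (N₀+n)) - b n| ≤ (h^2/4) * A2' n := by
    intro n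
    have hzc : z (N₀+n) = h * ((N₀:ℝ) + (n:ℝ) + c/π) := by
      rw [hzv]; push_cast; ring
    have hL0 : 0 ≤ T₀ + (n:ℝ)*h := by
      have : (0:ℝ) ≤ (n:ℝ)*h := by positivity
      linarith
    have key := aux_mid_interval f hdf hdf' hif'' h (T₀+(n:ℝ)*h) (z (N₀+n)) hh0 hL0
      (by rw [hzc, hT₀_def, hT₁_def]; ring) (by rw [hzc, hT₀_def, hT₁_def]; ring)
    have hIeq : Ioc (T₀+(n:ℝ)*h) ((T₀+(n:ℝ)*h)+h) = Ioc (T₀+(n:ℝ)*h) (T₀+((n:ℝ)+1)*h) := by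
      congr 1
      ring
    rw [hIeq] at key
    rw [hb_def, hA2'_def]
    exact key
  -- window splitting
  have hWin_sub : ∀ n : ℕ, Ioc (T₁+(n:ℝ)*h) (T₁+((n:ℝ)+3)*h) ⊆ Ioi (0:ℝ) := by
    intro n t ht
    have h1 : (0:ℝ) ≤ (n:ℝ)*h := by positivity
    exact lt_of_le_of_lt (by linarith) ht.1
  have hsplit : ∀ g : ℝ → ℝ, IntegrableOn g (Ioi 0) →
      ∀ n : ℕ, (∫ u in Ioc (T₁+(n:ℝ)*h) (T₁+((n:ℝ)+3)*h), g u)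
        = (∫ u in Ioc (T₁+(n:ℝ)*h) (T₁+((n:ℝ)+1)*h), g u)
          + (∫ u in Ioc (T₁+((n:ℝ)+1)*h) (T₁+((n:ℝ)+2)*h), g u)
          + (∫ u in Ioc (T₁+((n:ℝ)+2)*h) (T₁+((n:ℝ)+3)*h), g u) := by
    intro g hg n
    have hgW : IntegrableOn g (Ioc (T₁+(n:ℝ)*h) (T₁+((n:ℝ)+3)*h)) := hg.mono_set (hWin_sub n)
    have l1 : T₁+(n:ℝ)*h ≤ T₁+((n:ℝ)+1)*h := by nlinarith [hh0.le]
    have l2 : T₁+((n:ℝ)+1)*h ≤ T₁+((n:ℝ)+2)*h := by nlinarith [hh0.le]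
    have l3 : T₁+((n:ℝ)+2)*h ≤ T₁+((n:ℝ)+3)*h := by nlinarith [hh0.le]
    rw [aux_Ioc_split g _ (T₁+((n:ℝ)+1)*h) _ l1 (le_trans l2 l3) hgW,
      aux_Ioc_split g _ (T₁+((n:ℝ)+2)*h) _ l2 l3
        (hgW.mono_set (Ioc_subset_Ioc l1 le_rfl))]
    ring
  have hcast1 : ∀ n : ℕ, Ioc (T₁+((n:ℝ)+1)*h) (T₁+((n:ℝ)+2)*h)
      = Ioc (T₁+((n+1:ℕ):ℝ)*h) (T₁+(((n+1:ℕ):ℝ)+1)*h) := by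
    intro n; push_cast; congr 1 <;> ring
  have hcast2 : ∀ n : ℕ, Ioc (T₁+((n:ℝ)+2)*h) (T₁+((n:ℝ)+3)*h)
      = Ioc (T₁+((n+2:ℕ):ℝ)*h) (T₁+(((n+2:ℕ):ℝ)+1)*h) := by
    intro n; push_cast; congr 1 <;> ring
  -- perturbation estimate, rewritten with the A-sequences
  have hpert : ∀ n : ℕ, |f (y (N₀+n)) - f (z (N₀+n))|
      ≤ (C₀/π) * h * ((A1 n + A1 (n+1) + A1 (n+2)) + (A2 n + A2 (n+1) + A2 (n+2))) := by
    intro n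
    have hzc : z (N₀+n) = h * (((N₀:ℝ) + (n:ℝ)) + c/π) := by
      rw [hzv]; push_cast; ring
    have hMrge : |c|/π + C₀/π + 3 ≤ (N₀:ℝ) + (n:ℝ) := by linarith [hnn n]
    have hL0 : 0 ≤ T₁+(n:ℝ)*h := by
      have : (0:ℝ) ≤ (n:ℝ)*h := by positivity
      linarith
    have h1n : 1 ≤ N₀ + n := by
      omega
    have hyzn : |y (N₀+n) - z (N₀+n)| ≤ h * (C₀/π) / ((N₀:ℝ)+(n:ℝ)) := by
      have := hyz (N₀+n) h1n
      rwa [show (((N₀+n : ℕ)):ℝ) = (N₀:ℝ)+(n:ℝ) by push_cast; ring] at this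
    have key := aux_pert f hdf hdf' hif'' hifu (C₀/π) h ((N₀:ℝ)+(n:ℝ)) (T₁+(n:ℝ)*h)
      (y (N₀+n)) (z (N₀+n)) hCπ hh0 (by linarith) hL0 hyzn (by linarith)
      (by rw [hzc, hT₁_def]; nlinarith [hh0.le])
      (by rw [hzc, hT₁_def]; nlinarith [hh0.le])
      (by rw [hzc]; nlinarith [hh0.le])
      (by rw [hzc]; nlinarith [hh0.le])
    have hWeq : (T₁+(n:ℝ)*h) + 3*h = T₁+((n:ℝ)+3)*h := by ring
    rw [hWeq, hsplit _ hifu n, hsplit _ hif''0a n] at key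
    calc |f (y (N₀+n)) - f (z (N₀+n))|
        ≤ (C₀/π) * ((h * ((∫ u in Ioc (T₁+(n:ℝ)*h) (T₁+((n:ℝ)+1)*h), |deriv f u|/u)
            + (∫ u in Ioc (T₁+((n:ℝ)+1)*h) (T₁+((n:ℝ)+2)*h), |deriv f u|/u)
            + (∫ u in Ioc (T₁+((n:ℝ)+2)*h) (T₁+((n:ℝ)+3)*h), |deriv f u|/u)))
          + h * ((∫ u in Ioc (T₁+(n:ℝ)*h) (T₁+((n:ℝ)+1)*h), |deriv (deriv f) u|)
            + (∫ u in Ioc (T₁+((n:ℝ)+1)*h) (T₁+((n:ℝ)+2)*h), |deriv (deriv f) u|)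
            + (∫ u in Ioc (T₁+((n:ℝ)+2)*h) (T₁+((n:ℝ)+3)*h), |deriv (deriv f) u|))) := key
      _ = (C₀/π) * h * ((A1 n + A1 (n+1) + A1 (n+2)) + (A2 n + A2 (n+1) + A2 (n+2))) := by
          rw [hA1_def, hA2_def]
          simp only
          rw [hcast1 n, hcast2 n]
          ring
  -- deviation sequences
  set dseq : ℕ → ℝ := fun n => h * f (z (N₀+n)) - b n with hdseq_def
  have hdabs : ∀ n, |dseq n| ≤ (h^2/4) * A2 (n+1) := by
    intro n
    rw [hdseq_def]
    simp only
    rw [← hA2'eq n]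
    exact hmid n
  have hA2shift : Summable (fun n => A2 (n+1)) := (summable_nat_add_iff 1).mpr hA2sum.summable
  have hdseq_abs_sum : Summable (fun n => |dseq n|) :=
    Summable.of_nonneg_of_le (fun n => abs_nonneg _) hdabs (hA2shift.mul_left _)
  have hdseq_sum : Summable dseq :=
    Summable.of_norm (by simpa [Real.norm_eq_abs] using hdseq_abs_sum)
  set pseq : ℕ → ℝ := fun n => f (y (N₀+n)) - f (z (N₀+n)) with hpseq_def
  set tri1 : ℕ → ℝ := fun n => A1 n + A1 (n+1) + A1 (n+2) with htri1_def
  set tri2 : ℕ → ℝ := fun n => A2 n + A2 (n+1) + A2 (n+2) with htri2_def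
  clear_value dseq pseq tri1 tri2
  have htri1_sum : Summable tri1 := by
    rw [htri1_def]
    exact (hA1sum.summable.add ((summable_nat_add_iff 1).mpr hA1sum.summable)).add
      ((summable_nat_add_iff 2).mpr hA1sum.summable)
  have htri2_sum : Summable tri2 := by
    rw [htri2_def]
    exact (hA2sum.summable.add ((summable_nat_add_iff 1).mpr hA2sum.summable)).add
      ((summable_nat_add_iff 2).mpr hA2sum.summable)
  have hpabs : ∀ n, |pseq n| ≤ (C₀/π) * h * (tri1 n + tri2 n) := by
    intro n
    rw [hpseq_def, htri1_def, htri2_def]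
    simp only
    exact hpert n
  have hpseq_abs_sum : Summable (fun n => |pseq n|) :=
    Summable.of_nonneg_of_le (fun n => abs_nonneg _) hpabs
      ((htri1_sum.add htri2_sum).mul_left _)
  have hpseq_sum : Summable pseq :=
    Summable.of_norm (by simpa [Real.norm_eq_abs] using hpseq_abs_sum)
  have hhfz : (fun n => b n + dseq n) = fun n => h * f (z (N₀+n)) := by
    funext n; rw [hdseq_def]; ring
  have hfz_sum : Summable (fun n => f (z (N₀+n))) := by
    have h1 : Summable (fun n => b n + dseq n) := hbsum.summable.add hdseq_sum
    rw [hhfz] at h1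
    apply (h1.mul_left (1/h)).congr
    intro n
    field_simp
  have hfy_sum : Summable (fun n => f (y (N₀+n))) := by
    apply (hfz_sum.add hpseq_sum).congr
    intro n
    rw [hpseq_def]
    simp only
    ring
  have hfz_abs_sum : Summable (fun n => |f (z (N₀+n))|) := by
    apply Summable.of_nonneg_of_le (fun n => abs_nonneg _) _
      ((hbAsum.summable.add hdseq_abs_sum).mul_left (1/h))
    intro n
    have h1 : h * f (z (N₀+n)) = b n + dseq n := by rw [hdseq_def]; ring
    have h3 : |b n + dseq n| ≤ bA n + |dseq n| :=
      (abs_add_le _ _).trans (add_le_add_left (hbabs n) _)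
    rw [show (1/h)*(bA n + |dseq n|) = (bA n + |dseq n|)/h by ring, le_div_iff₀ hh0]
    calc |f (z (N₀+n))| * h = |h * f (z (N₀+n))| := by
          rw [abs_mul, abs_of_pos hh0]; ring
      _ = |b n + dseq n| := by rw [h1]
      _ ≤ bA n + |dseq n| := h3
  have hfy_abs_sum : Summable (fun n => |f (y (N₀+n))|) := by
    apply Summable.of_nonneg_of_le (fun n => abs_nonneg _) _
      (hfz_abs_sum.add hpseq_abs_sum)
    intro n
    calc |f (y (N₀+n))| = |f (z (N₀+n)) + pseq n| := by
          rw [hpseq_def]; congr 1; ring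
      _ ≤ |f (z (N₀+n))| + |pseq n| := abs_add_le _ _
  have hN₀1 : 1 ≤ N₀ := by rw [hN₀_def]; omega
  have hsummable : Summable (fun n : ℕ => |f (y (n + 1))|) := by
    apply (summable_nat_add_iff (N₀-1)).mp
    apply hfy_abs_sum.congr
    intro n
    have he : N₀ + n = n + (N₀-1) + 1 := by omega
    rw [he]
  have hη0 : 0 < η := lt_of_lt_of_le one_pos hη
  have hF_sum : Summable (fun n : ℕ => f (y (n+1))) :=
    Summable.of_norm (by simpa [Real.norm_eq_abs] using hsummable)
  set SS0 : ℝ := ∑ i ∈ Finset.range (N₀-1), f (y (i+1)) with hSS0_def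
  set S₁ : ℝ := ∑' n : ℕ, f (y (N₀+n)) with hS₁_def
  have hsplitS : SS0 + S₁ = ∑' n : ℕ, f (y (n+1)) := by
    rw [hSS0_def, hS₁_def]
    have := Summable.sum_add_tsum_nat_add (f := fun n : ℕ => f (y (n+1))) (N₀-1) hF_sum
    rw [show (fun n : ℕ => f (y (n + (N₀-1) + 1))) = fun n => f (y (N₀+n)) by
      funext n
      have he : n + (N₀-1) + 1 = N₀ + n := by omega
      rw [he]] at this
    exact this
  have hzsummable : Summable (fun n : ℕ => h * f (z (N₀+n))) := hfz_sum.mul_left h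
  have htsum_eq : ∑' n : ℕ, (h * f (z (N₀+n))) = (∫ u in Ioi T₀, f u) + ∑' n, dseq n := by
    have h1 : ∀ n : ℕ, h * f (z (N₀+n)) = b n + dseq n := by
      intro n; rw [hdseq_def]; ring
    rw [tsum_congr h1, Summable.tsum_add hbsum.summable hdseq_sum, hbsum.tsum_eq]
  have hS₁h : h * S₁ = (∫ u in Ioi T₀, f u) + (∑' n, dseq n) + h * (∑' n, pseq n) := by
    rw [hS₁_def, ← tsum_mul_left]
    have h2 : ∀ n : ℕ, h * f (y (N₀+n)) = h * f (z (N₀+n)) + h * pseq n := by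
      intro n; rw [hpseq_def]; ring
    rw [tsum_congr h2, Summable.tsum_add hzsummable (hpseq_sum.mul_left h), htsum_eq, tsum_mul_left]
  have hint_split : (∫ u in Ioi (0:ℝ), f u) = (∫ u in Ioc 0 T₀, f u) + ∫ u in Ioi T₀, f u := by
    rw [← setIntegral_union (Ioc_disjoint_Ioi le_rfl) measurableSet_Ioi
      (hif0.mono_set Ioc_subset_Ioi_self) (hif0.mono_set (Ioi_subset_Ioi hT₀0)),
      Ioc_union_Ioi_eq_Ioi hT₀0]
  -- bounds on the four pieces
  have hybound : ∀ i : ℕ, i ∈ Finset.range (N₀-1) →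
      |f (y (i+1))| ≤ (h*((N₀:ℝ) + |c|/π + C₀/π)) * M₁ := by
    intro i hi
    have hi1 : 1 ≤ i + 1 := Nat.succ_le_succ (Nat.zero_le _)
    have hiN : (i:ℝ) + 1 ≤ (N₀:ℝ) := by
      have := Finset.mem_range.mp hi
      have : i + 1 ≤ N₀ := by omega
      exact_mod_cast this
    have hylb : 0 ≤ y (i+1) := by
      rw [← hyv]
      exact le_of_lt (div_pos (hxpos (i+1) hi1) hs0)
    have hxub : x (i+1) ≤ π*(N₀:ℝ) + |c| + C₀ := by
      have hax := hxasym (i+1) hi1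
      have h1 : x (i+1) - π*((i+1:ℕ):ℝ) - c ≤ C₀/((i+1:ℕ):ℝ) := (abs_le.mp hax).2
      have h2 : C₀/((i+1:ℕ):ℝ) ≤ C₀ := by
        apply div_le_self hC₀
        exact_mod_cast hi1
      have h3 : c ≤ |c| := le_abs_self c
      have h4 : π*((i+1:ℕ):ℝ) ≤ π*(N₀:ℝ) := by
        apply mul_le_mul_of_nonneg_left _ hπ.le
        push_cast
        linarith
      linarith
    have hyub : y (i+1) ≤ h*((N₀:ℝ) + |c|/π + C₀/π) := by
      rw [← hyv]
      have he : h*((N₀:ℝ) + |c|/π + C₀/π) = (π*(N₀:ℝ) + |c| + C₀)/s := by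
        rw [hh_def]; field_simp
      rw [he]
      gcongr
    have hf_est := aux_abs_le f hdf hdf' hf0 hifu (y (i+1)) hylb
    rw [← hM₁_def] at hf_est
    calc |f (y (i+1))| ≤ y (i+1) * M₁ := hf_est
      _ ≤ (h*((N₀:ℝ) + |c|/π + C₀/π)) * M₁ := mul_le_mul_of_nonneg_right hyub hM₁0
  have hSS0bound : |SS0| ≤ (N₀:ℝ) * ((h*((N₀:ℝ) + |c|/π + C₀/π)) * M₁) := by
    rw [hSS0_def]
    calc |∑ i ∈ Finset.range (N₀-1), f (y (i+1))|
        ≤ ∑ i ∈ Finset.range (N₀-1), |f (y (i+1))| := Finset.abs_sum_le_sum_abs _ _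
      _ ≤ ∑ _i ∈ Finset.range (N₀-1), (h*((N₀:ℝ) + |c|/π + C₀/π)) * M₁ :=
          Finset.sum_le_sum hybound
      _ = ((N₀-1:ℕ):ℝ) * ((h*((N₀:ℝ) + |c|/π + C₀/π)) * M₁) := by
          rw [Finset.sum_const, Finset.card_range, nsmul_eq_mul]
      _ ≤ (N₀:ℝ) * ((h*((N₀:ℝ) + |c|/π + C₀/π)) * M₁) := by
          apply mul_le_mul_of_nonneg_right _ (by positivity)
          exact_mod_cast Nat.sub_le N₀ 1
  have hdtsum : |∑' n, dseq n| ≤ (h^2/4) * M₂ := by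
    have h1 : |∑' n, dseq n| ≤ ∑' n, |dseq n| := by
      simpa [Real.norm_eq_abs] using
        norm_tsum_le_tsum_norm (f := dseq) (by simpa [Real.norm_eq_abs] using hdseq_abs_sum)
    have h2 : ∑' n, |dseq n| ≤ ∑' n, ((h^2/4) * A2 (n+1)) :=
      Summable.tsum_le_tsum hdabs hdseq_abs_sum (hA2shift.mul_left _)
    have h3 : ∑' n, ((h^2/4) * A2 (n+1)) = (h^2/4) * ∑' n, A2 (n+1) := tsum_mul_left
    have h4 : ∑' n, A2 (n+1) ≤ ∑' n, A2 n := aux_tsum_shift A2 hA2nn hA2sum.summable 1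
    have h5 : ∑' n, A2 n = ∫ u in Ioi T₁, |deriv (deriv f) u| := hA2sum.tsum_eq
    have hq : (0:ℝ) ≤ h^2/4 := by positivity
    calc |∑' n, dseq n| ≤ ∑' n, |dseq n| := h1
      _ ≤ (h^2/4) * ∑' n, A2 (n+1) := by rw [← h3]; exact h2
      _ ≤ (h^2/4) * M₂ := by
          apply mul_le_mul_of_nonneg_left _ hq
          calc ∑' n, A2 (n+1) ≤ ∑' n, A2 n := h4
            _ = ∫ u in Ioi T₁, |deriv (deriv f) u| := h5
            _ ≤ M₂ := hG2M
  have hptsum : |∑' n, pseq n| ≤ (C₀/π) * h * (3*M₁ + 3*M₂) := by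
    have h1 : |∑' n, pseq n| ≤ ∑' n, |pseq n| := by
      simpa [Real.norm_eq_abs] using
        norm_tsum_le_tsum_norm (f := pseq) (by simpa [Real.norm_eq_abs] using hpseq_abs_sum)
    have h2 : ∑' n, |pseq n| ≤ ∑' n, ((C₀/π) * h * (tri1 n + tri2 n)) :=
      Summable.tsum_le_tsum hpabs hpseq_abs_sum ((htri1_sum.add htri2_sum).mul_left _)
    have h3 : ∑' n, ((C₀/π) * h * (tri1 n + tri2 n))
        = (C₀/π) * h * ∑' n, (tri1 n + tri2 n) := tsum_mul_left
    have h4 : ∑' n, (tri1 n + tri2 n) = (∑' n, tri1 n) + ∑' n, tri2 n :=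
      Summable.tsum_add htri1_sum htri2_sum
    have h5 : ∑' n, tri1 n ≤ 3 * M₁ := by
      rw [htri1_def]
      exact aux_tsum_three A1 hA1nn _ M₁ hA1sum hG1M
    have h6 : ∑' n, tri2 n ≤ 3 * M₂ := by
      rw [htri2_def]
      exact aux_tsum_three A2 hA2nn _ M₂ hA2sum hG2M
    have hq : (0:ℝ) ≤ (C₀/π) * h := by positivity
    calc |∑' n, pseq n| ≤ ∑' n, |pseq n| := h1
      _ ≤ (C₀/π) * h * ∑' n, (tri1 n + tri2 n) := by rw [← h3]; exact h2
      _ ≤ (C₀/π) * h * (3*M₁ + 3*M₂) := by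
          apply mul_le_mul_of_nonneg_left _ hq
          rw [h4]
          linarith
  have htail : |∫ u in Ioc 0 T₀, f u| ≤ (h*((N₀:ℝ)+|c|/π))^2/2 * M₁ := by
    have h1 : |∫ u in Ioc 0 T₀, f u| ≤ ∫ u in Ioc 0 T₀, |f u| := by
      simpa [Real.norm_eq_abs] using
        norm_integral_le_integral_norm (μ := volume.restrict (Ioc 0 T₀)) f
    have h2 := aux_tail_int f hdf hdf' hf0 hifu T₀ hT₀0
    rw [← hM₁_def] at h2
    have h3 : T₀ ≤ h*((N₀:ℝ)+|c|/π) := by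
      rw [hT₀_def, hT₁_def]
      have e : h * ((N₀:ℝ) + c/π - 3/2) + h = h * ((N₀:ℝ) + (c/π - 1/2)) := by ring
      rw [e]
      exact mul_le_mul_of_nonneg_left (by linarith [hc1]) hh0.le
    have h4 : T₀^2 ≤ (h*((N₀:ℝ)+|c|/π))^2 := pow_le_pow_left₀ hT₀0 h3 2
    calc |∫ u in Ioc 0 T₀, f u| ≤ ∫ u in Ioc 0 T₀, |f u| := h1
      _ ≤ T₀^2/2 * M₁ := h2
      _ ≤ (h*((N₀:ℝ)+|c|/π))^2/2 * M₁ :=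
          mul_le_mul_of_nonneg_right (by linarith [h4]) hM₁0
  -- the grand total
  have key : |h * (SS0 + S₁) - ∫ u in Ioi (0:ℝ), f u| ≤ h^2 * (K * (M₂ + M₁)) := by
    have e : h * (SS0 + S₁) - ∫ u in Ioi (0:ℝ), f u
        = h*SS0 + ((∑' n, dseq n) + h*(∑' n, pseq n) - ∫ u in Ioc 0 T₀, f u) := by
      rw [hint_split, mul_add, hS₁h]
      ring
    rw [e]
    have e3 : |h*SS0| = h*|SS0| := by rw [abs_mul, abs_of_pos hh0]
    have e4 : |h*(∑' n, pseq n)| = h*|∑' n, pseq n| := by rw [abs_mul, abs_of_pos hh0]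
    have habs : |h*SS0 + ((∑' n, dseq n) + h*(∑' n, pseq n) - ∫ u in Ioc 0 T₀, f u)|
        ≤ h*|SS0| + (|∑' n, dseq n| + h*|∑' n, pseq n| + |∫ u in Ioc 0 T₀, f u|) := by
      have t1 := abs_add_le (h*SS0) ((∑' n, dseq n) + h*(∑' n, pseq n) - ∫ u in Ioc 0 T₀, f u)
      have t2 := abs_sub ((∑' n, dseq n) + h*(∑' n, pseq n)) (∫ u in Ioc 0 T₀, f u)
      have t3 := abs_add_le (∑' n, dseq n) (h*(∑' n, pseq n))
      rw [e3] at t1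
      rw [e4] at t3
      linarith [t1, t2, t3]
    have c1 : h*|SS0| ≤ h^2 * (((N₀:ℝ) * ((N₀:ℝ) + |c|/π + C₀/π)) * M₁) := by
      have := mul_le_mul_of_nonneg_left hSS0bound hh0.le
      calc h*|SS0| ≤ h * ((N₀:ℝ) * ((h*((N₀:ℝ) + |c|/π + C₀/π)) * M₁)) := this
        _ = h^2 * (((N₀:ℝ) * ((N₀:ℝ) + |c|/π + C₀/π)) * M₁) := by ring
    have c3 : h*|∑' n, pseq n| ≤ h^2 * ((C₀/π) * (3*M₁ + 3*M₂)) := by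
      have := mul_le_mul_of_nonneg_left hptsum hh0.le
      calc h*|∑' n, pseq n| ≤ h * ((C₀/π) * h * (3*M₁ + 3*M₂)) := this
        _ = h^2 * ((C₀/π) * (3*M₁ + 3*M₂)) := by ring
    have c4 : |∫ u in Ioc 0 T₀, f u| ≤ h^2 * ((((N₀:ℝ)+|c|/π)^2/2) * M₁) := by
      calc |∫ u in Ioc 0 T₀, f u| ≤ (h*((N₀:ℝ)+|c|/π))^2/2 * M₁ := htail
        _ = h^2 * ((((N₀:ℝ)+|c|/π)^2/2) * M₁) := by ring
    have hco1 : (N₀:ℝ) * ((N₀:ℝ) + |c|/π + C₀/π) + 3*(C₀/π) + ((N₀:ℝ)+|c|/π)^2/2 ≤ K := by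
      rw [hK_def]
      linarith
    have hco2 : 1/4 + 3*(C₀/π) ≤ K := by
      rw [hK_def]
      linarith [mul_nonneg (hnn N₀) (show (0:ℝ) ≤ (N₀:ℝ)+|c|/π+C₀/π by
        linarith [hnn N₀]), sq_nonneg ((N₀:ℝ)+|c|/π)]
    have hh2nn : (0:ℝ) ≤ h^2 := sq_nonneg h
    have hfin : h^2 * (((N₀:ℝ) * ((N₀:ℝ) + |c|/π + C₀/π)) * M₁) + ((h^2/4) * M₂
        + h^2 * ((C₀/π) * (3*M₁ + 3*M₂)) + h^2 * ((((N₀:ℝ)+|c|/π)^2/2) * M₁))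
        ≤ h^2 * (K * (M₂ + M₁)) := by
      have p1 := mul_le_mul_of_nonneg_right hco1 hM₁0
      have p2 := mul_le_mul_of_nonneg_right hco2 hM₂0
      have inner : ((N₀:ℝ) * ((N₀:ℝ) + |c|/π + C₀/π)) * M₁ + (M₂/4
          + (C₀/π) * (3*M₁ + 3*M₂) + (((N₀:ℝ)+|c|/π)^2/2) * M₁)
          ≤ K * (M₂ + M₁) := by linarith [p1, p2]
      calc h^2 * (((N₀:ℝ) * ((N₀:ℝ) + |c|/π + C₀/π)) * M₁) + ((h^2/4) * M₂
          + h^2 * ((C₀/π) * (3*M₁ + 3*M₂)) + h^2 * ((((N₀:ℝ)+|c|/π)^2/2) * M₁))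
          = h^2 * (((N₀:ℝ) * ((N₀:ℝ) + |c|/π + C₀/π)) * M₁ + (M₂/4
            + (C₀/π) * (3*M₁ + 3*M₂) + (((N₀:ℝ)+|c|/π)^2/2) * M₁)) := by ring
        _ ≤ h^2 * (K * (M₂ + M₁)) := mul_le_mul_of_nonneg_left inner hh2nn
    calc |h*SS0 + ((∑' n, dseq n) + h*(∑' n, pseq n) - ∫ u in Ioc 0 T₀, f u)|
        ≤ h*|SS0| + (|∑' n, dseq n| + h*|∑' n, pseq n| + |∫ u in Ioc 0 T₀, f u|) := habs
      _ ≤ h^2 * (((N₀:ℝ) * ((N₀:ℝ) + |c|/π + C₀/π)) * M₁) + ((h^2/4) * M₂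
          + h^2 * ((C₀/π) * (3*M₁ + 3*M₂)) + h^2 * ((((N₀:ℝ)+|c|/π)^2/2) * M₁)) := by
          linarith [c1, hdtsum, c3, c4]
      _ ≤ h^2 * (K * (M₂ + M₁)) := hfin
  refine ⟨by simp only [hyv]; exact hsummable, ?_⟩
  have hgoal1 : (∑' n : ℕ, f (x (n+1) / s)) = SS0 + S₁ := by
    simp only [hyv]
    exact hsplitS.symm
  rw [hgoal1]
  have hLHS : |(1/s) * (SS0 + S₁) - (1/π) * ∫ u in Ioi (0:ℝ), f u|
      = (1/π) * |h*(SS0+S₁) - ∫ u in Ioi (0:ℝ), f u| := by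
    have e : (1/s) * (SS0+S₁) - (1/π) * ∫ u in Ioi (0:ℝ), f u
        = (1/π) * (h*(SS0+S₁) - ∫ u in Ioi (0:ℝ), f u) := by
      rw [hsh]
      field_simp
    rw [e, abs_mul, abs_of_pos (show (0:ℝ) < 1/π by positivity)]
  rw [hLHS]
  calc (1/π) * |h*(SS0+S₁) - ∫ u in Ioi (0:ℝ), f u|
      ≤ (1/π) * (h^2 * (K * (M₂ + M₁))) :=
        mul_le_mul_of_nonneg_left key (by positivity)
    _ = π * K * (M₂ + M₁) / η := by
        rw [hh2]
        field_simp
end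

section
/- Let (x_n)_{n≥1} be a strictly increasing sequence of positive real numbers satisfying MacMahon-type asymptotics with parameters c ∈ ℝ and C₀ ≥ 0. Then there exists a constant C < ∞ (which may depend on the sequence) such that for every n ≥ 1: ∑_{m>n} 1/(x_m² − x_n²) ≤ C · log(n+1)/n. -/
open Real



private lemma harm_cast (n : ℕ) : ∑ k ∈ Finset.range n, (1:ℝ)/((k:ℝ)+1) = (harmonic n : ℝ) := by
  rw [harmonic]
  push_cast
  simp [one_div]

private lemma harm_sum_le (n : ℕ) (hn : 1 ≤ n) (K : ℕ) :
    ∑ k ∈ Finset.range K, (1:ℝ) / (((k:ℝ)+1) * ((n:ℝ)+(k:ℝ)+1))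
      ≤ 6 * Real.log ((n:ℝ)+1) / n := by
  have hn0 : (0:ℝ) < n := by exact_mod_cast hn
  have hlog2 : (3:ℝ) ≤ 5 * Real.log ((n:ℝ)+1) := by
    have h2 : Real.log 2 ≤ Real.log ((n:ℝ)+1) := by
      apply Real.log_le_log (by norm_num)
      have : (1:ℝ) ≤ (n:ℝ) := by exact_mod_cast hn
      linarith
    have := Real.log_two_gt_d9
    linarith
  have hlogmono : Real.log n ≤ Real.log ((n:ℝ)+1) := by
    apply Real.log_le_log hn0; linarith
  have main : ∑ k ∈ Finset.range K, (1:ℝ) / (((k:ℝ)+1) * ((n:ℝ)+(k:ℝ)+1))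
      ≤ (3 + Real.log n) / n := by
    have head : ∀ j : ℕ, j ≤ n →
        ∑ k ∈ Finset.range j, (1:ℝ) / (((k:ℝ)+1) * ((n:ℝ)+(k:ℝ)+1)) ≤ (1 + Real.log n)/n := by
      intro j hj
      have h1 : ∑ k ∈ Finset.range j, (1:ℝ) / (((k:ℝ)+1) * ((n:ℝ)+(k:ℝ)+1))
          ≤ ∑ k ∈ Finset.range j, (1:ℝ) / (((k:ℝ)+1) * n) := by
        apply Finset.sum_le_sum
        intro k _
        have hk : (0:ℝ) ≤ (k:ℝ) := Nat.cast_nonneg k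
        apply one_div_le_one_div_of_le
        · positivity
        · nlinarith
      have h2 : ∑ k ∈ Finset.range j, (1:ℝ) / (((k:ℝ)+1) * n)
          = (∑ k ∈ Finset.range j, (1:ℝ)/((k:ℝ)+1)) / n := by
        rw [Finset.sum_div]
        exact Finset.sum_congr rfl fun k _ => by rw [div_div]
      have h3 : ∑ k ∈ Finset.range j, (1:ℝ)/((k:ℝ)+1) ≤ 1 + Real.log n := by
        refine le_trans ?_ ((harm_cast n) ▸ harmonic_le_one_add_log n)
        apply Finset.sum_le_sum_of_subset_of_nonneg (Finset.range_subset_range.mpr hj)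
        intro k _ _; positivity
      calc ∑ k ∈ Finset.range j, (1:ℝ) / (((k:ℝ)+1) * ((n:ℝ)+(k:ℝ)+1))
          ≤ (∑ k ∈ Finset.range j, (1:ℝ)/((k:ℝ)+1)) / n := h2 ▸ h1
        _ ≤ (1 + Real.log n)/n := by gcongr
    rcases le_or_gt K n with hK | hK
    · refine (head K hK).trans ?_
      gcongr
      linarith [Real.log_nonneg (by exact_mod_cast hn : (1:ℝ) ≤ (n:ℝ))]
    · have hsplit : ∑ k ∈ Finset.range K, (1:ℝ) / (((k:ℝ)+1) * ((n:ℝ)+(k:ℝ)+1))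
          = ∑ k ∈ Finset.range n, (1:ℝ) / (((k:ℝ)+1) * ((n:ℝ)+(k:ℝ)+1))
            + ∑ k ∈ Finset.Ico n K, (1:ℝ) / (((k:ℝ)+1) * ((n:ℝ)+(k:ℝ)+1)) := by
        rw [Finset.range_eq_Ico, Finset.range_eq_Ico]
        exact (Finset.sum_Ico_consecutive _ (Nat.zero_le n) hK.le).symm
      have tail : ∑ k ∈ Finset.Ico n K, (1:ℝ) / (((k:ℝ)+1) * ((n:ℝ)+(k:ℝ)+1)) ≤ 2 / n := by
        have t1 : ∑ k ∈ Finset.Ico n K, (1:ℝ) / (((k:ℝ)+1) * ((n:ℝ)+(k:ℝ)+1))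
            ≤ ∑ k ∈ Finset.Ico n K, ((k:ℝ)^2)⁻¹ := by
          apply Finset.sum_le_sum
          intro k hk
          have hk1 : 1 ≤ k := hn.trans (Finset.mem_Ico.mp hk).1
          have hk1' : (1:ℝ) ≤ (k:ℝ) := by exact_mod_cast hk1
          rw [one_div, inv_le_inv₀ (by positivity) (by positivity)]
          nlinarith
        have t2 : ∑ k ∈ Finset.Ico n K, ((k:ℝ)^2)⁻¹
            ≤ ∑ k ∈ Finset.Ioo (n-1) K, ((k:ℝ)^2)⁻¹ := by
          apply Finset.sum_le_sum_of_subset_of_nonneg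
          · intro k hk
            rw [Finset.mem_Ico] at hk
            rw [Finset.mem_Ioo]
            omega
          · intro k _ _; positivity
        have t3 : ∑ k ∈ Finset.Ioo (n-1) K, ((k:ℝ)^2)⁻¹ ≤ 2 / (((n-1:ℕ):ℝ)+1) :=
          sum_Ioo_inv_sq_le (n-1) K
        have t4 : ((n-1:ℕ):ℝ)+1 = (n:ℝ) := by
          have : n - 1 + 1 = n := by omega
          exact_mod_cast congrArg (Nat.cast (R := ℝ)) this
        calc _ ≤ ∑ k ∈ Finset.Ioo (n-1) K, ((k:ℝ)^2)⁻¹ := t1.trans t2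
          _ ≤ 2 / (((n-1:ℕ):ℝ)+1) := t3
          _ = 2 / n := by rw [t4]
      rw [hsplit]
      calc _ ≤ (1 + Real.log n)/n + 2/n := add_le_add (head n le_rfl) tail
        _ = (3 + Real.log n)/n := by ring
  refine main.trans ?_
  rw [div_le_div_iff₀ hn0 hn0]
  nlinarith [hn0]


private lemma key_bound (c C₀ : ℝ) (hC₀ : 0 ≤ C₀) (x : ℕ → ℝ)
    (hpos : ∀ n : ℕ, 1 ≤ n → 0 < x n)
    (hmac : ∀ n : ℕ, 1 ≤ n → |x n - π * (n : ℝ) - c| ≤ C₀ / (n : ℝ))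
    (N : ℕ) (hN1 : 1 ≤ N) (hπN : 6*C₀ + 2*|c| ≤ π * N) :
    ∀ n:ℕ, 1 ≤ n → ∀ k:ℕ, (N ≤ n ∨ N ≤ k+1) →
      1/(x (n+k+1)^2 - x n^2) ≤ (4/π^2) * (1/(((k:ℝ)+1)*((n:ℝ)+(k:ℝ)+1))) := by
  have hπ : (0:ℝ) < π := Real.pi_pos
  intro n hn k hcase
  have hn1 : (1:ℝ) ≤ (n:ℝ) := by exact_mod_cast hn
  have hk0 : (0:ℝ) ≤ (k:ℝ) := Nat.cast_nonneg k
  have hmacn := abs_le.mp (hmac n hn)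
  have hmacm := abs_le.mp (hmac (n+k+1) (by omega))
  push_cast at hmacm
  -- m ≥ N in both cases
  have hmN : (N:ℝ) ≤ (n:ℝ)+(k:ℝ)+1 := by
    rcases hcase with h | h
    · have : (N:ℝ) ≤ (n:ℝ) := by exact_mod_cast h
      linarith
    · have : (N:ℝ) ≤ (k:ℝ)+1 := by exact_mod_cast h
      linarith
  have habs : -|c| ≤ c ∧ c ≤ |c| := ⟨neg_abs_le c, le_abs_self c⟩
  have hCm : C₀/((n:ℝ)+(k:ℝ)+1) ≤ C₀ := by
    rw [div_le_iff₀ (by linarith)]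
    nlinarith
  have hCn : C₀/(n:ℝ) ≤ C₀ := by
    rw [div_le_iff₀ (by linarith)]
    nlinarith
  -- lower bound on x (n+k+1)
  have hxm : π*((n:ℝ)+(k:ℝ)+1)/2 ≤ x (n+k+1) := by
    have hπm : π*(N:ℝ) ≤ π*((n:ℝ)+(k:ℝ)+1) :=
      mul_le_mul_of_nonneg_left hmN (le_of_lt hπ)
    linarith [hmacm.1, hCm, habs.1, hπm, hπN, hC₀]
  -- gap lower bound
  have hgap : π*((k:ℝ)+1)/2 ≤ x (n+k+1) - x n := by
    rcases hcase with h | h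
    · have hNn : (N:ℝ) ≤ (n:ℝ) := by exact_mod_cast h
      have hN0 : (0:ℝ) < (N:ℝ) := by exact_mod_cast hN1
      have hNn' : (0:ℝ) < (n:ℝ) := by linarith
      have h1 : C₀/(n:ℝ) ≤ C₀/(N:ℝ) := by
        rw [div_le_div_iff₀ hNn' hN0]
        nlinarith
      have h2 : C₀/((n:ℝ)+(k:ℝ)+1) ≤ C₀/(N:ℝ) := by
        rw [div_le_div_iff₀ (by linarith) hN0]
        nlinarith
      have h3 : C₀/(N:ℝ) ≤ π/4 := by
        rw [div_le_iff₀ hN0]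
        linarith [abs_nonneg c]
      have hπk : (0:ℝ) ≤ π * (k:ℝ) := mul_nonneg hπ.le hk0
      linarith [hmacm.1, hmacn.2]
    · have hk1 : (N:ℝ) ≤ (k:ℝ)+1 := by exact_mod_cast h
      have hπk1 : π*(N:ℝ) ≤ π*((k:ℝ)+1) := mul_le_mul_of_nonneg_left hk1 hπ.le
      have h3 : 4*C₀ ≤ π*((k:ℝ)+1) := by
        linarith [abs_nonneg c]
      linarith [hmacm.1, hmacn.2, hCm, hCn]
  -- conclude
  have hxn : 0 < x n := hpos n hn
  have hden : π^2*(((k:ℝ)+1)*((n:ℝ)+(k:ℝ)+1))/4 ≤ x (n+k+1)^2 - x n^2 := by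
    have hg : (0:ℝ) ≤ π*((k:ℝ)+1)/2 := by positivity
    have hh : (0:ℝ) ≤ π*((n:ℝ)+(k:ℝ)+1)/2 := by positivity
    have hAB : π*((n:ℝ)+(k:ℝ)+1)/2 ≤ x (n+k+1) + x n := by linarith
    have key2 : (π*((k:ℝ)+1)/2) * (π*((n:ℝ)+(k:ℝ)+1)/2)
        ≤ (x (n+k+1) - x n) * (x (n+k+1) + x n) :=
      mul_le_mul hgap hAB hh (by linarith)
    have e1 : (π*((k:ℝ)+1)/2) * (π*((n:ℝ)+(k:ℝ)+1)/2)
        = π^2*(((k:ℝ)+1)*((n:ℝ)+(k:ℝ)+1))/4 := by ring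
    have e2 : (x (n+k+1) - x n) * (x (n+k+1) + x n) = x (n+k+1)^2 - x n^2 := by ring
    linarith
  have hdpos : (0:ℝ) < π^2*(((k:ℝ)+1)*((n:ℝ)+(k:ℝ)+1))/4 := by positivity
  calc 1/(x (n+k+1)^2 - x n^2) ≤ 1/(π^2*(((k:ℝ)+1)*((n:ℝ)+(k:ℝ)+1))/4) :=
        one_div_le_one_div_of_le hdpos hden
    _ = (4/π^2) * (1/(((k:ℝ)+1)*((n:ℝ)+(k:ℝ)+1))) := by
        field_simp

/-- For a strictly increasing sequence of positive reals satisfying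
MacMahon-type asymptotics `|x_n − πn − c| ≤ C₀/n`, there is a constant `C` such that
for every `n ≥ 1`, `∑_{m > n} 1/(x_m² − x_n²) ≤ C log(n+1)/n`.  (The sum over `m > n`
is written as a sum over `k : ℕ` with `m = n + k + 1`.) -/
theorem macmahon_inverse_gap_sum (c C₀ : ℝ) (hC₀ : 0 ≤ C₀) (x : ℕ → ℝ)
    (hpos : ∀ n : ℕ, 1 ≤ n → 0 < x n)
    (hmono : ∀ m n : ℕ, 1 ≤ m → m < n → x m < x n)
    (hmac : ∀ n : ℕ, 1 ≤ n → |x n - π * (n : ℝ) - c| ≤ C₀ / (n : ℝ)) :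
    ∃ C : ℝ, 0 ≤ C ∧
      ∀ n : ℕ, 1 ≤ n →
        (∑' k : ℕ, 1 / ((x (n + k + 1)) ^ 2 - (x n) ^ 2))
          ≤ C * Real.log ((n : ℝ) + 1) / (n : ℝ) := by
  have hπ : (0:ℝ) < π := Real.pi_pos
  obtain ⟨N, hN1, hπN⟩ : ∃ N : ℕ, 1 ≤ N ∧ 6*C₀ + 2*|c| ≤ π * N := by
    refine ⟨⌈(6*C₀ + 2*|c|)/π⌉₊ + 1, Nat.le_add_left 1 _, ?_⟩
    have h1 : (6*C₀ + 2*|c|)/π ≤ ((⌈(6*C₀ + 2*|c|)/π⌉₊ + 1 : ℕ):ℝ) := by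
      calc (6*C₀+2*|c|)/π ≤ (⌈(6*C₀+2*|c|)/π⌉₊ : ℝ) := Nat.le_ceil _
        _ ≤ _ := by exact_mod_cast Nat.le_succ _
    rw [div_le_iff₀ hπ] at h1
    linarith
  -- positivity of denominators
  have hdenpos : ∀ n:ℕ, 1 ≤ n → ∀ k:ℕ, 0 < x (n+k+1)^2 - x n^2 := by
    intro n hn k
    have h1 := hpos n hn
    have h2 := hmono n (n+k+1) hn (by omega)
    nlinarith
  have hterm_nonneg : ∀ n:ℕ, 1 ≤ n → ∀ k:ℕ, 0 ≤ 1/(x (n+k+1)^2 - x n^2) := by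
    intro n hn k
    have := hdenpos n hn k
    positivity
  have key := key_bound c C₀ hC₀ x hpos hmac N hN1 hπN
  -- the head sums and the constant
  obtain ⟨hd, hhd⟩ : ∃ hd : ℕ → ℝ, ∀ n:ℕ,
      hd n = ∑ k ∈ Finset.range N, 1/(x (n+k+1)^2 - x n^2) := ⟨_, fun _ => rfl⟩
  have hhd_nonneg : ∀ n:ℕ, 1 ≤ n → 0 ≤ hd n := by
    intro n hn
    rw [hhd n]
    exact Finset.sum_nonneg fun k _ => hterm_nonneg n hn k
  obtain ⟨S, hSdef⟩ : ∃ S : ℝ,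
      S = ∑ j ∈ Finset.Ico 1 N, (hd j * j / Real.log ((j:ℝ)+1)) := ⟨_, rfl⟩
  have hS_nonneg : 0 ≤ S := by
    rw [hSdef]
    apply Finset.sum_nonneg
    intro j hj
    have hj1 : 1 ≤ j := (Finset.mem_Ico.mp hj).1
    have := hhd_nonneg j hj1
    have hlog : 0 ≤ Real.log ((j:ℝ)+1) := Real.log_nonneg (by
      have : (1:ℝ) ≤ (j:ℝ) := by exact_mod_cast hj1
      linarith)
    exact div_nonneg (mul_nonneg this (Nat.cast_nonneg j)) hlog
  refine ⟨24/π^2 + S, add_nonneg (by positivity) hS_nonneg, fun n hn => ?_⟩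
  have hn0 : (0:ℝ) < (n:ℝ) := by exact_mod_cast hn
  have h1n : (1:ℝ) ≤ (n:ℝ) := by exact_mod_cast hn
  have hlogpos : 0 < Real.log ((n:ℝ)+1) := Real.log_pos (by linarith)
  have hquot : 0 ≤ Real.log ((n:ℝ)+1)/(n:ℝ) := by positivity
  rw [mul_div_assoc]
  apply Real.tsum_le_of_sum_range_le (fun k => hterm_nonneg n hn k)
  intro K
  -- comparison sums bound
  have hcmp : ∀ M : ℕ, ∑ k ∈ Finset.range M, (4/π^2) * (1/(((k:ℝ)+1)*((n:ℝ)+(k:ℝ)+1)))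
      ≤ 24/π^2 * (Real.log ((n:ℝ)+1)/(n:ℝ)) := by
    intro M
    rw [← Finset.mul_sum]
    calc (4/π^2) * ∑ k ∈ Finset.range M, (1/(((k:ℝ)+1)*((n:ℝ)+(k:ℝ)+1)))
        ≤ (4/π^2) * (6 * Real.log ((n:ℝ)+1)/(n:ℝ)) := by
          apply mul_le_mul_of_nonneg_left (harm_sum_le n hn M) (by positivity)
      _ = 24/π^2 * (Real.log ((n:ℝ)+1)/(n:ℝ)) := by ring
  rcases le_or_gt N n with hNn | hnN
  · -- large n : every term is controlled
    calc ∑ k ∈ Finset.range K, 1/(x (n+k+1)^2 - x n^2)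
        ≤ ∑ k ∈ Finset.range K, (4/π^2) * (1/(((k:ℝ)+1)*((n:ℝ)+(k:ℝ)+1))) :=
          Finset.sum_le_sum fun k _ => key n hn k (Or.inl hNn)
      _ ≤ 24/π^2 * (Real.log ((n:ℝ)+1)/(n:ℝ)) := hcmp K
      _ ≤ (24/π^2 + S) * (Real.log ((n:ℝ)+1)/(n:ℝ)) := by
          apply mul_le_mul_of_nonneg_right (by linarith) hquot
  · -- small n
    set M := max K N with hM
    have hKM : K ≤ M := le_max_left _ _
    have hNM : N ≤ M := le_max_right _ _
    have h1 : ∑ k ∈ Finset.range K, 1/(x (n+k+1)^2 - x n^2)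
        ≤ ∑ k ∈ Finset.range M, 1/(x (n+k+1)^2 - x n^2) := by
      apply Finset.sum_le_sum_of_subset_of_nonneg (Finset.range_subset_range.mpr hKM)
      intro k _ _
      exact hterm_nonneg n hn k
    have hsplit : ∑ k ∈ Finset.range M, 1/(x (n+k+1)^2 - x n^2)
        = hd n + ∑ k ∈ Finset.Ico N M, 1/(x (n+k+1)^2 - x n^2) := by
      rw [hhd n, Finset.range_eq_Ico, Finset.range_eq_Ico]
      exact (Finset.sum_Ico_consecutive _ (Nat.zero_le N) hNM).symm
    have htail : ∑ k ∈ Finset.Ico N M, 1/(x (n+k+1)^2 - x n^2)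
        ≤ 24/π^2 * (Real.log ((n:ℝ)+1)/(n:ℝ)) := by
      calc ∑ k ∈ Finset.Ico N M, 1/(x (n+k+1)^2 - x n^2)
          ≤ ∑ k ∈ Finset.Ico N M, (4/π^2) * (1/(((k:ℝ)+1)*((n:ℝ)+(k:ℝ)+1))) := by
            apply Finset.sum_le_sum
            intro k hk
            exact key n hn k (Or.inr (Nat.le_succ_of_le (Finset.mem_Ico.mp hk).1))
        _ ≤ ∑ k ∈ Finset.range M, (4/π^2) * (1/(((k:ℝ)+1)*((n:ℝ)+(k:ℝ)+1))) := by
            apply Finset.sum_le_sum_of_subset_of_nonneg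
            · intro k hk
              rw [Finset.mem_Ico] at hk
              exact Finset.mem_range.mpr hk.2
            · intro k _ _
              positivity
        _ ≤ 24/π^2 * (Real.log ((n:ℝ)+1)/(n:ℝ)) := hcmp M
    have hhead : hd n ≤ S * (Real.log ((n:ℝ)+1)/(n:ℝ)) := by
      have heq : hd n = (hd n * n / Real.log ((n:ℝ)+1)) * (Real.log ((n:ℝ)+1)/(n:ℝ)) := by
        have h1 : (n:ℝ) ≠ 0 := ne_of_gt hn0
        have h2 : Real.log ((n:ℝ)+1) ≠ 0 := ne_of_gt hlogpos
        field_simp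
      have hle : hd n * n / Real.log ((n:ℝ)+1) ≤ S := by
        rw [hSdef]
        apply Finset.single_le_sum (f := fun j => hd j * j / Real.log ((j:ℝ)+1))
        · intro j hj
          have hj1 : 1 ≤ j := (Finset.mem_Ico.mp hj).1
          have := hhd_nonneg j hj1
          have hlog : 0 ≤ Real.log ((j:ℝ)+1) := Real.log_nonneg (by
            have : (1:ℝ) ≤ (j:ℝ) := by exact_mod_cast hj1
            linarith)
          positivity
        · exact Finset.mem_Ico.mpr ⟨hn, hnN⟩
      rw [heq]
      exact mul_le_mul_of_nonneg_right hle hquot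
    calc ∑ k ∈ Finset.range K, 1/(x (n+k+1)^2 - x n^2)
        ≤ hd n + ∑ k ∈ Finset.Ico N M, 1/(x (n+k+1)^2 - x n^2) := by rw [← hsplit]; exact h1
      _ ≤ S * (Real.log ((n:ℝ)+1)/(n:ℝ)) + 24/π^2 * (Real.log ((n:ℝ)+1)/(n:ℝ)) :=
          add_le_add hhead htail
      _ = (24/π^2 + S) * (Real.log ((n:ℝ)+1)/(n:ℝ)) := by ring
end

section
/- Let α ≥ 0 and b > 0. Then x · (1 − I_{α+1}(bx)/I_α(bx)) converges to (2α+1)/(2b) as x → ∞. Equivalently, the quantity P̂_b(x) := −x (I_{α+1}(bx)/I_α(bx) − 1) satisfies P̂_b(x) → (2α+1)/(2b) as x → ∞. -/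
open Real Filter

/-- The modified Bessel function of the first kind,
`I_α(z) = ∑_{m≥0} (z/2)^{2m+α} / (m! Γ(m+α+1))`. -/
noncomputable def besselI (α z : ℝ) : ℝ :=
  ∑' m : ℕ, (z / 2) ^ (2 * (m : ℝ) + α) / ((Nat.factorial m : ℝ) * Real.Gamma ((m : ℝ) + α + 1))


noncomputable def bT (ν : ℝ) (m : ℕ) (w : ℝ) : ℝ :=
  w ^ m / ((Nat.factorial m : ℝ) * Real.Gamma ((m : ℝ) + ν + 1))

noncomputable def bF (ν w : ℝ) : ℝ := ∑' m : ℕ, bT ν m w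

section basics
variable {ν w : ℝ}

lemma gamma_pos (hν : 0 ≤ ν) (m : ℕ) : 0 < Real.Gamma ((m : ℝ) + ν + 1) :=
  Real.Gamma_pos_of_pos (by positivity)

lemma fact_pos' (m : ℕ) : (0:ℝ) < (Nat.factorial m : ℝ) := by
  exact_mod_cast m.factorial_pos

lemma denom_pos (hν : 0 ≤ ν) (m : ℕ) :
    0 < (Nat.factorial m : ℝ) * Real.Gamma ((m : ℝ) + ν + 1) :=
  mul_pos (fact_pos' m) (gamma_pos hν m)

lemma gamma_ge (hν : 0 ≤ ν) (m : ℕ) :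
    (Nat.factorial m : ℝ) * Real.Gamma (ν + 1) ≤ Real.Gamma ((m : ℝ) + ν + 1) := by
  induction m with
  | zero => simp
  | succ n ih =>
    have h1 : ((n : ℝ) + ν + 1) ≠ 0 := by positivity
    have h2 : Real.Gamma ((↑(n+1) : ℝ) + ν + 1) = ((n:ℝ) + ν + 1) * Real.Gamma ((n:ℝ) + ν + 1) := by
      push_cast
      rw [show (n:ℝ) + 1 + ν + 1 = ((n:ℝ) + ν + 1) + 1 by ring, Real.Gamma_add_one h1]
    rw [h2]
    have hg := gamma_pos hν n
    have : (↑(Nat.factorial (n+1)) : ℝ) = ((n:ℝ)+1) * (Nat.factorial n : ℝ) := by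
      push_cast [Nat.factorial_succ]; ring
    rw [this]
    calc ((n:ℝ)+1) * (Nat.factorial n : ℝ) * Real.Gamma (ν+1)
        = ((n:ℝ)+1) * ((Nat.factorial n : ℝ) * Real.Gamma (ν+1)) := by ring
      _ ≤ ((n:ℝ)+1) * Real.Gamma ((n:ℝ)+ν+1) := by
          apply mul_le_mul_of_nonneg_left ih (by positivity)
      _ ≤ ((n:ℝ)+ν+1) * Real.Gamma ((n:ℝ)+ν+1) := by nlinarith

lemma bT_abs_le (hν : 0 ≤ ν) (m : ℕ) (w : ℝ) :
    |bT ν m w| ≤ (|w| ^ m / (Nat.factorial m : ℝ)) * (1 / Real.Gamma (ν + 1)) := by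
  have hg1 : 0 < Real.Gamma (ν + 1) := Real.Gamma_pos_of_pos (by positivity)
  have hden := denom_pos hν m
  have habs : |bT ν m w| = |w| ^ m / ((Nat.factorial m : ℝ) * Real.Gamma ((m:ℝ) + ν + 1)) := by
    rw [bT, abs_div, abs_pow, abs_of_pos hden]
  rw [habs, div_mul_div_comm, mul_one]
  apply div_le_div_of_nonneg_left (pow_nonneg (abs_nonneg w) m) (by positivity)
  calc (Nat.factorial m : ℝ) * Real.Gamma (ν+1)
      ≤ Real.Gamma ((m:ℝ) + ν + 1) := gamma_ge hν m
    _ ≤ (Nat.factorial m : ℝ) * Real.Gamma ((m:ℝ)+ν+1) := by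
        have h1 : (1:ℝ) ≤ (Nat.factorial m : ℝ) := by exact_mod_cast m.factorial_pos
        nlinarith [gamma_pos hν m]

lemma summable_bT (hν : 0 ≤ ν) (w : ℝ) : Summable (fun m => bT ν m w) := by
  apply Summable.of_abs
  apply Summable.of_nonneg_of_le (fun m => abs_nonneg _) (fun m => bT_abs_le hν m w)
  exact (Real.summable_pow_div_factorial |w|).mul_right _

lemma bT_nonneg (hν : 0 ≤ ν) (hw : 0 ≤ w) (m : ℕ) : 0 ≤ bT ν m w := by
  have := denom_pos hν m
  have : (0:ℝ) ≤ w ^ m := pow_nonneg hw m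
  unfold bT; positivity

lemma bT_zero (hν : 0 ≤ ν) (w : ℝ) : bT ν 0 w = 1 / Real.Gamma (ν + 1) := by
  simp [bT]

lemma bF_pos (hν : 0 ≤ ν) (hw : 0 ≤ w) : 0 < bF ν w := by
  have hg1 : 0 < Real.Gamma (ν + 1) := Real.Gamma_pos_of_pos (by positivity)
  refine Summable.tsum_pos (summable_bT hν w) (bT_nonneg hν hw) 0 ?_
  rw [bT_zero hν w]; positivity

lemma first_le_bF (hν : 0 ≤ ν) (hw : 0 ≤ w) : 1 / Real.Gamma (ν+1) ≤ bF ν w := by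
  rw [← bT_zero hν w]
  exact Summable.le_tsum (summable_bT hν w) 0 (fun m _ => bT_nonneg hν hw m)

lemma exp_eq_tsum (x : ℝ) : Real.exp x = ∑' m : ℕ, x ^ m / (Nat.factorial m : ℝ) := by
  rw [Real.exp_eq_exp_ℝ, NormedSpace.exp_eq_tsum_div]

lemma bF_le_exp (hν : 0 ≤ ν) (hw : 0 ≤ w) : bF ν w ≤ Real.exp w * (1 / Real.Gamma (ν+1)) := by
  have h := fun m => bT_abs_le hν m w
  calc bF ν w ≤ ∑' m : ℕ, (|w| ^ m / (Nat.factorial m : ℝ)) * (1 / Real.Gamma (ν + 1)) := by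
        apply Summable.tsum_le_tsum _ (summable_bT hν w)
          ((Real.summable_pow_div_factorial |w|).mul_right _)
        intro m
        exact le_trans (le_abs_self _) (h m)
    _ = Real.exp w * (1 / Real.Gamma (ν+1)) := by
        rw [tsum_mul_right, ← exp_eq_tsum, abs_of_nonneg hw]

end basics

section shift
variable {ν : ℝ}

lemma bT_succ_eq (hν : 0 ≤ ν) (w : ℝ) (m : ℕ) :
    ((m:ℝ)+1) * bT ν (m+1) w = w * bT (ν+1) m w := by
  unfold bT
  have hg : 0 < Real.Gamma ((m:ℝ) + (ν+1) + 1) := gamma_pos (by linarith) m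
  have hf := fact_pos' m
  push_cast [Nat.factorial_succ]
  rw [show (m:ℝ) + 1 + ν + 1 = (m:ℝ) + (ν+1) + 1 by ring]
  field_simp
  ring

lemma summable_mul_bT (hν : 0 ≤ ν) (w : ℝ) :
    Summable (fun m : ℕ => (m:ℝ) * bT ν m w) := by
  rw [← summable_nat_add_iff 1]
  have h : ∀ m : ℕ, w * bT (ν+1) m w = ((m+1:ℕ):ℝ) * bT ν (m+1) w := by
    intro m
    push_cast
    exact (bT_succ_eq hν w m).symm
  exact ((summable_bT (by linarith : (0:ℝ) ≤ ν + 1) w).mul_left w).congr h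

lemma tsum_mul_bT (hν : 0 ≤ ν) (w : ℝ) :
    ∑' m : ℕ, (m:ℝ) * bT ν m w = w * bF (ν+1) w := by
  rw [Summable.tsum_eq_zero_add (summable_mul_bT hν w)]
  have h : ∀ m : ℕ, ((m+1:ℕ):ℝ) * bT ν (m+1) w = w * bT (ν+1) m w := by
    intro m; push_cast; exact bT_succ_eq hν w m
  simp only [Nat.cast_zero, zero_mul, zero_add]
  rw [tsum_congr h, tsum_mul_left]
  rfl

lemma bT_rec (hν : 0 ≤ ν) (w : ℝ) (m : ℕ) :
    bT ν m w = (ν+1) * bT (ν+1) m w + (m:ℝ) * bT (ν+1) m w := by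
  unfold bT
  have h1 : ((m:ℝ) + ν + 1) ≠ 0 := by positivity
  have h2 : Real.Gamma ((m:ℝ) + (ν+1) + 1) = ((m:ℝ)+ν+1) * Real.Gamma ((m:ℝ)+ν+1) := by
    rw [show (m:ℝ) + (ν+1) + 1 = ((m:ℝ)+ν+1)+1 by ring, Real.Gamma_add_one h1]
  rw [h2]
  have hg := gamma_pos hν m
  have hf := fact_pos' m
  field_simp
  ring

lemma bF_rec (hν : 0 ≤ ν) (w : ℝ) :
    bF ν w = (ν+1) * bF (ν+1) w + w * bF (ν+2) w := by
  have h1 : (0:ℝ) ≤ ν + 1 := by linarith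
  have step1 : bF ν w = ∑' m : ℕ, ((ν+1) * bT (ν+1) m w + (m:ℝ) * bT (ν+1) m w) :=
    tsum_congr (bT_rec hν w)
  rw [step1, Summable.tsum_add ((summable_bT h1 w).mul_left _) (summable_mul_bT h1 w),
    tsum_mul_left, tsum_mul_bT h1 w, show ν + 1 + 1 = ν + 2 by ring]
  rfl

lemma hasDerivAt_bF (hν : 0 ≤ ν) {w : ℝ} (hw : 0 < w) :
    HasDerivAt (bF ν) (bF (ν+1) w) w := by
  set c : ℕ → ℝ := fun m => (Nat.factorial m : ℝ) * Real.Gamma ((m:ℝ)+ν+1) with hc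
  set R : ℝ := w + 1 with hR
  have hcpos : ∀ m, 0 < c m := fun m => denom_pos hν m
  have hu : Summable (fun m : ℕ => (m:ℝ) * R^(m-1) / c m) := by
    rw [← summable_nat_add_iff 1]
    have h : (fun m : ℕ => ((m+1:ℕ):ℝ) * R^((m+1)-1) / c (m+1)) = fun m : ℕ => bT (ν+1) m R := by
      funext m
      have := bT_succ_eq hν R m
      unfold bT at this ⊢
      have hgm : 0 < Real.Gamma ((m:ℝ) + (ν+1) + 1) := gamma_pos (by linarith) m
      have hfm := fact_pos' (m+1)
      rw [hc]
      simp only [Nat.add_sub_cancel]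
      push_cast [Nat.factorial_succ] at this ⊢
      rw [show (m:ℝ) + 1 + ν + 1 = (m:ℝ) + (ν+1) + 1 by ring]
      have hR0 : R ≠ 0 := by positivity
      field_simp
    rw [h]
    exact summable_bT (by linarith) R
  have key : HasDerivAt (fun y => ∑' m : ℕ, bT ν m y)
      (∑' m : ℕ, (m:ℝ) * w^(m-1) / c m) w := by
    apply hasDerivAt_tsum_of_isPreconnected hu Metric.isOpen_ball
      (convex_ball (0:ℝ) R).isPreconnected
      (g := fun m y => bT ν m y) (g' := fun m y => (m:ℝ) * y^(m-1) / c m)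
      (fun m y _ => (hasDerivAt_pow m y).div_const (c m))
      ?_ ?_ (summable_bT hν w) ?_
    · intro m y hy
      rw [Real.norm_eq_abs, abs_div, abs_of_pos (hcpos m), abs_mul, Nat.abs_cast, abs_pow]
      have hyR : |y| ≤ R := by
        have : dist y 0 < R := Metric.mem_ball.mp hy
        rw [Real.dist_eq, sub_zero] at this
        linarith
      gcongr
    · rw [Metric.mem_ball, Real.dist_eq, sub_zero]
      rw [abs_of_pos hw]; linarith
    · rw [Metric.mem_ball, Real.dist_eq, sub_zero]
      rw [abs_of_pos hw]; linarith
  have heq : (∑' m : ℕ, (m:ℝ) * w^(m-1) / c m) = bF (ν+1) w := by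
    have h : (fun m : ℕ => (m:ℝ) * w^(m-1) / c m) = fun m : ℕ => ((m:ℝ) * bT ν m w) / w := by
      funext m
      cases m with
      | zero => simp
      | succ k =>
        unfold bT
        simp only [Nat.add_sub_cancel]
        have hck := hcpos (k+1)
        rw [hc] at hck ⊢
        push_cast
        rw [eq_div_iff (by positivity : w ≠ 0)]
        field_simp
        ring
    rw [h, tsum_div_const, tsum_mul_bT hν w, mul_div_cancel_left₀ _ (by positivity : w ≠ 0)]
  rw [← heq]
  exact key

end shift

section link
variable {ν z : ℝ}

lemma besselI_eq (hν : 0 ≤ ν) (hz : 0 < z) :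
    besselI ν z = (z/2) ^ ν * bF ν ((z/2)^2) := by
  have h2 : (0:ℝ) < z/2 := by linarith
  unfold besselI bF
  rw [← tsum_mul_left]
  apply tsum_congr
  intro m
  unfold bT
  rw [show (2 * (m:ℝ) + ν) = ν + ((2*m : ℕ) : ℝ) by push_cast; ring,
    Real.rpow_add h2, Real.rpow_natCast, pow_mul]
  ring

lemma besselI_pos (hν : 0 ≤ ν) (hz : 0 < z) : 0 < besselI ν z := by
  rw [besselI_eq hν hz]
  have h2 : (0:ℝ) < z/2 := by linarith
  exact mul_pos (Real.rpow_pos_of_pos h2 ν) (bF_pos hν (by positivity))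

lemma besselI_rec (hν : 0 ≤ ν) (hz : 0 < z) :
    besselI ν z = (2*(ν+1)/z) * besselI (ν+1) z + besselI (ν+2) z := by
  have h2 : (0:ℝ) < z/2 := by linarith
  have h20 : (z/2 : ℝ) ≠ 0 := ne_of_gt h2
  rw [besselI_eq hν hz, besselI_eq (by linarith) hz, besselI_eq (by linarith) hz,
    bF_rec hν ((z/2)^2),
    show (ν+1 : ℝ) = ν + (1:ℕ) by norm_num,
    show (ν+2 : ℝ) = ν + (2:ℕ) by norm_num,
    Real.rpow_add_natCast h20 ν 1, Real.rpow_add_natCast h20 ν 2]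
  have hz0 : z ≠ 0 := ne_of_gt hz
  field_simp

lemma hasDerivAt_besselI (hν : 0 ≤ ν) (hz : 0 < z) :
    HasDerivAt (besselI ν) (besselI (ν+1) z + (ν/z) * besselI ν z) z := by
  have h2 : (0:ℝ) < z/2 := by linarith
  have h20 : (z/2 : ℝ) ≠ 0 := ne_of_gt h2
  have hz0 : z ≠ 0 := ne_of_gt hz
  -- derivative of y ↦ (y/2)^ν
  have h1 : HasDerivAt (fun y : ℝ => (y/2) ^ ν) (ν * (z/2) ^ (ν - 1) * (1/2)) z := by
    have hr : HasDerivAt (fun x : ℝ => x ^ ν) (ν * (z/2) ^ (ν-1)) (z/2) :=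
      Real.hasDerivAt_rpow_const (Or.inl h20)
    have hdiv : HasDerivAt (fun y : ℝ => y / 2) (1/2) z := by
      simpa using (hasDerivAt_id z).div_const 2
    exact hr.comp z hdiv
  -- derivative of y ↦ bF ν ((y/2)^2)
  have hw : HasDerivAt (fun y : ℝ => ((y/2)^2 : ℝ)) (z/2) z := by
    have hdiv : HasDerivAt (fun y : ℝ => y / 2) (1/2) z := by
      simpa using (hasDerivAt_id z).div_const 2
    have := hdiv.fun_pow 2
    simpa using this.congr_deriv (by ring_nf)
  have hbFcomp : HasDerivAt (fun y : ℝ => bF ν ((y/2)^2)) (bF (ν+1) ((z/2)^2) * (z/2)) z :=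
    by have := (hasDerivAt_bF hν (by positivity : (0:ℝ) < (z/2)^2)).comp z hw; exact this
  have hG := h1.mul hbFcomp
  have hp1 : (z/2)^(ν+1) = (z/2)^ν * (z/2) := Real.rpow_add_one h20 ν
  have hp2 : (z/2)^ν = (z/2)^(ν-1) * (z/2) := by
    conv_lhs => rw [show ν = (ν-1)+1 by ring]
    exact Real.rpow_add_one h20 (ν-1)
  have hval : ν * (z/2)^(ν-1) * (1/2) * bF ν ((z/2)^2) + (z/2)^ν * (bF (ν+1) ((z/2)^2) * (z/2))
      = besselI (ν+1) z + (ν/z) * besselI ν z := by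
    rw [besselI_eq (by linarith : (0:ℝ) ≤ ν+1) hz, besselI_eq hν hz, hp1, hp2]
    field_simp
    ring
  rw [← hval]
  apply hG.congr_of_eventuallyEq
  filter_upwards [Ioi_mem_nhds hz] with y hy
  exact besselI_eq hν hy

lemma hasDerivAt_besselI' (hν : 0 ≤ ν) (hz : 0 < z) :
    HasDerivAt (besselI (ν+1)) (besselI ν z - ((ν+1)/z) * besselI (ν+1) z) z := by
  have h := hasDerivAt_besselI (by linarith : (0:ℝ) ≤ ν+1) hz
  rw [show ν+1+1 = ν+2 by ring] at h
  convert h using 1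
  rw [besselI_rec hν hz]
  field_simp
  ring

end link

section diffpos
variable {ν : ℝ}

lemma exp_quarter_lt_two : Real.exp (1/4 : ℝ) < 2 := by
  by_contra h
  push_neg at h
  have h4 : Real.exp (1/4 : ℝ) ^ (4:ℕ) = Real.exp 1 := by
    rw [← Real.exp_nat_mul]; norm_num
  have : (2:ℝ)^(4:ℕ) ≤ Real.exp (1/4 : ℝ) ^ (4:ℕ) := by
    apply pow_le_pow_left₀ (by norm_num) h
  rw [h4] at this
  have := Real.exp_one_lt_d9
  norm_num at this ⊢
  linarith

lemma besselI_succ_lt_small (hν : 0 ≤ ν) {t : ℝ} (ht0 : 0 < t) (ht1 : t ≤ 1) :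
    besselI (ν+1) t < besselI ν t := by
  have h2 : (0:ℝ) < t/2 := by linarith
  have h20 : (t/2 : ℝ) ≠ 0 := ne_of_gt h2
  set w : ℝ := (t/2)^2 with hwdef
  have hw0 : 0 ≤ w := by positivity
  set G := Real.Gamma (ν+1) with hGdef
  have hg1 : 0 < G := Real.Gamma_pos_of_pos (by linarith)
  have hG2 : Real.Gamma ((ν+1)+1) = (ν+1) * G := Real.Gamma_add_one (by linarith)
  set A : ℝ := (t/2)^ν with hAdef
  have hA : 0 < A := Real.rpow_pos_of_pos h2 ν
  have hI1 : besselI (ν+1) t = A * (t/2) * bF (ν+1) w := by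
    rw [besselI_eq (by linarith : (0:ℝ) ≤ ν+1) ht0, Real.rpow_add_one h20]
  have hI0 : besselI ν t = A * bF ν w := besselI_eq hν ht0
  have hB2' : bF (ν+1) w * ((ν+1)*G) ≤ Real.exp w := by
    have h := bF_le_exp (by linarith : (0:ℝ) ≤ ν+1) hw0
    rw [hG2, mul_one_div, le_div_iff₀ (by positivity)] at h
    exact h
  have hbF' : 1 ≤ G * bF ν w := by
    have h := first_le_bF hν hw0
    rw [div_le_iff₀ hg1] at h
    linarith [h]
  have hexp : Real.exp w < 2 := by
    have hw4 : w ≤ 1/4 := by rw [hwdef]; nlinarith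
    calc Real.exp w ≤ Real.exp (1/4) := Real.exp_le_exp.mpr hw4
      _ < 2 := exp_quarter_lt_two
  have h3 : (t/2) * Real.exp w < ν + 1 := by nlinarith [Real.exp_pos w]
  have hbFn1 : 0 < bF (ν+1) w := bF_pos (by linarith) hw0
  have hbFn : 0 < bF ν w := bF_pos hν hw0
  have key : (t/2) * bF (ν+1) w < bF ν w := by
    have step1 : (t/2) * bF (ν+1) w * ((ν+1)*G) ≤ (t/2) * Real.exp w := by
      calc (t/2) * bF (ν+1) w * ((ν+1)*G) = (t/2) * (bF (ν+1) w * ((ν+1)*G)) := by ring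
        _ ≤ (t/2) * Real.exp w := by
            apply mul_le_mul_of_nonneg_left hB2' (by positivity)
    have step3 : (ν+1 : ℝ) ≤ bF ν w * ((ν+1)*G) := by nlinarith
    have : (t/2) * bF (ν+1) w * ((ν+1)*G) < bF ν w * ((ν+1)*G) := by linarith
    exact lt_of_mul_lt_mul_right this (by positivity)
  rw [hI1, hI0, mul_assoc]
  exact mul_lt_mul_of_pos_left key hA

lemma besselI_succ_lt (hν : 0 ≤ ν) {z : ℝ} (hz : 0 < z) :
    besselI (ν+1) z < besselI ν z := by
  rcases le_or_gt z 1 with h1 | h1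
  · exact besselI_succ_lt_small hν hz h1
  · -- use monotonicity of exp y * (I_ν y - I_{ν+1} y) on [1, z]
    set W : ℝ → ℝ := fun y => Real.exp y * (besselI ν y - besselI (ν+1) y) with hWdef
    have hW : ∀ y : ℝ, 0 < y → HasDerivAt W
        (Real.exp y * ((ν/y) * besselI ν y + ((ν+1)/y) * besselI (ν+1) y)) y := by
      intro y hy
      have h := (Real.hasDerivAt_exp y).mul
        ((hasDerivAt_besselI hν hy).sub (hasDerivAt_besselI' hν hy))
      exact h.congr_deriv (by simp only [Pi.sub_apply]; ring)
    have hmono : MonotoneOn W (Set.Ici (1:ℝ)) := by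
      apply monotoneOn_of_deriv_nonneg (convex_Ici 1)
      · intro y hy
        exact (hW y (by exact lt_of_lt_of_le one_pos hy)).continuousAt.continuousWithinAt
      · intro y hy
        rw [interior_Ici] at hy
        exact ((hW y (by linarith [Set.mem_Ioi.mp hy])).differentiableAt).differentiableWithinAt
      · intro y hy
        rw [interior_Ici] at hy
        have hy0 : 0 < y := by linarith [Set.mem_Ioi.mp hy]
        rw [(hW y hy0).deriv]
        have hp0 := besselI_pos hν hy0
        have hp1 := besselI_pos (by linarith : (0:ℝ) ≤ ν+1) hy0
        have : 0 ≤ ν/y := by positivity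
        have : 0 ≤ (ν+1)/y := by positivity
        positivity
    have hW1 : 0 < W 1 := by
      have := besselI_succ_lt_small hν one_pos le_rfl
      have := Real.exp_pos 1
      rw [hWdef]
      dsimp only
      nlinarith
    have hWz : W 1 ≤ W z := hmono (Set.mem_Ici.mpr le_rfl) (Set.mem_Ici.mpr (le_of_lt h1)) (le_of_lt h1)
    have : 0 < W z := lt_of_lt_of_le hW1 hWz
    rw [hWdef] at this
    dsimp only at this
    nlinarith [Real.exp_pos z]

end diffpos

section barrier

lemma stay_below {f f' : ℝ → ℝ} {a c : ℝ}
    (hf : ∀ z ∈ Set.Ici a, HasDerivAt f (f' z) z)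
    (hd : ∀ z ∈ Set.Ici a, c ≤ f z → f' z < 0)
    (ha : f a ≤ c) : ∀ z ∈ Set.Ici a, f z ≤ c := by
  intro t ht
  by_contra hlt
  push_neg at hlt
  have hat : a < t := by
    rcases eq_or_lt_of_le (Set.mem_Ici.mp ht) with h | h
    · exfalso; rw [← h] at hlt; linarith
    · exact h
  set S := {u : ℝ | u ∈ Set.Icc a t ∧ f u ≤ c} with hSdef
  have hcont : ContinuousOn f (Set.Icc a t) := fun u hu =>
    (hf u (Set.mem_Ici.mpr hu.1)).continuousAt.continuousWithinAt
  have hclosed : IsClosed S := by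
    have hSeq : S = Set.Icc a t ∩ f ⁻¹' (Set.Iic c) := by
      ext u
      simp only [hSdef, Set.mem_setOf_eq, Set.mem_inter_iff, Set.mem_preimage, Set.mem_Iic]
    rw [hSeq]
    exact hcont.preimage_isClosed_of_isClosed isClosed_Icc isClosed_Iic
  have hne : S.Nonempty := ⟨a, ⟨Set.left_mem_Icc.mpr (le_of_lt hat), ha⟩⟩
  have hbdd : BddAbove S := ⟨t, fun u hu => hu.1.2⟩
  set s := sSup S with hsdef
  have hsS : s ∈ S := hclosed.csSup_mem hne hbdd
  have hsa : a ≤ s := hsS.1.1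
  have hsc : f s ≤ c := hsS.2
  have hst : s < t := lt_of_le_of_ne hsS.1.2 (by intro h; rw [h] at hsc; linarith)
  have hgt : ∀ u ∈ Set.Ioc s t, c ≤ f u := by
    intro u hu
    by_contra hcu; push_neg at hcu
    have huS : u ∈ S := ⟨⟨le_trans hsa (le_of_lt hu.1), hu.2⟩, le_of_lt hcu⟩
    have := le_csSup hbdd huS
    linarith [hu.1]
  have hanti : AntitoneOn f (Set.Icc s t) := by
    apply antitoneOn_of_deriv_nonpos (convex_Icc s t)
    · exact hcont.mono (Set.Icc_subset_Icc hsa le_rfl)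
    · intro u hu
      rw [interior_Icc] at hu
      exact (hf u (Set.mem_Ici.mpr (le_trans hsa (le_of_lt hu.1)))).differentiableAt.differentiableWithinAt
    · intro u hu
      rw [interior_Icc] at hu
      have hu' : u ∈ Set.Ici a := Set.mem_Ici.mpr (le_trans hsa (le_of_lt hu.1))
      rw [(hf u hu').deriv]
      exact le_of_lt (hd u hu' (hgt u ⟨hu.1, le_of_lt hu.2⟩))
  have := hanti (Set.left_mem_Icc.mpr (le_of_lt hst)) (Set.right_mem_Icc.mpr (le_of_lt hst))
    (le_of_lt hst)
  linarith

lemma stay_above {f f' : ℝ → ℝ} {a c : ℝ}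
    (hf : ∀ z ∈ Set.Ici a, HasDerivAt f (f' z) z)
    (hd : ∀ z ∈ Set.Ici a, f z ≤ c → 0 < f' z)
    (ha : c ≤ f a) : ∀ z ∈ Set.Ici a, c ≤ f z := by
  have key := stay_below (f := fun z => -f z) (f' := fun z => -f' z) (a := a) (c := -c)
    (fun z hz => (hf z hz).neg)
    (fun z hz hcz => by
      show -f' z < 0
      have hfz : f z ≤ c := by
        have : -c ≤ -f z := hcz
        linarith
      linarith [hd z hz hfz])
    (by show -f a ≤ -c; linarith)
  intro z hz
  have hkz := key z hz
  linarith

lemma exits_below {f f' : ℝ → ℝ} {a c M ε : ℝ} (hε : 0 < ε)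
    (hf : ∀ z ∈ Set.Ici a, HasDerivAt f (f' z) z)
    (hd : ∀ z ∈ Set.Ici a, c ≤ f z → f' z ≤ -ε)
    (hM : ∀ z ∈ Set.Ici a, f z ≤ M) :
    ∃ b, a ≤ b ∧ f b < c := by
  by_contra h
  push_neg at h
  have hca : c ≤ f a := h a le_rfl
  have hMc : c ≤ M := le_trans hca (hM a (Set.mem_Ici.mpr le_rfl))
  have hg : ∀ u ∈ Set.Ici a, HasDerivAt (fun z => f z + ε * z) (f' u + ε) u := by
    intro u hu
    have h1 : HasDerivAt (fun z : ℝ => ε * z) ε u := by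
      simpa using (hasDerivAt_id u).const_mul ε
    exact (hf u hu).add h1
  have hanti : AntitoneOn (fun z => f z + ε * z) (Set.Ici a) := by
    apply antitoneOn_of_deriv_nonpos (convex_Ici a)
    · exact fun u hu => (hg u hu).continuousAt.continuousWithinAt
    · intro u hu
      rw [interior_Ici] at hu
      exact (hg u (Set.mem_Ici.mpr (le_of_lt hu))).differentiableAt.differentiableWithinAt
    · intro u hu
      rw [interior_Ici] at hu
      have hu' : u ∈ Set.Ici a := Set.mem_Ici.mpr (le_of_lt hu)
      rw [(hg u hu').deriv]
      linarith [hd u hu' (h u hu')]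
  set T := a + (M - c + 1)/ε with hT
  have haT : a ≤ T := by
    have h0 : 0 < (M - c + 1)/ε := div_pos (by linarith) hε
    rw [hT]
    linarith
  have hint := hanti (Set.mem_Ici.mpr le_rfl) (Set.mem_Ici.mpr haT) haT
  have h1 : c ≤ f T := h T haT
  have h2 : f a ≤ M := hM a (Set.mem_Ici.mpr le_rfl)
  have h3 : ε * ((M - c + 1)/ε) = M - c + 1 := by field_simp
  have : ε * T = ε * a + (M - c + 1) := by rw [hT]; rw [mul_add, h3]
  simp only at hint
  linarith

lemma exits_above {f f' : ℝ → ℝ} {a c ε : ℝ} (hε : 0 < ε)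
    (hf : ∀ z ∈ Set.Ici a, HasDerivAt f (f' z) z)
    (hd : ∀ z ∈ Set.Ici a, f z ≤ c → ε ≤ f' z)
    (h0 : ∀ z ∈ Set.Ici a, 0 ≤ f z) :
    ∃ b, a ≤ b ∧ c < f b := by
  have key := exits_below (f := fun z => -f z) (f' := fun z => -f' z) (a := a) (c := -c)
    (M := 0) hε
    (fun z hz => (hf z hz).neg)
    (fun z hz hcz => by
      show -f' z ≤ -ε
      have hfz : f z ≤ c := by
        have : -c ≤ -f z := hcz
        linarith
      linarith [hd z hz hfz])
    (fun z hz => by show -f z ≤ 0; linarith [h0 z hz])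
  obtain ⟨b, hab, hb⟩ := key
  exact ⟨b, hab, by linarith⟩

end barrier

section main
variable {α : ℝ}

lemma H_pos (hα : 0 ≤ α) {z : ℝ} (hz : 0 < z) :
    0 < z * (1 - besselI (α+1) z / besselI α z) := by
  have hA := besselI_pos hα hz
  have hBA := besselI_succ_lt hα hz
  have : besselI (α+1) z / besselI α z < 1 := (div_lt_one hA).mpr hBA
  nlinarith

lemma H_le (hα : 0 ≤ α) {z : ℝ} (hz : 0 < z) :
    z * (1 - besselI (α+1) z / besselI α z) ≤ 2*α + 2 := by
  have hA := besselI_pos hα hz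
  have hB := besselI_pos (by linarith : (0:ℝ) ≤ α+1) hz
  have hBA := besselI_succ_lt hα hz
  have hCB : besselI (α+2) z < besselI (α+1) z := by
    have := besselI_succ_lt (by linarith : (0:ℝ) ≤ α+1) hz
    rwa [show α+1+1 = α+2 by ring] at this
  have hzA : z * besselI α z
      = 2*(α+1) * besselI (α+1) z + z * besselI (α+2) z := by
    rw [besselI_rec hα hz]
    field_simp
  have key : z * besselI α z - z * besselI (α+1) z ≤ (2*α+2) * besselI α z := by
    nlinarith [hzA, mul_lt_mul_of_pos_left hCB hz,
      mul_lt_mul_of_pos_left hBA (show (0:ℝ) < 2*α+2 by linarith)]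
  have heq : z * (1 - besselI (α+1) z / besselI α z)
      = (z * besselI α z - z * besselI (α+1) z) / besselI α z := by
    field_simp
  rw [heq, div_le_iff₀ hA]
  linarith [key]

lemma hasDerivAt_H (hα : 0 ≤ α) {z : ℝ} (hz : 0 < z) :
    HasDerivAt (fun y : ℝ => y * (1 - besselI (α+1) y / besselI α y))
      (2*α+1 - 2*(z * (1 - besselI (α+1) z / besselI α z))
        + (z * (1 - besselI (α+1) z / besselI α z))
          * ((z * (1 - besselI (α+1) z / besselI α z)) - 2*α)/z) z := by
  have hA := besselI_pos hα hz
  have hA' := hasDerivAt_besselI hα hz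
  have hB' := hasDerivAt_besselI' hα hz
  have hr := hB'.div hA' (ne_of_gt hA)
  have hh := (hasDerivAt_id z).mul ((hasDerivAt_const z (1:ℝ)).sub hr)
  apply hh.congr_deriv
  have hz0 : z ≠ 0 := ne_of_gt hz
  have hA0 : besselI α z ≠ 0 := ne_of_gt hA
  simp only [id_eq, Pi.sub_apply, Pi.div_apply]
  field_simp
  ring

lemma H_tendsto (hα : 0 ≤ α) :
    Tendsto (fun z : ℝ => z * (1 - besselI (α+1) z / besselI α z))
      atTop (nhds (α + 1/2)) := by
  set H : ℝ → ℝ := fun z => z * (1 - besselI (α+1) z / besselI α z) with hHdef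
  set F : ℝ → ℝ := fun z => 2*α+1 - 2*(H z) + (H z) * ((H z) - 2*α)/z with hFdef
  rw [Metric.tendsto_atTop]
  intro ε hε
  set ε' : ℝ := min (ε/2) (1/2) with hε'def
  have hε'pos : 0 < ε' := lt_min (by linarith) one_half_pos
  have hε'le : ε' ≤ ε/2 := min_le_left _ _
  set C : ℝ := (2*α+2)*(4*α+2) with hCdef
  have hCpos : 0 < C := by nlinarith
  set a : ℝ := max 1 ((C+1)/ε') with hadef
  have ha1 : (1:ℝ) ≤ a := le_max_left _ _
  have hzpos : ∀ z ∈ Set.Ici a, 0 < z := fun z hz => lt_of_lt_of_le one_pos (le_trans ha1 hz)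
  have hf : ∀ z ∈ Set.Ici a, HasDerivAt H (F z) z := fun z hz => hasDerivAt_H hα (hzpos z hz)
  have hHb : ∀ z ∈ Set.Ici a, 0 < H z ∧ H z ≤ 2*α+2 :=
    fun z hz => ⟨H_pos hα (hzpos z hz), H_le hα (hzpos z hz)⟩
  have habs : ∀ z ∈ Set.Ici a, |H z * ((H z) - 2*α)/z| ≤ ε' := by
    intro z hz
    have h1 := hHb z hz
    have h2 := hzpos z hz
    have hCz : |H z * ((H z) - 2*α)| ≤ C := by
      rw [abs_mul]
      have e1 : |H z| ≤ 2*α+2 := by rw [abs_of_pos h1.1]; exact h1.2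
      have e2 : |H z - 2*α| ≤ 4*α+2 := by
        rw [abs_le]; constructor <;> nlinarith [h1.1, h1.2]
      calc |H z| * |H z - 2*α| ≤ (2*α+2) * (4*α+2) := by
            apply mul_le_mul e1 e2 (abs_nonneg _) (by linarith)
        _ = C := rfl
    rw [abs_div, abs_of_pos h2, div_le_iff₀ h2]
    have hza : (C+1)/ε' ≤ z := le_trans (le_max_right _ _) hz
    have : C + 1 ≤ ε' * z := by
      rw [← div_le_iff₀' hε'pos]
      exact hza
    linarith
  -- upper barrier
  have hup : ∃ b1, a ≤ b1 ∧ ∀ z ∈ Set.Ici b1, H z ≤ α + 1/2 + ε' := by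
    have hd : ∀ z ∈ Set.Ici a, α + 1/2 + ε' ≤ H z → F z ≤ -ε' := by
      intro z hz hc
      have := habs z hz
      have h2 := abs_le.mp this
      show 2*α+1 - 2*(H z) + (H z) * ((H z) - 2*α)/z ≤ -ε'
      linarith [h2.2]
    obtain ⟨b1, hab1, hb1⟩ := exits_below hε'pos hf hd (fun z hz => (hHb z hz).2)
    refine ⟨b1, hab1, ?_⟩
    apply stay_below (f' := F)
      (fun z hz => hf z (le_trans hab1 hz))
      (fun z hz hc => lt_of_le_of_lt (hd z (le_trans hab1 hz) hc) (by linarith))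
      (le_of_lt hb1)
  -- lower barrier
  have hlow : ∃ b2, a ≤ b2 ∧ ∀ z ∈ Set.Ici b2, α + 1/2 - ε' ≤ H z := by
    have hd : ∀ z ∈ Set.Ici a, H z ≤ α + 1/2 - ε' → ε' ≤ F z := by
      intro z hz hc
      have := habs z hz
      have h2 := abs_le.mp this
      show ε' ≤ 2*α+1 - 2*(H z) + (H z) * ((H z) - 2*α)/z
      linarith [h2.1]
    obtain ⟨b2, hab2, hb2⟩ := exits_above hε'pos hf hd (fun z hz => le_of_lt (hHb z hz).1)
    refine ⟨b2, hab2, ?_⟩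
    apply stay_above (f' := F)
      (fun z hz => hf z (le_trans hab2 hz))
      (fun z hz hc => lt_of_lt_of_le hε'pos (hd z (le_trans hab2 hz) hc))
      (le_of_lt hb2)
  obtain ⟨b1, hab1, hb1⟩ := hup
  obtain ⟨b2, hab2, hb2⟩ := hlow
  refine ⟨max b1 b2, ?_⟩
  intro z hz
  have hz1 : z ∈ Set.Ici b1 := Set.mem_Ici.mpr (le_trans (le_max_left _ _) hz)
  have hz2 : z ∈ Set.Ici b2 := Set.mem_Ici.mpr (le_trans (le_max_right _ _) hz)
  have e1 := hb1 z hz1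
  have e2 := hb2 z hz2
  rw [Real.dist_eq]
  have habs2 : |H z - (α + 1/2)| ≤ ε' := abs_le.mpr ⟨by linarith, by linarith⟩
  calc |H z - (α + 1/2)| ≤ ε' := habs2
    _ ≤ ε/2 := hε'le
    _ < ε := by linarith

end main


/-- For `α ≥ 0` and `b > 0`,
`x (1 − I_{α+1}(bx)/I_α(bx)) → (2α+1)/(2b)` as `x → ∞`. -/
theorem besselI_ratio_limit (α b : ℝ) (hα : 0 ≤ α) (hb : 0 < b) :
    Tendsto (fun x : ℝ => x * (1 - besselI (α + 1) (b * x) / besselI α (b * x)))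
      atTop (nhds ((2 * α + 1) / (2 * b))) := by
  have hmain := H_tendsto hα
  have hcomp : Tendsto (fun x : ℝ => b * x) atTop atTop :=
    Tendsto.const_mul_atTop hb tendsto_id
  have h2 := (hmain.comp hcomp).div_const b
  have heq : (fun x : ℝ => ((b*x) * (1 - besselI (α+1) (b*x) / besselI α (b*x)))/b)
      = fun x : ℝ => x * (1 - besselI (α+1) (b*x) / besselI α (b*x)) := by
    funext x
    rw [mul_comm b x, mul_assoc, mul_div_assoc, mul_div_cancel_left₀ _ (ne_of_gt hb)]
  have hval : (α + 1/2)/b = (2*α+1)/(2*b) := by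
    rw [div_eq_div_iff (ne_of_gt hb) (by positivity)]
    ring
  rw [← hval]
  have h2' : Tendsto (fun x : ℝ => ((b*x) * (1 - besselI (α+1) (b*x) / besselI α (b*x)))/b)
      atTop (nhds ((α + 1/2)/b)) := h2
  rwa [heq] at h2'
end

section
/- Let α ≥ 0 and 0 < b₀ ≤ b₁ < ∞, and for b > 0, x > 0, w ≥ 0 define R(b,x,w) := 1 − √(1+w) · e^{−bwx} · I_α(bx(1+w))/I_α(bx). Then there exists a constant C < ∞, depending only on α, b₀ and b₁, such that for all b ∈ [b₀, b₁] and all x > 0: (i) if bx ≥ 1 then |R(b,x,w)| ≤ C · min(w,1)/(bx) for all w ≥ 0; and (ii) |R(b,x,w)| ≤ C·w for all w ∈ [0,1]. -/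
open Real Set Filter Topology

/-- The remainder `R(b,x,w) = 1 − √(1+w) e^{−bwx} I_α(bx(1+w))/I_α(bx)`. -/
noncomputable def besselRemainder (α b x w : ℝ) : ℝ :=
  1 - Real.sqrt (1 + w) * Real.exp (-(b * w * x)) * besselI α (b * x * (1 + w)) / besselI α (b * x)

namespace BesselAux

/-- the `m`-th term of the Bessel series -/
noncomputable def bterm (ν : ℝ) (m : ℕ) (z : ℝ) : ℝ :=
  (z / 2) ^ (2 * (m : ℝ) + ν) / ((Nat.factorial m : ℝ) * Real.Gamma ((m : ℝ) + ν + 1))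

lemma besselI_eq (ν z : ℝ) : besselI ν z = ∑' m, bterm ν m z := rfl

lemma gamma_fac_pos (ν : ℝ) (hν : 0 ≤ ν) (m : ℕ) :
    0 < (Nat.factorial m : ℝ) * Real.Gamma ((m : ℝ) + ν + 1) := by
  apply mul_pos (by exact_mod_cast m.factorial_pos)
  exact Real.Gamma_pos_of_pos (by positivity)

lemma bterm_pos (ν : ℝ) (hν : 0 ≤ ν) (m : ℕ) {z : ℝ} (hz : 0 < z) :
    0 < bterm ν m z := by
  have := gamma_fac_pos ν hν m
  have h2 : (0:ℝ) < z / 2 := by linarith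
  exact div_pos (Real.rpow_pos_of_pos h2 _) this

lemma bterm_up (ν : ℝ) (hν : 0 ≤ ν) (m : ℕ) {z : ℝ} (hz : 0 < z) :
    bterm (ν + 1) m z = bterm ν m z * ((z / 2) / ((m : ℝ) + ν + 1)) := by
  have h2 : (0:ℝ) < z / 2 := by linarith
  have hmν : (0:ℝ) < (m : ℝ) + ν + 1 := by positivity
  have hexp : 2 * (m : ℝ) + (ν + 1) = (2 * (m : ℝ) + ν) + 1 := by ring
  have hpow : (z/2) ^ (2 * (m : ℝ) + (ν+1)) = (z/2) ^ (2 * (m : ℝ) + ν) * (z/2) := by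
    rw [hexp, Real.rpow_add_one h2.ne']
  have hΓ : Real.Gamma ((m : ℝ) + (ν+1) + 1) = ((m : ℝ) + ν + 1) * Real.Gamma ((m : ℝ) + ν + 1) := by
    have : (m : ℝ) + (ν+1) + 1 = ((m : ℝ) + ν + 1) + 1 := by ring
    rw [this, Real.Gamma_add_one hmν.ne']
  have hfac := gamma_fac_pos ν hν m
  unfold bterm
  rw [hpow, hΓ]
  field_simp

lemma bterm_succ (ν : ℝ) (hν : 0 ≤ ν) (m : ℕ) {z : ℝ} (hz : 0 < z) :
    bterm ν (m + 1) z = bterm ν m z * ((z/2)^2 / (((m : ℝ) + 1) * ((m : ℝ) + ν + 1))) := by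
  have h2 : (0:ℝ) < z / 2 := by linarith
  have hmν : (0:ℝ) < (m : ℝ) + ν + 1 := by positivity
  have hexp : 2 * ((m : ℝ) + 1) + ν = ((2 * (m : ℝ) + ν) + 1) + 1 := by ring
  have hpow : (z/2) ^ (2 * (((m : ℕ) + 1 : ℕ) : ℝ) + ν) = (z/2) ^ (2 * (m : ℝ) + ν) * (z/2)^2 := by
    push_cast
    rw [hexp, Real.rpow_add_one h2.ne', Real.rpow_add_one h2.ne']
    ring
  have hΓ : Real.Gamma ((((m : ℕ) + 1 : ℕ) : ℝ) + ν + 1)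
      = ((m : ℝ) + ν + 1) * Real.Gamma ((m : ℝ) + ν + 1) := by
    push_cast
    have : (m : ℝ) + 1 + ν + 1 = ((m : ℝ) + ν + 1) + 1 := by ring
    rw [this, Real.Gamma_add_one hmν.ne']
  have hfac : ((Nat.factorial (m+1) : ℕ) : ℝ) = ((m : ℝ) + 1) * (Nat.factorial m : ℝ) := by
    rw [Nat.factorial_succ]; push_cast; ring
  have hfacpos := gamma_fac_pos ν hν m
  unfold bterm
  rw [hpow, hΓ, hfac]
  field_simp

lemma summable_bterm (ν : ℝ) (hν : 0 ≤ ν) {z : ℝ} (hz : 0 < z) :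
    Summable (fun m => bterm ν m z) := by
  apply summable_of_ratio_norm_eventually_le (r := 1/2) (by norm_num)
  have h2 : (0:ℝ) < z / 2 := by linarith
  filter_upwards [eventually_atTop.2 ⟨⌈2 * (z/2)^2⌉₊, fun n hn => hn⟩] with m hm
  rw [Real.norm_eq_abs, Real.norm_eq_abs, abs_of_pos (bterm_pos ν hν _ hz),
    abs_of_pos (bterm_pos ν hν _ hz), bterm_succ ν hν m hz]
  have hb := bterm_pos ν hν m hz
  have hm1 : (0:ℝ) < (m:ℝ) + 1 := by positivity
  have hmν : (0:ℝ) < (m:ℝ) + ν + 1 := by positivity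
  have hceil : 2 * (z/2)^2 ≤ (m : ℝ) + 1 := by
    calc 2 * (z/2)^2 ≤ (⌈2 * (z/2)^2⌉₊ : ℝ) := Nat.le_ceil _
    _ ≤ (m : ℝ) := by exact_mod_cast hm
    _ ≤ (m : ℝ) + 1 := by linarith
  have hkey : (z/2)^2 / (((m : ℝ) + 1) * ((m : ℝ) + ν + 1)) ≤ 1/2 := by
    rw [div_le_iff₀ (by positivity)]
    have h1 : (1:ℝ) ≤ (m:ℝ) + ν + 1 := by linarith
    nlinarith [sq_nonneg (z/2)]
  calc bterm ν m z * ((z/2)^2 / (((m : ℝ) + 1) * ((m : ℝ) + ν + 1)))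
      ≤ bterm ν m z * (1/2) := by
        apply mul_le_mul_of_nonneg_left hkey hb.le
    _ = 1/2 * bterm ν m z := by ring

lemma besselI_pos (ν : ℝ) (hν : 0 ≤ ν) {z : ℝ} (hz : 0 < z) : 0 < besselI ν z := by
  rw [besselI_eq]
  exact (summable_bterm ν hν hz).tsum_pos (fun m => (bterm_pos ν hν m hz).le) 0
    (bterm_pos ν hν 0 hz)


/-- pointwise derivative of a term -/
lemma bterm_hasDerivAt (ν : ℝ) (hν : 0 ≤ ν) (m : ℕ) {t : ℝ} (ht : 0 < t) :
    HasDerivAt (fun x => bterm ν m x) ((2 * (m:ℝ) + ν) / t * bterm ν m t) t := by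
  set p : ℝ := 2 * (m:ℝ) + ν with hp
  have h2 : (0:ℝ) < t / 2 := by linarith
  have hinner : HasDerivAt (fun x : ℝ => x / 2) (1/2) t := by
    simpa using (hasDerivAt_id t).div_const 2
  have houter : HasDerivAt (fun y : ℝ => y ^ p) (p * (t/2) ^ (p - 1)) (t/2) :=
    Real.hasDerivAt_rpow_const (Or.inl h2.ne')
  have hcomp : HasDerivAt (fun x : ℝ => (x/2) ^ p) (p * (t/2) ^ (p-1) * (1/2)) t :=
    by have := houter.comp t hinner; exact this
  have hdiv := hcomp.div_const ((Nat.factorial m : ℝ) * Real.Gamma ((m : ℝ) + ν + 1))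
  refine (hdiv).congr_deriv (Eq.symm ?_)
  have hpow : (t/2) ^ p = (t/2) ^ (p - 1) * (t/2) := by
    nth_rewrite 1 [show p = (p - 1) + 1 by ring]
    rw [Real.rpow_add_one h2.ne']
  have hD := gamma_fac_pos ν hν m
  unfold bterm
  rw [hpow]
  field_simp [ht.ne', hD.ne']

/-- the shifted identity : `(2(m+1)/t) * bterm ν (m+1) t = bterm (ν+1) m t` -/
lemma bterm_shift (ν : ℝ) (hν : 0 ≤ ν) (m : ℕ) {t : ℝ} (ht : 0 < t) :
    2 * ((m:ℝ) + 1) / t * bterm ν (m+1) t = bterm (ν+1) m t := by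
  rw [bterm_succ ν hν m ht, bterm_up ν hν m ht]
  have hmν : (0:ℝ) < (m:ℝ) + ν + 1 := by positivity
  have hm1 : (0:ℝ) < (m:ℝ) + 1 := by positivity
  field_simp

/-- summability of the derived series -/
lemma summable_deriv_bterm (ν : ℝ) (hν : 0 ≤ ν) {z : ℝ} (hz : 0 < z) :
    Summable (fun m : ℕ => (2 * (m:ℝ) + ν) / z * bterm ν m z) := by
  have h1 : Summable (fun m => ν / z * bterm ν m z) :=
    (summable_bterm ν hν hz).mul_left _
  have h2 : Summable (fun m : ℕ => 2 * (m:ℝ) / z * bterm ν m z) := by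
    rw [← summable_nat_add_iff 1]
    apply (summable_bterm (ν+1) (by linarith) hz).congr
    intro m
    rw [← bterm_shift ν hν m hz]
    push_cast
    ring_nf
  apply (h1.add h2).congr
  intro m
  ring


/-- majorant for the derivative series on `Ioo (t/2) (t+1)` -/
noncomputable def umaj (ν t : ℝ) (m : ℕ) : ℝ :=
  (2 * (m:ℝ) + ν + 1) * (2 / t) * (t + 1) ^ (2 * (m:ℝ) + ν) /
    ((Nat.factorial m : ℝ) * Real.Gamma ((m : ℝ) + ν + 1))

lemma summable_umaj (ν : ℝ) (hν : 0 ≤ ν) {t : ℝ} (ht : 0 < t) :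
    Summable (umaj ν t) := by
  apply summable_of_ratio_norm_eventually_le (r := 1/2) (by norm_num)
  have hM : (0:ℝ) < t + 1 := by linarith
  filter_upwards [eventually_atTop.2 ⟨⌈6 * (t+1)^2⌉₊, fun n hn => hn⟩] with m hm
  have hDm := gamma_fac_pos ν hν m
  have hDm1 := gamma_fac_pos ν hν (m+1)
  have hu_pos : 0 < umaj ν t m := by
    unfold umaj
    have : (0:ℝ) < 2 * (m:ℝ) + ν + 1 := by positivity
    positivity
  have key : umaj ν t (m+1) ≤ 1/2 * umaj ν t m := by
    have hfac : ((Nat.factorial (m+1) : ℕ) : ℝ) = ((m : ℝ) + 1) * (Nat.factorial m : ℝ) := by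
      rw [Nat.factorial_succ]; push_cast; ring
    have hmν : (0:ℝ) < (m:ℝ) + ν + 1 := by positivity
    have hΓ : Real.Gamma ((((m : ℕ) + 1 : ℕ) : ℝ) + ν + 1)
        = ((m : ℝ) + ν + 1) * Real.Gamma ((m : ℝ) + ν + 1) := by
      push_cast
      have : (m : ℝ) + 1 + ν + 1 = ((m : ℝ) + ν + 1) + 1 := by ring
      rw [this, Real.Gamma_add_one hmν.ne']
    have hpow : (t+1) ^ (2 * (((m : ℕ) + 1 : ℕ) : ℝ) + ν)
        = (t+1) ^ (2 * (m:ℝ) + ν) * (t+1)^2 := by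
      push_cast
      rw [show 2 * ((m:ℝ) + 1) + ν = ((2 * (m:ℝ) + ν) + 1) + 1 by ring,
        Real.rpow_add_one hM.ne', Real.rpow_add_one hM.ne']
      ring
    have hrw : umaj ν t (m+1) = umaj ν t m *
        ((2 * (m:ℝ) + ν + 3) / (2 * (m:ℝ) + ν + 1) * ((t+1)^2 / (((m:ℝ)+1) * ((m:ℝ)+ν+1)))) := by
      unfold umaj
      rw [hpow, hΓ, hfac]
      push_cast
      field_simp [ht.ne']
      ring
    rw [hrw]
    have h1 : (2 * (m:ℝ) + ν + 3) / (2 * (m:ℝ) + ν + 1) ≤ 3 := by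
      rw [div_le_iff₀ (by positivity)]
      linarith [Nat.cast_nonneg (α := ℝ) m]
    have hm' : 6 * (t+1)^2 ≤ (m:ℝ) + 1 := by
      calc 6 * (t+1)^2 ≤ (⌈6 * (t+1)^2⌉₊ : ℝ) := Nat.le_ceil _
      _ ≤ (m : ℝ) := by exact_mod_cast hm
      _ ≤ (m : ℝ) + 1 := by linarith
    have h2 : (t+1)^2 / (((m:ℝ)+1) * ((m:ℝ)+ν+1)) ≤ 1/6 := by
      rw [div_le_iff₀ (by positivity)]
      have h3 : (1:ℝ) ≤ (m:ℝ) + ν + 1 := by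
        have := Nat.cast_nonneg (α := ℝ) m
        linarith
      nlinarith [sq_nonneg (t+1)]
    have h4 : (2 * (m:ℝ) + ν + 3) / (2 * (m:ℝ) + ν + 1) * ((t+1)^2 / (((m:ℝ)+1) * ((m:ℝ)+ν+1)))
        ≤ 1/2 := by
      calc _ ≤ 3 * (1/6 : ℝ) := by
            apply mul_le_mul h1 h2 (by positivity) (by norm_num)
        _ = 1/2 := by norm_num
    calc umaj ν t m * _ ≤ umaj ν t m * (1/2) := mul_le_mul_of_nonneg_left h4 hu_pos.le
      _ = 1/2 * umaj ν t m := by ring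
  rw [Real.norm_eq_abs, Real.norm_eq_abs, abs_of_pos, abs_of_pos hu_pos]
  · exact key
  · unfold umaj
    have : (0:ℝ) < 2 * ((m:ℕ)+1:ℕ) + ν + 1 := by positivity
    have := gamma_fac_pos ν hν (m+1)
    positivity

/-- Derivative of `besselI ν` : `I_ν' = (ν/t) I_ν + I_{ν+1}`. -/
theorem besselI_hasDerivAt (ν : ℝ) (hν : 0 ≤ ν) {t : ℝ} (ht : 0 < t) :
    HasDerivAt (besselI ν) (ν / t * besselI ν t + besselI (ν+1) t) t := by
  have hM : (0:ℝ) < t + 1 := by linarith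
  have hmem : t ∈ Ioo (t/2) (t+1) := ⟨by linarith, by linarith⟩
  have hder : HasDerivAt (fun z => ∑' m, bterm ν m z)
      (∑' m : ℕ, (2 * (m:ℝ) + ν) / t * bterm ν m t) t := by
    apply hasDerivAt_tsum_of_isPreconnected (summable_umaj ν hν ht) isOpen_Ioo
      (isPreconnected_Ioo) (fun m x hx => bterm_hasDerivAt ν hν m (by
        rcases hx with ⟨h1, _⟩; linarith [ht])) _ hmem
      (summable_bterm ν hν ht) hmem
    intro m x hx
    rcases hx with ⟨hx1, hx2⟩
    have hxpos : 0 < x := by linarith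
    have hb := bterm_pos ν hν m hxpos
    have hDm := gamma_fac_pos ν hν m
    have hp : (0:ℝ) ≤ 2*(m:ℝ)+ν := by positivity
    rw [Real.norm_eq_abs, abs_of_nonneg (by positivity)]
    unfold bterm umaj
    have e2 : (x/2)^(2*(m:ℝ)+ν) ≤ (t+1)^(2*(m:ℝ)+ν) :=
      Real.rpow_le_rpow (by positivity) (by linarith) hp
    have e1 : (2*(m:ℝ)+ν)/x ≤ (2*(m:ℝ)+ν+1)*(2/t) := by
      have hx' : 1/x ≤ 2/t := by
        rw [div_le_div_iff₀ hxpos ht]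
        linarith
      calc (2*(m:ℝ)+ν)/x = (2*(m:ℝ)+ν) * (1/x) := by ring
        _ ≤ (2*(m:ℝ)+ν+1) * (2/t) := by
            apply mul_le_mul (by linarith) hx' (by positivity) (by positivity)
    calc (2*(m:ℝ)+ν)/x * ((x/2)^(2*(m:ℝ)+ν)/((Nat.factorial m : ℝ) * Real.Gamma ((m : ℝ) + ν + 1)))
        = ((2*(m:ℝ)+ν)/x) * (x/2)^(2*(m:ℝ)+ν)/((Nat.factorial m : ℝ) * Real.Gamma ((m : ℝ) + ν + 1)) := by
          ring
      _ ≤ (2*(m:ℝ)+ν+1)*(2/t) * (t+1)^(2*(m:ℝ)+ν)/((Nat.factorial m : ℝ) * Real.Gamma ((m : ℝ) + ν + 1)) := by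
          gcongr
  have hsplit : (∑' m : ℕ, (2*(m:ℝ)+ν)/t * bterm ν m t)
      = ν/t * besselI ν t + besselI (ν+1) t := by
    have hs1 : Summable (fun m : ℕ => ν/t * bterm ν m t) := (summable_bterm ν hν ht).mul_left _
    have hs2 : Summable (fun m : ℕ => 2*(m:ℝ)/t * bterm ν m t) :=
      ((summable_deriv_bterm ν hν ht).sub hs1).congr (fun m => by ring)
    rw [show (fun m : ℕ => (2*(m:ℝ)+ν)/t * bterm ν m t)
        = fun m : ℕ => ν/t * bterm ν m t + 2*(m:ℝ)/t * bterm ν m t from funext fun m => by ring]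
    rw [hs1.tsum_add hs2, tsum_mul_left, besselI_eq, besselI_eq]
    congr 1
    rw [hs2.tsum_eq_zero_add]
    have h0 : 2*((0:ℕ):ℝ)/t * bterm ν 0 t = 0 := by norm_num
    rw [h0, zero_add]
    apply tsum_congr
    intro m
    rw [← bterm_shift ν hν m ht]
    push_cast
    ring_nf
  exact hsplit ▸ hder


lemma bterm_base (ν : ℝ) (hν : 0 ≤ ν) {z : ℝ} (hz : 0 < z) :
    bterm ν 0 z = 2 * (ν+1) / z * bterm (ν+1) 0 z := by
  rw [bterm_up ν hν 0 hz]
  have h1 : (0:ℝ) < ν + 1 := by linarith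
  push_cast
  field_simp
  ring

lemma bterm_recur (ν : ℝ) (hν : 0 ≤ ν) (m : ℕ) {z : ℝ} (hz : 0 < z) :
    bterm ν (m+1) z = bterm (ν+1+1) m z + 2 * (ν+1) / z * bterm (ν+1) (m+1) z := by
  have h1 : bterm (ν+1+1) m z = bterm ν m z * ((z/2)^2 / (((m:ℝ)+ν+1) * ((m:ℝ)+ν+2))) := by
    rw [bterm_up (ν+1) (by linarith) m hz, bterm_up ν hν m hz]
    have : (m:ℝ) + (ν+1) + 1 = (m:ℝ) + ν + 2 := by ring
    rw [this]
    have h2 : (0:ℝ) < (m:ℝ)+ν+1 := by positivity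
    have h3 : (0:ℝ) < (m:ℝ)+ν+2 := by positivity
    field_simp
  have h2 : bterm (ν+1) (m+1) z
      = bterm ν m z * ((z/2)^2 / (((m:ℝ)+1) * ((m:ℝ)+ν+1))) * ((z/2) / ((m:ℝ)+1+ν+1)) := by
    rw [bterm_up ν hν (m+1) hz, bterm_succ ν hν m hz]
    push_cast
    ring_nf
  rw [bterm_succ ν hν m hz, h1, h2]
  have h3 : (0:ℝ) < (m:ℝ)+ν+1 := by positivity
  have h4 : (0:ℝ) < (m:ℝ)+ν+2 := by positivity
  have h5 : (0:ℝ) < (m:ℝ)+1 := by positivity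
  have h6 : (m:ℝ)+1+ν+1 = (m:ℝ)+ν+2 := by ring
  rw [h6]
  field_simp
  ring

theorem besselI_recurrence (ν : ℝ) (hν : 0 ≤ ν) {z : ℝ} (hz : 0 < z) :
    besselI ν z = besselI (ν+1+1) z + 2 * (ν+1) / z * besselI (ν+1) z := by
  have hs0 := summable_bterm ν hν hz
  have hs1 := summable_bterm (ν+1) (by linarith) hz
  have hs2 := summable_bterm (ν+1+1) (by linarith) hz
  have hs1' : Summable (fun m : ℕ => bterm (ν+1) (m+1) z) := (summable_nat_add_iff 1).2 hs1
  have hs1'' : Summable (fun m : ℕ => 2*(ν+1)/z * bterm (ν+1) (m+1) z) := hs1'.mul_left _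
  rw [besselI_eq, besselI_eq, besselI_eq]
  rw [hs0.tsum_eq_zero_add, hs1.tsum_eq_zero_add]
  have hcong : (fun m : ℕ => bterm ν (m+1) z)
      = fun m : ℕ => bterm (ν+1+1) m z + 2*(ν+1)/z * bterm (ν+1) (m+1) z :=
    funext fun m => bterm_recur ν hν m hz
  rw [hcong, hs2.tsum_add hs1'', tsum_mul_left, bterm_base ν hν hz]
  ring


/-- Generic strict comparison: if `f a < g a` and whenever `f` and `g` touch, the derivative
of `f` is strictly smaller, then `f < g` on all of `[a,T]`. -/
lemma ode_comparison {f g f' g' : ℝ → ℝ} {a T : ℝ} (haT : a ≤ T)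
    (hf : ∀ t ∈ Icc a T, HasDerivAt f (f' t) t)
    (hg : ∀ t ∈ Icc a T, HasDerivAt g (g' t) t)
    (hinit : f a < g a)
    (hcross : ∀ t ∈ Ioc a T, f t = g t → f' t < g' t) :
    ∀ t ∈ Icc a T, f t < g t := by
  by_contra hcon
  push_neg at hcon
  obtain ⟨t0, ht0, hle⟩ := hcon
  set d : ℝ → ℝ := fun t => f t - g t with hd
  have hdcont : ∀ t ∈ Icc a T, ContinuousAt d t := fun t ht =>
    ((hf t ht).continuousAt).sub ((hg t ht).continuousAt)
  set s : Set ℝ := {t | t ∈ Icc a T ∧ 0 ≤ d t} with hs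
  have hne : s.Nonempty := ⟨t0, ht0, by simp [hd]; linarith⟩
  have hbdd : BddBelow s := ⟨a, fun x hx => hx.1.1⟩
  set S := sInf s with hS
  have hSmem_cl : S ∈ closure s := csInf_mem_closure hne hbdd
  have hSa : a ≤ S := le_csInf hne (fun x hx => hx.1.1)
  have hST : S ≤ T := le_trans (csInf_le hbdd ⟨ht0, by simp [hd]; linarith⟩) ht0.2
  have hSIcc : S ∈ Icc a T := ⟨hSa, hST⟩
  -- `0 ≤ d S` by approximation from `s`
  have hdS_nonneg : 0 ≤ d S := by
    have hnb : (𝓝[s] S).NeBot := mem_closure_iff_nhdsWithin_neBot.1 hSmem_cl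
    have htd : Tendsto d (𝓝[s] S) (𝓝 (d S)) := (hdcont S hSIcc).continuousWithinAt
    exact ge_of_tendsto htd (Filter.eventually_of_mem self_mem_nhdsWithin (fun x hx => hx.2))
  -- `S ≠ a`
  have haS : a < S := by
    rcases lt_or_eq_of_le hSa with h | h
    · exact h
    · exfalso
      rw [← h] at hdS_nonneg
      simp only [hd] at hdS_nonneg
      linarith
  -- `d < 0` strictly to the left of `S`
  have hdneg : ∀ x ∈ Ioo a S, d x < 0 := by
    intro x hx
    by_contra hge
    push_neg at hge
    have hxs : x ∈ s := ⟨⟨hx.1.le, hx.2.le.trans hST⟩, hge⟩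
    exact absurd (csInf_le hbdd hxs) (not_le.2 hx.2)
  -- `d S ≤ 0` by approximation from the left
  have hdS_le : d S ≤ 0 := by
    have hcl2 : S ∈ closure (Ioo a S) := by
      rw [closure_Ioo (ne_of_lt haS)]
      exact right_mem_Icc.2 haS.le
    have hnb2 : (𝓝[Ioo a S] S).NeBot := mem_closure_iff_nhdsWithin_neBot.1 hcl2
    have htd : Tendsto d (𝓝[Ioo a S] S) (𝓝 (d S)) := (hdcont S hSIcc).continuousWithinAt
    exact le_of_tendsto htd
      (Filter.eventually_of_mem self_mem_nhdsWithin (fun x hx => (hdneg x hx).le))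
  have hdS : d S = 0 := le_antisymm hdS_le hdS_nonneg
  -- derivative of `d` at `S` is negative …
  have hders : HasDerivAt d (f' S - g' S) S := (hf S hSIcc).sub (hg S hSIcc)
  have hlt : f' S - g' S < 0 := by
    have : f S = g S := by
      have := hdS; simp only [hd] at this; linarith
    have := hcross S ⟨haS, hST⟩ this
    linarith
  -- … but slopes from the left are nonnegative
  have hslope := hasDerivAt_iff_tendsto_slope.1 hders
  have hsub : Ioo a S ⊆ {S}ᶜ := fun x hx => ne_of_lt hx.2
  have htend : Tendsto (slope d S) (𝓝[Ioo a S] S) (𝓝 (f' S - g' S)) :=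
    hslope.mono_left (nhdsWithin_mono S hsub)
  have hnb2 : (𝓝[Ioo a S] S).NeBot := by
    have hcl2 : S ∈ closure (Ioo a S) := by
      rw [closure_Ioo (ne_of_lt haS)]
      exact right_mem_Icc.2 haS.le
    exact mem_closure_iff_nhdsWithin_neBot.1 hcl2
  have hge : 0 ≤ f' S - g' S := by
    apply ge_of_tendsto htend
    apply Filter.eventually_of_mem self_mem_nhdsWithin
    intro x hx
    have h1 : d x < 0 := hdneg x hx
    have h2 : x - S < 0 := by linarith [hx.2]
    rw [slope_def_field, hdS]
    have : 0 < (d x - 0) / (x - S) := div_pos_of_neg_of_neg (by linarith) h2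
    linarith
  linarith


lemma bterm_zero (ν : ℝ) {z : ℝ} (hz : 0 < z) :
    bterm ν 0 z = (z/2) ^ ν / Real.Gamma (ν + 1) := by
  unfold bterm
  norm_num

set_option maxHeartbeats 1000000 in
lemma besselI_div_rpow_tendsto (ν : ℝ) (hν : 0 ≤ ν) :
    Tendsto (fun t => besselI ν t / (t/2) ^ ν) (𝓝[>] (0:ℝ)) (𝓝 (1 / Real.Gamma (ν + 1))) := by
  set K : ℝ := ∑' m : ℕ, bterm ν (m+1) 2 with hK
  have hK_sum : Summable (fun m : ℕ => bterm ν (m+1) 2) :=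
    (summable_nat_add_iff 1).2 (summable_bterm ν hν (by norm_num))
  have hKpos : 0 ≤ K := tsum_nonneg (fun m => (bterm_pos ν hν (m+1) (by norm_num)).le)
  have hbound : ∀ t ∈ Ioo (0:ℝ) 2,
      1 / Real.Gamma (ν+1) ≤ besselI ν t / (t/2) ^ ν ∧
      besselI ν t / (t/2) ^ ν ≤ 1 / Real.Gamma (ν+1) + (t/2)^2 * K := by
    intro t ht
    obtain ⟨ht0, ht2⟩ := ht
    have h2 : (0:ℝ) < t/2 := by linarith
    have h21 : t/2 ≤ 1 := by linarith
    have hpow_pos : (0:ℝ) < (t/2)^ν := Real.rpow_pos_of_pos h2 _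
    have hsum := summable_bterm ν hν ht0
    have hsum' : Summable (fun m : ℕ => bterm ν (m+1) t) := (summable_nat_add_iff 1).2 hsum
    have hsplit : besselI ν t = bterm ν 0 t + ∑' m : ℕ, bterm ν (m+1) t := by
      rw [besselI_eq]; exact hsum.tsum_eq_zero_add
    have htail0 : 0 ≤ ∑' m : ℕ, bterm ν (m+1) t :=
      tsum_nonneg (fun m => (bterm_pos ν hν (m+1) ht0).le)
    have htail_le : (∑' m : ℕ, bterm ν (m+1) t) ≤ (t/2)^(ν+2) * K := by
      rw [hK, ← tsum_mul_left]
      apply Summable.tsum_le_tsum _ hsum' (hK_sum.mul_left _)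
      intro m
      unfold bterm
      have hD := gamma_fac_pos ν hν (m+1)
      have hpow2 : ((2:ℝ)/2) ^ (2*((m+1:ℕ):ℝ) + ν) = 1 := by
        norm_num
      rw [hpow2]
      have hple : (t/2) ^ (2*((m+1:ℕ):ℝ) + ν) ≤ (t/2)^(ν+2) := by
        apply Real.rpow_le_rpow_of_exponent_ge h2 h21
        push_cast
        have : (0:ℝ) ≤ (m:ℝ) := Nat.cast_nonneg m
        linarith
      calc (t/2) ^ (2*((m+1:ℕ):ℝ) + ν) / ((Nat.factorial (m+1) : ℝ) * Real.Gamma (((m+1:ℕ):ℝ) + ν + 1))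
          ≤ (t/2)^(ν+2) / ((Nat.factorial (m+1) : ℝ) * Real.Gamma (((m+1:ℕ):ℝ) + ν + 1)) := by
            exact div_le_div_of_nonneg_right hple hD.le
        _ = (t/2)^(ν+2) * (1 / ((Nat.factorial (m+1) : ℝ) * Real.Gamma (((m+1:ℕ):ℝ) + ν + 1))) := by
            ring
    have hb0 : bterm ν 0 t / (t/2)^ν = 1 / Real.Gamma (ν+1) := by
      rw [bterm_zero ν ht0]
      field_simp
    constructor
    · rw [hsplit, add_div, hb0]
      have : 0 ≤ (∑' m : ℕ, bterm ν (m+1) t) / (t/2)^ν := div_nonneg htail0 hpow_pos.le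
      linarith
    · rw [hsplit, add_div, hb0]
      have h3 : (∑' m : ℕ, bterm ν (m+1) t) / (t/2)^ν ≤ (t/2)^2 * K := by
        rw [div_le_iff₀ hpow_pos]
        calc (∑' m : ℕ, bterm ν (m+1) t) ≤ (t/2)^(ν+2) * K := htail_le
          _ = (t/2)^2 * K * (t/2)^ν := by
              rw [show ν + 2 = ν + (2:ℝ) by norm_num, Real.rpow_add h2,
                show ((2:ℝ):ℝ) = ((2:ℕ):ℝ) by norm_num, Real.rpow_natCast]
              ring
      linarith
  have hupper : Tendsto (fun t : ℝ => 1 / Real.Gamma (ν+1) + (t/2)^2 * K) (𝓝[>] (0:ℝ))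
      (𝓝 (1 / Real.Gamma (ν+1))) := by
    have : Continuous (fun t : ℝ => 1 / Real.Gamma (ν+1) + (t/2)^2 * K) := by continuity
    have h0 := this.tendsto 0
    simp only [zero_div, ne_eq, OfNat.ofNat_ne_zero, not_false_eq_true, zero_pow, zero_mul,
      add_zero] at h0
    exact h0.mono_left nhdsWithin_le_nhds
  apply tendsto_of_tendsto_of_tendsto_of_le_of_le' tendsto_const_nhds hupper
  · filter_upwards [Ioo_mem_nhdsGT_of_mem ⟨le_refl (0:ℝ), (by norm_num : (0:ℝ) < 2)⟩] with t ht
    exact (hbound t ht).1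
  · filter_upwards [Ioo_mem_nhdsGT_of_mem ⟨le_refl (0:ℝ), (by norm_num : (0:ℝ) < 2)⟩] with t ht
    exact (hbound t ht).2


/-- the ratio `I_{α+1}/I_α` -/
noncomputable def rQ (α t : ℝ) : ℝ := besselI (α+1) t / besselI α t

lemma rQ_pos (α : ℝ) (hα : 0 ≤ α) {t : ℝ} (ht : 0 < t) : 0 < rQ α t :=
  div_pos (besselI_pos (α+1) (by linarith) ht) (besselI_pos α hα ht)

/-- Riccati equation for the ratio. -/
lemma rQ_hasDerivAt (α : ℝ) (hα : 0 ≤ α) {t : ℝ} (ht : 0 < t) :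
    HasDerivAt (rQ α) (1 - (2*α+1)/t * rQ α t - (rQ α t)^2) t := by
  have hA := besselI_pos α hα ht
  have hIα := besselI_hasDerivAt α hα ht
  have hIα1 := besselI_hasDerivAt (α+1) (by linarith) ht
  have hrec := besselI_recurrence α hα ht
  have hdiv := hIα1.div hIα hA.ne'
  have heq : ((α+1) / t * besselI (α+1) t + besselI (α+1+1) t) * besselI α t -
      besselI (α+1) t * (α / t * besselI α t + besselI (α+1) t) =
      (1 - (2*α+1)/t * (besselI (α+1) t / besselI α t)
        - (besselI (α+1) t / besselI α t)^2) * (besselI α t)^2 := by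
    have hC : besselI (α+1+1) t = besselI α t - 2*(α+1)/t * besselI (α+1) t := by
      linarith
    rw [hC]
    field_simp
    ring
  unfold rQ
  refine (hdiv).congr_deriv (Eq.symm ?_)
  rw [eq_div_iff (by positivity)]
  linear_combination -heq

/-- the upper barrier -/
noncomputable def chi (γ t : ℝ) : ℝ := t / (γ + Real.sqrt (γ^2 + t^2))
/-- the (perturbed) lower barrier -/
noncomputable def phiE (γ ε t : ℝ) : ℝ := t / (γ + ε + Real.sqrt ((γ+1)^2 + t^2))

lemma sqrt_sq_add_hasDerivAt (c t : ℝ) (hc : 0 < c) :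
    HasDerivAt (fun x => Real.sqrt (c + x^2)) (t / Real.sqrt (c + t^2)) t := by
  have hpos : 0 < c + t^2 := by positivity
  have hinner : HasDerivAt (fun x : ℝ => c + x^2) (2*t) t := by
    simpa using (hasDerivAt_pow 2 t).const_add c
  have houter := (Real.hasDerivAt_sqrt hpos.ne').comp t hinner
  refine (houter).congr_deriv (Eq.symm ?_)
  have hs : Real.sqrt (c + t^2) ≠ 0 := (Real.sqrt_pos.2 hpos).ne'
  field_simp

lemma chi_hasDerivAt (γ : ℝ) (hγ : 0 < γ) {t : ℝ} (ht : 0 < t) :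
    HasDerivAt (chi γ)
      ((1*(γ + Real.sqrt (γ^2 + t^2)) - t*(t / Real.sqrt (γ^2 + t^2)))/(γ + Real.sqrt (γ^2 + t^2))^2) t := by
  have hS0 : 0 ≤ Real.sqrt (γ^2 + t^2) := Real.sqrt_nonneg _
  have hden : γ + Real.sqrt (γ^2 + t^2) ≠ 0 := by positivity
  exact (hasDerivAt_id t).div ((sqrt_sq_add_hasDerivAt (γ^2) t (by positivity)).const_add γ) hden

lemma phiE_hasDerivAt (γ ε : ℝ) (hγ : 0 < γ) (hε : 0 < ε) {t : ℝ} (ht : 0 < t) :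
    HasDerivAt (phiE γ ε)
      ((1*(γ + ε + Real.sqrt ((γ+1)^2 + t^2)) - t*(t / Real.sqrt ((γ+1)^2 + t^2)))/(γ + ε + Real.sqrt ((γ+1)^2 + t^2))^2) t := by
  have hS0 : 0 ≤ Real.sqrt ((γ+1)^2 + t^2) := Real.sqrt_nonneg _
  have hden : γ + ε + Real.sqrt ((γ+1)^2 + t^2) ≠ 0 := by positivity
  exact (hasDerivAt_id t).div ((sqrt_sq_add_hasDerivAt ((γ+1)^2) t (by positivity)).const_add (γ+ε)) hden

/-- `chi` is a strict supersolution of the Riccati equation. -/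
lemma chi_super (γ : ℝ) (hγ : 0 < γ) {t : ℝ} (ht : 0 < t) :
    1 - (2*γ)/t * chi γ t - (chi γ t)^2 <
      (1*(γ + Real.sqrt (γ^2 + t^2)) - t*(t / Real.sqrt (γ^2 + t^2)))/(γ + Real.sqrt (γ^2 + t^2))^2 := by
  set S := Real.sqrt (γ^2 + t^2) with hS
  have hS2 : S^2 = γ^2 + t^2 := Real.sq_sqrt (by positivity)
  have hSpos : 0 < S := Real.sqrt_pos.2 (by positivity)
  have hD : 0 < γ + S := by positivity
  have h0 : (γ+S)^2 - 2*γ*(γ+S) - t^2 = 0 := by linear_combination hS2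
  have hL : 1 - (2*γ)/t * chi γ t - (chi γ t)^2 = 0 := by
    unfold chi
    rw [← hS]
    rw [show (0:ℝ) = ((γ+S)^2 - 2*γ*(γ+S) - t^2)/(γ+S)^2 by rw [h0]; simp]
    field_simp
  have hDS : (γ+S)*S - t^2 = γ*S + γ^2 := by linear_combination hS2
  have hR : 0 < (1*(γ + S) - t*(t/S))/(γ + S)^2 := by
    apply div_pos _ (by positivity)
    rw [show 1*(γ+S) - t*(t/S) = ((γ+S)*S - t^2)/S by field_simp, hDS]
    apply div_pos _ hSpos
    nlinarith
  linarith

/-- `phiE` is a strict subsolution of the Riccati equation. -/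
lemma phiE_sub (γ ε : ℝ) (hγ : 0 < γ) (hε : 0 < ε) {t : ℝ} (ht : 0 < t) :
    (1*(γ + ε + Real.sqrt ((γ+1)^2 + t^2)) - t*(t / Real.sqrt ((γ+1)^2 + t^2)))/(γ + ε + Real.sqrt ((γ+1)^2 + t^2))^2
      < 1 - (2*γ)/t * phiE γ ε t - (phiE γ ε t)^2 := by
  set S := Real.sqrt ((γ+1)^2 + t^2) with hS
  have hS2 : S^2 = (γ+1)^2 + t^2 := Real.sq_sqrt (by positivity)
  have hSpos : 0 < S := Real.sqrt_pos.2 (by positivity)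
  have hSge : γ + 1 ≤ S := by nlinarith
  have hD : 0 < γ + ε + S := by positivity
  have hDS : (γ+ε+S)*S - t^2 = (γ+ε)*S + (γ+1)^2 := by linear_combination hS2
  have hL : (1*(γ + ε + S) - t*(t/S)) / (γ + ε + S)^2
      = ((γ+ε)*S + (γ+1)^2) / (S * (γ + ε + S)^2) := by
    rw [show 1*(γ+ε+S) - t*(t/S) = ((γ+ε+S)*S - t^2)/S by field_simp, hDS]
    rw [div_div]
  have hD2 : (γ+ε+S)^2 - 2*γ*(γ+ε+S) - t^2 = 2*γ + 1 + ε^2 + 2*ε*S := by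
    linear_combination hS2
  have hR : 1 - (2*γ)/t * phiE γ ε t - (phiE γ ε t)^2
      = (2*γ + 1 + ε^2 + 2*ε*S) / (γ + ε + S)^2 := by
    unfold phiE
    rw [← hS, ← hD2]
    field_simp
  rw [hL, hR]
  rw [div_lt_div_iff₀ (by positivity) (by positivity)]
  have hkey : (γ+1)^2 < (γ + 1 - ε + ε^2) * S + 2*ε*S^2 := by
    nlinarith [mul_le_mul_of_nonneg_right hSge (by positivity : (0:ℝ) ≤ γ+1),
      mul_pos hε hSpos, mul_pos (mul_pos hε hSpos) hSpos, sq_nonneg ε]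
  nlinarith [mul_pos (pow_pos hD 2) (sub_pos.2 hkey)]

lemma rQ_div_tendsto (α : ℝ) (hα : 0 ≤ α) :
    Tendsto (fun t => rQ α t / t) (𝓝[>] (0:ℝ)) (𝓝 (1 / (2*(α+1)))) := by
  have hΓpos : 0 < Real.Gamma (α+1) := Real.Gamma_pos_of_pos (by linarith)
  have h0 := besselI_div_rpow_tendsto α hα
  have h1 := besselI_div_rpow_tendsto (α+1) (by linarith)
  have hne : (1 : ℝ) / Real.Gamma (α+1) ≠ 0 := by positivity
  have hmul := (h1.div h0 hne).mul_const (1/2 : ℝ)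
  have hval : (1 / Real.Gamma (α+1+1)) / (1 / Real.Gamma (α+1)) * (1/2) = 1/(2*(α+1)) := by
    rw [show α+1+1 = (α+1)+1 by ring, Real.Gamma_add_one (by positivity : α+1 ≠ 0)]
    have : (0:ℝ) < α + 1 := by linarith
    field_simp
  rw [hval] at hmul
  apply Filter.Tendsto.congr' _ hmul
  filter_upwards [self_mem_nhdsWithin] with t ht
  have ht0 : 0 < t := ht
  have h2 : (0:ℝ) < t/2 := by linarith
  have hA : (0:ℝ) < (t/2) ^ α := Real.rpow_pos_of_pos h2 _
  have hIpos := besselI_pos α hα ht0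
  have hB : (t/2)^(α+1) = (t/2)^α * (t/2) := Real.rpow_add_one h2.ne' α
  simp only [Pi.div_apply]
  rw [hB]
  unfold rQ
  field_simp

lemma chi_div_tendsto (γ : ℝ) (hγ : 0 < γ) :
    Tendsto (fun t => chi γ t / t) (𝓝[>] (0:ℝ)) (𝓝 (1/(2*γ))) := by
  have hden : Continuous (fun t : ℝ => γ + Real.sqrt (γ^2 + t^2)) :=
    continuous_const.add (Real.continuous_sqrt.comp (continuous_const.add (continuous_pow 2)))
  have hne : γ + Real.sqrt (γ^2 + (0:ℝ)^2) ≠ 0 := by positivity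
  have hc : Tendsto (fun t : ℝ => 1/(γ + Real.sqrt (γ^2 + t^2))) (𝓝 0)
      (𝓝 (1/(γ + Real.sqrt (γ^2 + (0:ℝ)^2)))) :=
    (continuousAt_const.div hden.continuousAt hne)
  have hval : 1/(γ + Real.sqrt (γ^2 + (0:ℝ)^2)) = 1/(2*γ) := by
    rw [show γ^2 + (0:ℝ)^2 = γ^2 by ring, Real.sqrt_sq hγ.le]
    ring_nf
  rw [hval] at hc
  apply Filter.Tendsto.congr' _ (hc.mono_left nhdsWithin_le_nhds)
  filter_upwards [self_mem_nhdsWithin] with t ht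
  have ht0 : (0:ℝ) < t := ht
  have hd : (0:ℝ) < γ + Real.sqrt (γ^2 + t^2) := by positivity
  unfold chi
  field_simp

lemma phiE_apply_tendsto (γ T : ℝ) (hγ : 0 < γ) (hT : 0 < T) :
    Tendsto (fun ε => phiE γ ε T) (𝓝[>] (0:ℝ))
      (𝓝 (T / (γ + Real.sqrt ((γ+1)^2 + T^2)))) := by
  have hS0 : (0:ℝ) ≤ Real.sqrt ((γ+1)^2 + T^2) := Real.sqrt_nonneg _
  have hden : Continuous (fun ε : ℝ => γ + ε + Real.sqrt ((γ+1)^2 + T^2)) := by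
    continuity
  have hne : γ + (0:ℝ) + Real.sqrt ((γ+1)^2 + T^2) ≠ 0 := by positivity
  have hc : Tendsto (fun ε : ℝ => T/(γ + ε + Real.sqrt ((γ+1)^2 + T^2))) (𝓝 0)
      (𝓝 (T/(γ + (0:ℝ) + Real.sqrt ((γ+1)^2 + T^2)))) :=
    (continuousAt_const.div hden.continuousAt hne)
  have hval : T/(γ + (0:ℝ) + Real.sqrt ((γ+1)^2 + T^2)) = T/(γ + Real.sqrt ((γ+1)^2 + T^2)) := by
    norm_num
  rw [hval] at hc
  exact hc.mono_left nhdsWithin_le_nhds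

lemma phiE_div_tendsto (γ ε : ℝ) (hγ : 0 < γ) (hε : 0 < ε) :
    Tendsto (fun t => phiE γ ε t / t) (𝓝[>] (0:ℝ)) (𝓝 (1/(2*γ+1+ε))) := by
  have hden : Continuous (fun t : ℝ => γ + ε + Real.sqrt ((γ+1)^2 + t^2)) :=
    continuous_const.add (Real.continuous_sqrt.comp (continuous_const.add (continuous_pow 2)))
  have hne : γ + ε + Real.sqrt ((γ+1)^2 + (0:ℝ)^2) ≠ 0 := by positivity
  have hc : Tendsto (fun t : ℝ => 1/(γ + ε + Real.sqrt ((γ+1)^2 + t^2))) (𝓝 0)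
      (𝓝 (1/(γ + ε + Real.sqrt ((γ+1)^2 + (0:ℝ)^2)))) :=
    (continuousAt_const.div hden.continuousAt hne)
  have hval : 1/(γ + ε + Real.sqrt ((γ+1)^2 + (0:ℝ)^2)) = 1/(2*γ+1+ε) := by
    rw [show (γ+1)^2 + (0:ℝ)^2 = (γ+1)^2 by ring, Real.sqrt_sq (by linarith)]
    ring_nf
  rw [hval] at hc
  apply Filter.Tendsto.congr' _ (hc.mono_left nhdsWithin_le_nhds)
  filter_upwards [self_mem_nhdsWithin] with t ht
  have ht0 : (0:ℝ) < t := ht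
  have hd : (0:ℝ) < γ + ε + Real.sqrt ((γ+1)^2 + t^2) := by positivity
  unfold phiE
  field_simp

theorem rQ_lt_chi (α : ℝ) (hα : 0 ≤ α) {T : ℝ} (hT : 0 < T) :
    rQ α T < chi (α+1/2) T := by
  have hγ : 0 < α + 1/2 := by linarith
  have hlt : 1/(2*(α+1)) < 1/(2*(α+1/2)) := by
    rw [div_lt_div_iff₀ (by linarith) (by linarith)]
    linarith
  have hev := (rQ_div_tendsto α hα).eventually_lt (chi_div_tendsto (α+1/2) hγ) hlt
  have hIoo : Ioo (0:ℝ) T ∈ 𝓝[>] (0:ℝ) := Ioo_mem_nhdsGT_of_mem ⟨le_refl 0, hT⟩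
  obtain ⟨t₁, hlt1, ht₁⟩ := (hev.and (eventually_of_mem hIoo (fun x hx => hx))).exists
  have ht₁0 : 0 < t₁ := ht₁.1
  have hinit : rQ α t₁ < chi (α+1/2) t₁ := by
    have h := mul_lt_mul_of_pos_right hlt1 ht₁0
    rwa [div_mul_cancel₀ _ ht₁0.ne', div_mul_cancel₀ _ ht₁0.ne'] at h
  have hcomp := ode_comparison (f := rQ α) (g := chi (α+1/2))
    (f' := fun t => 1 - (2*α+1)/t * rQ α t - (rQ α t)^2)
    (g' := fun t => (1*((α+1/2) + Real.sqrt ((α+1/2)^2 + t^2)) -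
        t*(t / Real.sqrt ((α+1/2)^2 + t^2)))/((α+1/2) + Real.sqrt ((α+1/2)^2 + t^2))^2)
    (le_of_lt ht₁.2)
    (fun t htm => rQ_hasDerivAt α hα (lt_of_lt_of_le ht₁0 htm.1))
    (fun t htm => chi_hasDerivAt (α+1/2) hγ (lt_of_lt_of_le ht₁0 htm.1)) hinit ?_
  · exact hcomp T ⟨le_of_lt ht₁.2, le_refl T⟩
  · intro t htm heq
    have ht0 : 0 < t := lt_trans ht₁0 htm.1
    have hsup := chi_super (α+1/2) hγ ht0
    beta_reduce
    rw [heq, show 2*α+1 = 2*(α+1/2) by ring]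
    exact hsup

theorem phi_le_rQ (α : ℝ) (hα : 0 ≤ α) {T : ℝ} (hT : 0 < T) :
    T / ((α+1/2) + Real.sqrt ((α+1/2+1)^2 + T^2)) ≤ rQ α T := by
  have hγ : 0 < α + 1/2 := by linarith
  have key : ∀ ε : ℝ, 0 < ε → phiE (α+1/2) ε T < rQ α T := by
    intro ε hε
    have hlt : 1/(2*(α+1/2)+1+ε) < 1/(2*(α+1)) := by
      rw [div_lt_div_iff₀ (by linarith) (by linarith)]
      linarith
    have hev := (phiE_div_tendsto (α+1/2) ε hγ hε).eventually_lt (rQ_div_tendsto α hα) hlt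
    have hIoo : Ioo (0:ℝ) T ∈ 𝓝[>] (0:ℝ) := Ioo_mem_nhdsGT_of_mem ⟨le_refl 0, hT⟩
    obtain ⟨t₁, hlt1, ht₁⟩ := (hev.and (eventually_of_mem hIoo (fun x hx => hx))).exists
    have ht₁0 : 0 < t₁ := ht₁.1
    have hinit : phiE (α+1/2) ε t₁ < rQ α t₁ := by
      have h := mul_lt_mul_of_pos_right hlt1 ht₁0
      rwa [div_mul_cancel₀ _ ht₁0.ne', div_mul_cancel₀ _ ht₁0.ne'] at h
    have hcomp := ode_comparison (f := phiE (α+1/2) ε) (g := rQ α)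
      (f' := fun t => (1*((α+1/2) + ε + Real.sqrt ((α+1/2+1)^2 + t^2)) -
          t*(t / Real.sqrt ((α+1/2+1)^2 + t^2)))/((α+1/2) + ε + Real.sqrt ((α+1/2+1)^2 + t^2))^2)
      (g' := fun t => 1 - (2*α+1)/t * rQ α t - (rQ α t)^2)
      (le_of_lt ht₁.2)
      (fun t htm => phiE_hasDerivAt (α+1/2) ε hγ hε (lt_of_lt_of_le ht₁0 htm.1))
      (fun t htm => rQ_hasDerivAt α hα (lt_of_lt_of_le ht₁0 htm.1)) hinit ?_
    · exact hcomp T ⟨le_of_lt ht₁.2, le_refl T⟩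
    · intro t htm heq
      have ht0 : 0 < t := lt_trans ht₁0 htm.1
      have hsub := phiE_sub (α+1/2) ε hγ hε ht0
      beta_reduce
      rw [← heq, show 2*α+1 = 2*(α+1/2) by ring]
      exact hsub
  exact le_of_tendsto (phiE_apply_tendsto (α+1/2) T hγ hT)
    (Filter.eventually_of_mem self_mem_nhdsWithin (fun ε hε => (key ε hε).le))


lemma aux_lower (γ S t : ℝ) (hγ : 0 < γ) (ht : 0 < t) (hSpos : 0 < S)
    (hSt : t ≤ S) (h2tS : 2*t*S ≤ 2*t^2 + (γ+1)^2) :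
    -((γ+1)^2*(γ+S)/2) ≤ t^3 - t^2*(γ+S) + γ*t*(γ+S) := by
  nlinarith [mul_le_mul_of_nonneg_left h2tS (le_of_lt ht),
    mul_nonneg (mul_nonneg hγ.le ht.le) (sub_nonneg.2 hSt),
    mul_nonneg (mul_nonneg hγ.le hγ.le) ht.le,
    mul_nonneg (by positivity : (0:ℝ) ≤ (γ+1)^2/2) (sub_nonneg.2 hSt),
    (by positivity : (0:ℝ) ≤ γ*(γ+1)^2/2)]

lemma rQ_le_one (α : ℝ) (hα : 0 ≤ α) {t : ℝ} (ht : 0 < t) : rQ α t ≤ 1 := by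
  have h := rQ_lt_chi α hα ht
  have hγ : (0:ℝ) < α + 1/2 := by linarith
  set S := Real.sqrt ((α+1/2)^2 + t^2) with hS
  have hS2 : S^2 = (α+1/2)^2 + t^2 := Real.sq_sqrt (by positivity)
  have hSpos : 0 < S := Real.sqrt_pos.2 (by positivity)
  have hSt : t ≤ S := by nlinarith
  have : chi (α+1/2) t ≤ 1 := by
    unfold chi
    rw [← hS, div_le_one (by positivity)]
    linarith
  linarith

/-- upper bound : `r - 1 + γ/t ≤ 2γ²/t²` -/
lemma rQ_upper (α : ℝ) (hα : 0 ≤ α) {t : ℝ} (ht : 0 < t) :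
    rQ α t - 1 + (α+1/2)/t ≤ 2*(α+1/2)^2/t^2 := by
  have h := rQ_lt_chi α hα ht
  have hγ : (0:ℝ) < α + 1/2 := by linarith
  set γ := α + 1/2 with hγdef
  set S := Real.sqrt (γ^2 + t^2) with hS
  have hS2 : S^2 = γ^2 + t^2 := Real.sq_sqrt (by positivity)
  have hSpos : 0 < S := Real.sqrt_pos.2 (by positivity)
  have hSt : t ≤ S := by nlinarith
  have hSle : S ≤ γ + t := by nlinarith
  have key : chi γ t - 1 + γ/t ≤ 2*γ^2/t^2 := by
    unfold chi
    rw [← hS]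
    rw [← mul_le_mul_iff_of_pos_right (show (0:ℝ) < t^2*(γ+S) by positivity)]
    have e1 : (t/(γ+S) - 1 + γ/t) * (t^2*(γ+S)) = t^3 - t^2*(γ+S) + γ*t*(γ+S) := by
      field_simp
    have e2 : (2*γ^2/t^2) * (t^2*(γ+S)) = 2*γ^2*(γ+S) := by
      field_simp
    rw [e1, e2]
    nlinarith [mul_nonneg (sq_nonneg t) (sub_nonneg.2 hSt),
      mul_nonneg (mul_nonneg hγ.le ht.le) (sub_nonneg.2 hSle),
      mul_nonneg (mul_nonneg (by norm_num : (0:ℝ) ≤ 2) (sq_nonneg γ)) (sub_nonneg.2 hSt)]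
  linarith

/-- lower bound : `r - 1 + γ/t ≥ -(γ+1)²/(2t²)` -/
lemma rQ_lower (α : ℝ) (hα : 0 ≤ α) {t : ℝ} (ht : 0 < t) :
    -((α+1/2+1)^2/(2*t^2)) ≤ rQ α t - 1 + (α+1/2)/t := by
  have h := phi_le_rQ α hα ht
  have hγ : (0:ℝ) < α + 1/2 := by linarith
  set γ := α + 1/2 with hγdef
  set S := Real.sqrt ((γ+1)^2 + t^2) with hS
  have hS2 : S^2 = (γ+1)^2 + t^2 := Real.sq_sqrt (by positivity)
  have hSpos : 0 < S := Real.sqrt_pos.2 (by positivity)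
  have hSt : t ≤ S := by nlinarith
  have h2tS : 2*t*S ≤ 2*t^2 + (γ+1)^2 := by nlinarith [sq_nonneg (S - t)]
  have key : -((γ+1)^2/(2*t^2)) ≤ t/(γ+S) - 1 + γ/t := by
    rw [← mul_le_mul_iff_of_pos_right (show (0:ℝ) < t^2*(γ+S) by positivity)]
    have e1 : (t/(γ+S) - 1 + γ/t) * (t^2*(γ+S)) = t^3 - t^2*(γ+S) + γ*t*(γ+S) := by
      field_simp
    have e2 : (-((γ+1)^2/(2*t^2))) * (t^2*(γ+S)) = -((γ+1)^2*(γ+S)/2) := by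
      field_simp
    rw [e1, e2]
    exact aux_lower γ S t hγ ht hSpos hSt h2tS
  linarith

/-- combined : `|r - 1 + γ/t| ≤ 2(γ+1)²/t²` -/
lemma rQ_psi_bound (α : ℝ) (hα : 0 ≤ α) {t : ℝ} (ht : 0 < t) :
    |rQ α t - 1 + (α+1/2)/t| ≤ 2*(α+1/2+1)^2/t^2 := by
  rw [abs_le]
  have h1 := rQ_upper α hα ht
  have h2 := rQ_lower α hα ht
  have ht2 : (0:ℝ) < t^2 := by positivity
  constructor
  · have : (α+1/2+1)^2/(2*t^2) ≤ 2*(α+1/2+1)^2/t^2 := by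
      rw [div_le_div_iff₀ (by positivity) ht2]
      nlinarith [sq_nonneg (α+1/2+1)]
    linarith
  · have : 2*(α+1/2)^2/t^2 ≤ 2*(α+1/2+1)^2/t^2 := by
      rw [div_le_div_iff₀ ht2 ht2]
      nlinarith [sq_nonneg t]
    linarith

/-- derivative of `log I_α` -/
lemma log_besselI_hasDerivAt (α : ℝ) (hα : 0 ≤ α) {t : ℝ} (ht : 0 < t) :
    HasDerivAt (fun x => Real.log (besselI α x)) (α/t + rQ α t) t := by
  have hI := besselI_hasDerivAt α hα ht
  have hIpos := besselI_pos α hα ht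
  have h := hI.log hIpos.ne'
  have heq : α/t + rQ α t = (α / t * besselI α t + besselI (α+1) t) / besselI α t := by
    unfold rQ
    field_simp
  rw [heq]
  exact h


lemma const_div_hasDerivAt (c : ℝ) {x : ℝ} (hx : x ≠ 0) :
    HasDerivAt (fun t : ℝ => c / t) (-(c / x^2)) x := by
  have h := (hasDerivAt_inv hx).const_mul c
  have heq : (fun t : ℝ => c / t) = fun t : ℝ => c * t⁻¹ := by
    funext t; rw [div_eq_mul_inv]
  rw [heq]
  refine (h).congr_deriv (Eq.symm ?_)
  field_simp

lemma abs_sub_le_of_derivBound {f f' : ℝ → ℝ} {y z c : ℝ}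
    (hy : 0 < y) (hyz : y ≤ z)
    (hf : ∀ t ∈ Icc y z, HasDerivAt f (f' t) t)
    (hb : ∀ t ∈ Icc y z, |f' t| ≤ c / t^2) :
    |f z - f y| ≤ c * (1/y - 1/z) := by
  have hz : 0 < z := lt_of_lt_of_le hy hyz
  have hc : 0 ≤ c := by
    have h1 := (abs_nonneg (f' y)).trans (hb y (left_mem_Icc.2 hyz))
    have h3 := mul_nonneg h1 (by positivity : (0:ℝ) ≤ y^2)
    rwa [div_mul_cancel₀ _ (by positivity : (y:ℝ)^2 ≠ 0)] at h3
  have hder_gp : ∀ t ∈ Icc y z, HasDerivAt (fun t => f t + c / t) (f' t - c/t^2) t := by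
    intro t htm
    have ht0 : 0 < t := lt_of_lt_of_le hy htm.1
    have h := (hf t htm).add (const_div_hasDerivAt c ht0.ne')
    refine (h).congr_deriv (Eq.symm ?_) <;> ring
  have hder_gm : ∀ t ∈ Icc y z, HasDerivAt (fun t => f t - c / t) (f' t + c/t^2) t := by
    intro t htm
    have ht0 : 0 < t := lt_of_lt_of_le hy htm.1
    have h := (hf t htm).sub (const_div_hasDerivAt c ht0.ne')
    refine (h).congr_deriv (Eq.symm ?_) <;> ring
  have hanti : AntitoneOn (fun t => f t + c / t) (Icc y z) := by
    apply antitoneOn_of_deriv_nonpos (convex_Icc y z)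
    · exact fun t htm => (hder_gp t htm).continuousAt.continuousWithinAt
    · intro t htm
      rw [interior_Icc] at htm
      exact ((hder_gp t (Ioo_subset_Icc_self htm)).differentiableAt).differentiableWithinAt
    · intro t htm
      rw [interior_Icc] at htm
      rw [(hder_gp t (Ioo_subset_Icc_self htm)).deriv]
      have hB := abs_le.1 (hb t (Ioo_subset_Icc_self htm))
      linarith [hB.2]
  have hmono : MonotoneOn (fun t => f t - c / t) (Icc y z) := by
    apply monotoneOn_of_deriv_nonneg (convex_Icc y z)
    · exact fun t htm => (hder_gm t htm).continuousAt.continuousWithinAt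
    · intro t htm
      rw [interior_Icc] at htm
      exact ((hder_gm t (Ioo_subset_Icc_self htm)).differentiableAt).differentiableWithinAt
    · intro t htm
      rw [interior_Icc] at htm
      rw [(hder_gm t (Ioo_subset_Icc_self htm)).deriv]
      have hB := abs_le.1 (hb t (Ioo_subset_Icc_self htm))
      linarith [hB.1]
  have h1 : f z + c/z ≤ f y + c/y :=
    hanti (left_mem_Icc.2 hyz) (right_mem_Icc.2 hyz) hyz
  have h2 : f y - c/y ≤ f z - c/z :=
    hmono (left_mem_Icc.2 hyz) (right_mem_Icc.2 hyz) hyz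
  have e : c*(1/y - 1/z) = c/y - c/z := by ring
  rw [abs_le]
  constructor <;> [linarith; linarith]

lemma sub_le_mul_of_deriv_le {f f' : ℝ → ℝ} {y z B : ℝ} (hyz : y ≤ z)
    (hf : ∀ t ∈ Icc y z, HasDerivAt f (f' t) t)
    (hhi : ∀ t ∈ Icc y z, f' t ≤ B) : f z - f y ≤ B*(z - y) := by
  have hder : ∀ t ∈ Icc y z, HasDerivAt (fun t => f t - B * t) (f' t - B) t := by
    intro t htm
    have h := (hf t htm).sub ((hasDerivAt_id t).const_mul B)
    refine (h).congr_deriv (Eq.symm ?_) <;> ring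
  have hanti : AntitoneOn (fun t => f t - B * t) (Icc y z) := by
    apply antitoneOn_of_deriv_nonpos (convex_Icc y z)
    · exact fun t htm => (hder t htm).continuousAt.continuousWithinAt
    · intro t htm
      rw [interior_Icc] at htm
      exact ((hder t (Ioo_subset_Icc_self htm)).differentiableAt).differentiableWithinAt
    · intro t htm
      rw [interior_Icc] at htm
      rw [(hder t (Ioo_subset_Icc_self htm)).deriv]
      linarith [hhi t (Ioo_subset_Icc_self htm)]
  have := hanti (left_mem_Icc.2 hyz) (right_mem_Icc.2 hyz) hyz
  simp only at this
  linarith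

lemma mul_le_sub_of_le_deriv {f f' : ℝ → ℝ} {y z A : ℝ} (hyz : y ≤ z)
    (hf : ∀ t ∈ Icc y z, HasDerivAt f (f' t) t)
    (hlo : ∀ t ∈ Icc y z, A ≤ f' t) : A*(z - y) ≤ f z - f y := by
  have hder : ∀ t ∈ Icc y z, HasDerivAt (fun t => f t - A * t) (f' t - A) t := by
    intro t htm
    have h := (hf t htm).sub ((hasDerivAt_id t).const_mul A)
    refine (h).congr_deriv (Eq.symm ?_) <;> ring
  have hmono : MonotoneOn (fun t => f t - A * t) (Icc y z) := by
    apply monotoneOn_of_deriv_nonneg (convex_Icc y z)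
    · exact fun t htm => (hder t htm).continuousAt.continuousWithinAt
    · intro t htm
      rw [interior_Icc] at htm
      exact ((hder t (Ioo_subset_Icc_self htm)).differentiableAt).differentiableWithinAt
    · intro t htm
      rw [interior_Icc] at htm
      rw [(hder t (Ioo_subset_Icc_self htm)).deriv]
      linarith [hlo t (Ioo_subset_Icc_self htm)]
  have := hmono (left_mem_Icc.2 hyz) (right_mem_Icc.2 hyz) hyz
  simp only at this
  linarith

lemma abs_one_sub_exp_le {u K : ℝ} (h : |u| ≤ K) : |1 - Real.exp u| ≤ |u| * Real.exp K := by
  have hK : 0 ≤ K := le_trans (abs_nonneg u) h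
  have hu := abs_le.1 h
  rcases le_or_gt 0 u with hu0 | hu0
  · have h1 : (1:ℝ) ≤ Real.exp u := Real.one_le_exp hu0
    rw [abs_of_nonpos (by linarith), abs_of_nonneg hu0]
    have h2 := mul_le_mul_of_nonneg_right (Real.add_one_le_exp (-u)) (Real.exp_pos u).le
    rw [← Real.exp_add] at h2
    simp only [neg_add_cancel, Real.exp_zero] at h2
    have h3 : Real.exp u - 1 ≤ u * Real.exp u := by nlinarith
    have h4 : Real.exp u ≤ Real.exp K := Real.exp_le_exp.2 hu.2
    nlinarith
  · have h1 : Real.exp u < 1 := by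
      rw [← Real.exp_zero]
      exact Real.exp_lt_exp.2 hu0
    rw [abs_of_nonneg (by linarith), abs_of_neg hu0]
    have h2 : u + 1 ≤ Real.exp u := Real.add_one_le_exp u
    have h3 : (1:ℝ) ≤ Real.exp K := Real.one_le_exp hK
    nlinarith

/-- the remainder in exponential form -/
lemma remainder_exp (α : ℝ) (hα : 0 ≤ α) {y w : ℝ} (hy : 0 < y) (hw : 0 ≤ w) :
    Real.sqrt (1+w) * Real.exp (-(y*w)) * besselI α (y*(1+w)) / besselI α y
      = Real.exp ((1/2)*Real.log (1+w) - y*w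
          + (Real.log (besselI α (y*(1+w))) - Real.log (besselI α y))) := by
  have hs : (0:ℝ) < 1+w := by linarith
  have hz : 0 < y*(1+w) := by positivity
  have hI0 := besselI_pos α hα hy
  have hIz := besselI_pos α hα hz
  rw [show (1/2)*Real.log (1+w) - y*w
        + (Real.log (besselI α (y*(1+w))) - Real.log (besselI α y))
      = ((1/2)*Real.log (1+w) + (-(y*w)))
        + (Real.log (besselI α (y*(1+w))) - Real.log (besselI α y)) by ring]
  rw [Real.exp_add, Real.exp_add, Real.exp_sub, Real.exp_log hIz, Real.exp_log hI0]
  rw [show Real.sqrt (1+w) = Real.exp ((1/2)*Real.log (1+w)) by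
    rw [Real.sqrt_eq_rpow, Real.rpow_def_of_pos hs]
    ring_nf]
  ring

/-- the `G`-bound in the regime `y ≥ 1`. -/
lemma G_bound_far (α : ℝ) (hα : 0 ≤ α) {y w : ℝ} (hy1 : 1 ≤ y) (hw : 0 ≤ w) :
    |(1/2)*Real.log (1+w) - y*w
      + (Real.log (besselI α (y*(1+w))) - Real.log (besselI α y))|
      ≤ (2*(α+1/2+1)^2) * min w 1 / y := by
  have hy : (0:ℝ) < y := lt_of_lt_of_le one_pos hy1
  have hs : (0:ℝ) < 1+w := by linarith
  have hz : 0 < y*(1+w) := by positivity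
  have hyz : y ≤ y*(1+w) := by nlinarith
  set c : ℝ := 2*(α+1/2+1)^2 with hc
  have hcpos : 0 < c := by positivity
  -- the auxiliary function ψ
  have hf : ∀ t ∈ Icc y (y*(1+w)),
      HasDerivAt (fun t => Real.log (besselI α t) - t + (1/2)*Real.log t)
        (rQ α t - 1 + (α+1/2)/t) t := by
    intro t htm
    have ht0 : 0 < t := lt_of_lt_of_le hy htm.1
    have h := ((log_besselI_hasDerivAt α hα ht0).sub (hasDerivAt_id t)).add
      ((Real.hasDerivAt_log ht0.ne').const_mul (1/2))
    refine (h).congr_deriv (Eq.symm ?_)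
    field_simp
    ring
  have hb : ∀ t ∈ Icc y (y*(1+w)), |rQ α t - 1 + (α+1/2)/t| ≤ c / t^2 := by
    intro t htm
    have ht0 : 0 < t := lt_of_lt_of_le hy htm.1
    exact rQ_psi_bound α hα ht0
  have hABS := abs_sub_le_of_derivBound hy hyz hf hb
  have hG : (1/2)*Real.log (1+w) - y*w
      + (Real.log (besselI α (y*(1+w))) - Real.log (besselI α y))
      = (Real.log (besselI α (y*(1+w))) - (y*(1+w)) + (1/2)*Real.log (y*(1+w)))
        - (Real.log (besselI α y) - y + (1/2)*Real.log y) := by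
    rw [Real.log_mul hy.ne' hs.ne']
    ring
  rw [hG]
  calc _ ≤ c * (1/y - 1/(y*(1+w))) := hABS
    _ = c * w/(y*(1+w)) := by
        rw [show 1/y - 1/(y*(1+w)) = w/(y*(1+w)) by
          rw [div_sub_div _ _ hy.ne' hz.ne', div_eq_div_iff (by positivity) hz.ne']
          ring]
        ring
    _ ≤ c * min w 1 / y := by
        rw [div_le_div_iff₀ (by positivity) hy]
        rcases le_total w 1 with h | h
        · rw [min_eq_left h]
          nlinarith [mul_nonneg (mul_nonneg (mul_nonneg hcpos.le hw) hy.le) hw]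
        · rw [min_eq_right h]
          nlinarith [mul_pos hcpos hy, mul_nonneg (mul_pos hcpos hy).le hw]

/-- the `G`-bound in the regime `y ≤ 1`, `w ≤ 1`. -/
lemma G_bound_near (α : ℝ) (hα : 0 ≤ α) {y w : ℝ} (hy : 0 < y) (hy1 : y ≤ 1)
    (hw : 0 ≤ w) (hw1 : w ≤ 1) :
    |(1/2)*Real.log (1+w) - y*w
      + (Real.log (besselI α (y*(1+w))) - Real.log (besselI α y))|
      ≤ (α+1)*w := by
  have hs : (0:ℝ) < 1+w := by linarith
  have hz : 0 < y*(1+w) := by positivity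
  have hyz : y ≤ y*(1+w) := by nlinarith
  have hf : ∀ t ∈ Icc y (y*(1+w)),
      HasDerivAt (fun t => Real.log (besselI α t) - α * Real.log t) (rQ α t) t := by
    intro t htm
    have ht0 : 0 < t := lt_of_lt_of_le hy htm.1
    have h := (log_besselI_hasDerivAt α hα ht0).sub
      ((Real.hasDerivAt_log ht0.ne').const_mul α)
    refine (h).congr_deriv (Eq.symm ?_)
    field_simp
    ring
  have hup := sub_le_mul_of_deriv_le hyz hf
    (fun t htm => rQ_le_one α hα (lt_of_lt_of_le hy htm.1))
  have hlo := mul_le_sub_of_le_deriv hyz hf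
    (fun t htm => (rQ_pos α hα (lt_of_lt_of_le hy htm.1)).le)
  have hlogz : Real.log (y*(1+w)) = Real.log y + Real.log (1+w) :=
    Real.log_mul hy.ne' hs.ne'
  rw [hlogz] at hup hlo
  have hls0 : 0 ≤ Real.log (1+w) := Real.log_nonneg (by linarith)
  have hlsw : Real.log (1+w) ≤ w := by
    have := Real.log_le_sub_one_of_pos hs
    linarith
  have hαls : 0 ≤ α * Real.log (1+w) := mul_nonneg hα hls0
  have hαlsw : α * Real.log (1+w) ≤ α * w := mul_le_mul_of_nonneg_left hlsw hα
  have hyw : y*w ≤ w := by nlinarith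
  have hyw0 : 0 ≤ y*w := by positivity
  rw [abs_le]
  constructor <;> nlinarith [hup, hlo]


end BesselAux


open BesselAux in
/-- Bounds on the remainder `R(b,x,w)`, uniform over `b` in a compact
subset of `(0,∞)`: if `bx ≥ 1` then `|R(b,x,w)| ≤ C min(w,1)/(bx)` for all `w ≥ 0`,
and in general `|R(b,x,w)| ≤ C w` for `w ∈ [0,1]`. -/
theorem besselRemainder_bound (α b₀ b₁ : ℝ) (hα : 0 ≤ α) (hb₀ : 0 < b₀)
    (hb : b₀ ≤ b₁) :
    ∃ C : ℝ, 0 ≤ C ∧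
      ∀ b ∈ Icc b₀ b₁, ∀ x : ℝ, 0 < x →
        ((1 ≤ b * x → ∀ w : ℝ, 0 ≤ w →
            |besselRemainder α b x w| ≤ C * min w 1 / (b * x)) ∧
         (∀ w ∈ Icc (0 : ℝ) 1, |besselRemainder α b x w| ≤ C * w)) := by
  have hc0 : (0:ℝ) < 2*(α+1/2+1)^2 := by positivity
  have hK0 : (0:ℝ) < 2*(α+1/2+1)^2 + α + 2 := by positivity
  refine ⟨(2*(α+1/2+1)^2 + α + 2) * Real.exp (2*(α+1/2+1)^2 + α + 2), by positivity, ?_⟩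
  intro b hbmem x hx
  have hy : 0 < b*x := mul_pos (lt_of_lt_of_le hb₀ hbmem.1) hx
  have hident : ∀ w : ℝ, 0 ≤ w → besselRemainder α b x w =
      1 - Real.exp ((1/2)*Real.log (1+w) - (b*x)*w
        + (Real.log (besselI α (b*x*(1+w))) - Real.log (besselI α (b*x)))) := by
    intro w hw
    unfold besselRemainder
    rw [show b*w*x = b*x*w by ring, remainder_exp α hα hy hw]
  have hkey : 1 ≤ b*x → ∀ w : ℝ, 0 ≤ w → |besselRemainder α b x w| ≤
      (2*(α+1/2+1)^2 + α + 2) * Real.exp (2*(α+1/2+1)^2 + α + 2) * min w 1 / (b*x) := by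
    intro h1 w hw
    have hmin0 : (0:ℝ) ≤ min w 1 := le_min hw (by norm_num)
    have hmin1 : min w 1 ≤ 1 := min_le_right w 1
    have hG := G_bound_far α hα h1 hw
    have hGK : |(1/2)*Real.log (1+w) - (b*x)*w
        + (Real.log (besselI α (b*x*(1+w))) - Real.log (besselI α (b*x)))|
        ≤ 2*(α+1/2+1)^2 + α + 2 := by
      have h2 : 2*(α+1/2+1)^2 * min w 1 / (b*x) ≤ 2*(α+1/2+1)^2 := by
        rw [div_le_iff₀ hy]
        nlinarith
      linarith [hG]
    have habs := abs_one_sub_exp_le hGK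
    rw [hident w hw]
    calc |1 - Real.exp _| ≤ _ := habs
      _ ≤ (2*(α+1/2+1)^2 * min w 1 / (b*x)) * Real.exp (2*(α+1/2+1)^2 + α + 2) :=
          mul_le_mul_of_nonneg_right hG (Real.exp_pos _).le
      _ ≤ (2*(α+1/2+1)^2 + α + 2) * Real.exp (2*(α+1/2+1)^2 + α + 2) * min w 1 / (b*x) := by
          rw [show 2*(α+1/2+1)^2 * min w 1 / (b*x) * Real.exp (2*(α+1/2+1)^2 + α + 2)
              = (2*(α+1/2+1)^2 * Real.exp (2*(α+1/2+1)^2 + α + 2)) * (min w 1 / (b*x)) by ring,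
            show (2*(α+1/2+1)^2 + α + 2) * Real.exp (2*(α+1/2+1)^2 + α + 2) * min w 1 / (b*x)
              = ((2*(α+1/2+1)^2 + α + 2) * Real.exp (2*(α+1/2+1)^2 + α + 2)) * (min w 1 / (b*x)) by ring]
          apply mul_le_mul_of_nonneg_right _ (by positivity)
          apply mul_le_mul_of_nonneg_right _ (Real.exp_pos _).le
          linarith
  refine ⟨hkey, ?_⟩
  intro w hwmem
  obtain ⟨hw0, hw1⟩ := hwmem
  rcases le_total 1 (b*x) with h1 | h1
  · have h := hkey h1 w hw0
    rw [min_eq_left hw1] at h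
    calc |besselRemainder α b x w| ≤ _ := h
      _ ≤ (2*(α+1/2+1)^2 + α + 2) * Real.exp (2*(α+1/2+1)^2 + α + 2) * w := by
          apply div_le_self (by positivity) h1
  · have hG := G_bound_near α hα hy h1 hw0 hw1
    have hGK : |(1/2)*Real.log (1+w) - (b*x)*w
        + (Real.log (besselI α (b*x*(1+w))) - Real.log (besselI α (b*x)))|
        ≤ 2*(α+1/2+1)^2 + α + 2 := by
      have : (α+1)*w ≤ 2*(α+1/2+1)^2 + α + 2 := by nlinarith
      linarith [hG]
    have habs := abs_one_sub_exp_le hGK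
    rw [hident w hw0]
    calc |1 - Real.exp _| ≤ _ := habs
      _ ≤ ((α+1)*w) * Real.exp (2*(α+1/2+1)^2 + α + 2) :=
          mul_le_mul_of_nonneg_right hG (Real.exp_pos _).le
      _ ≤ (2*(α+1/2+1)^2 + α + 2) * Real.exp (2*(α+1/2+1)^2 + α + 2) * w := by
          rw [show ((α+1)*w) * Real.exp (2*(α+1/2+1)^2 + α + 2)
              = ((α+1) * Real.exp (2*(α+1/2+1)^2 + α + 2)) * w by ring,
            show (2*(α+1/2+1)^2 + α + 2) * Real.exp (2*(α+1/2+1)^2 + α + 2) * w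
              = ((2*(α+1/2+1)^2 + α + 2) * Real.exp (2*(α+1/2+1)^2 + α + 2)) * w by ring]
          apply mul_le_mul_of_nonneg_right _ hw0
          apply mul_le_mul_of_nonneg_right _ (Real.exp_pos _).le
          linarith
end
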